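/- arXiv:1002.4435 — 13 statements merged into one kernel-verified Lean document; each statement's English description precedes it below -/
import Mathlib

section
/- Let k be a positive integer, let K be an algebraically closed field whose characteristic does not divide k (equivalently, k·1 ≠ 0 in K), and let G be a simple undirected graph on vertex set {1,…,n}. Then there exists a point x = (x_1,…,x_n) ∈ K^n satisfying x_i^k − 1 = 0 for every vertex i and x_i^{k-1} + x_i^{k-2}x_j + ⋯ + x_i x_j^{k-2} + x_j^{k-1} = 0 (i.e. ∑_{t=0}^{k-1} x_i^t x_j^{k-1-t} = 0) for every edge {i,j} of G, if and only if G is k-colorable (there is a proper coloring of the vertices of G with k colors). -/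
theorem stmt_0 (n k : ℕ) (hk : 0 < k) (K : Type*) [Field K] [IsAlgClosed K]
    (hchar : (k : K) ≠ 0) (G : SimpleGraph (Fin n)) :
    (∃ x : Fin n → K,
      (∀ i, x i ^ k - 1 = 0) ∧
      (∀ i j, G.Adj i j → ∑ t ∈ Finset.range k, x i ^ t * x j ^ (k - 1 - t) = 0)) ↔
    G.Colorable k := by
  constructor
  · rintro ⟨x, hroot, hedge⟩
    classical
    have hpow : ∀ i, x i ^ k = 1 := fun i => sub_eq_zero.mp (hroot i)
    set S : Finset K := (Polynomial.nthRoots k (1 : K)).toFinset with hS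
    have hmem : ∀ i, x i ∈ S := fun i => by
      simp [hS, Polynomial.mem_nthRoots hk, hpow i]
    have hne : ∀ i j, G.Adj i j → x i ≠ x j := by
      intro i j hij heq
      have hsum := hedge i j hij
      rw [heq, geom_sum₂_self] at hsum
      have hxj : x j ≠ 0 := by
        intro h0
        have := hpow j
        rw [h0, zero_pow hk.ne'] at this
        exact zero_ne_one this
      exact (mul_ne_zero hchar (pow_ne_zero _ hxj)) hsum
    have C : G.Coloring S :=
      SimpleGraph.Coloring.mk (fun i => ⟨x i, hmem i⟩)
        (fun {i j} hij h => hne i j hij (by simpa using congrArg Subtype.val h))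
    have hcard : Fintype.card S ≤ k := by
      rw [Fintype.card_coe]
      exact le_trans (Multiset.toFinset_card_le _) (by simpa using Polynomial.card_nthRoots k (1 : K))
    exact (C.colorable).mono hcard
  · rintro ⟨c⟩
    haveI : NeZero (k : K) := ⟨hchar⟩
    obtain ⟨ζ, hζ⟩ := HasEnoughRootsOfUnity.exists_primitiveRoot K k
    refine ⟨fun i => ζ ^ (c i : ℕ), fun i => ?_, fun i j hij => ?_⟩
    · rw [← pow_mul, mul_comm, pow_mul, hζ.pow_eq_one, one_pow, sub_self]
    · have hne : ζ ^ (c i : ℕ) ≠ ζ ^ (c j : ℕ) := by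
        intro h
        exact c.valid hij (Fin.ext (hζ.pow_inj (c i).isLt (c j).isLt h))
      have hmul := geom_sum₂_mul (ζ ^ (c i : ℕ)) (ζ ^ (c j : ℕ)) k
      have h1 : (ζ ^ (c i : ℕ)) ^ k = 1 := by
        rw [← pow_mul, mul_comm, pow_mul, hζ.pow_eq_one, one_pow]
      have h2 : (ζ ^ (c j : ℕ)) ^ k = 1 := by
        rw [← pow_mul, mul_comm, pow_mul, hζ.pow_eq_one, one_pow]
      rw [h1, h2, sub_self] at hmul
      exact (mul_eq_zero.mp hmul).resolve_right (sub_ne_zero_of_ne hne)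
end

section
/- Let G = (V,A) be a simple directed graph on vertices V = {1,…,n}, let K be an algebraically closed field whose characteristic does not divide n, and let ω ∈ K be a primitive n-th root of unity. Then the polynomial system consisting of x_i^n − 1 = 0 for every i ∈ V, together with ∏_{j ∈ δ⁺(i)} (ω x_i − x_j) = 0 for every i ∈ V (where δ⁺(i) is the set of out-neighbors of i, and an empty product equals 1), has a solution in K^n if and only if G has a Hamiltonian cycle, i.e., there exists a permutation σ of V that is a single n-cycle and satisfies (i, σ(i)) ∈ A for every i ∈ V. -/
theorem stmt_1 (n : ℕ) (A : Fin n → Fin n → Prop) [DecidableRel A]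
    (hirr : ∀ i, ¬ A i i)
    (K : Type*) [Field K] [IsAlgClosed K] (hchar : (n : K) ≠ 0)
    (ω : K) (hω : IsPrimitiveRoot ω n) :
    (∃ x : Fin n → K,
      (∀ i, x i ^ n - 1 = 0) ∧
      (∀ i, ∏ j ∈ Finset.univ.filter (fun j => A i j), (ω * x i - x j) = 0)) ↔
    (∃ σ : Equiv.Perm (Fin n), σ.IsCycle ∧ σ.support = Finset.univ ∧ ∀ i, A i (σ i)) := by
  have hn : n ≠ 0 := by rintro rfl; simp at hchar
  have hnpos : 0 < n := Nat.pos_of_ne_zero hn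
  have hωn : ω ^ n = 1 := hω.pow_eq_one
  have hωne : ω ≠ 0 := by
    intro h
    rw [h, zero_pow hn] at hωn
    exact zero_ne_one hωn
  constructor
  · rintro ⟨x, hx1, hx2⟩
    have hxne : ∀ i, x i ≠ 0 := by
      intro i h
      have h1 := hx1 i
      rw [h, zero_pow hn] at h1
      simp at h1
    have hstep : ∀ i, ∃ j, A i j ∧ x j = ω * x i := by
      intro i
      rcases Finset.prod_eq_zero_iff.mp (hx2 i) with ⟨j, hj, hj0⟩
      rw [Finset.mem_filter] at hj
      exact ⟨j, hj.2, (sub_eq_zero.mp hj0).symm⟩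
    choose f hfA hfx using hstep
    have hne : ∀ i, f i ≠ i := fun i h => hirr i (by have := hfA i; rwa [h] at this)
    have hiter : ∀ (k : ℕ) (i : Fin n), x (f^[k] i) = ω ^ k * x i := by
      intro k
      induction k with
      | zero => simp
      | succ k ih =>
        intro i
        rw [Function.iterate_succ_apply', hfx, ih, pow_succ]
        ring
    have hdvd : ∀ s t : ℕ, s ≤ t → ω ^ s = ω ^ t → n ∣ t - s := by
      intro s t hst h
      have h1 : ω ^ s * ω ^ (t - s) = ω ^ s * 1 := by
        rw [mul_one, ← pow_add, Nat.add_sub_cancel' hst, h]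
      have h2 : ω ^ (t - s) = 1 := mul_left_cancel₀ (pow_ne_zero s hωne) h1
      exact (hω.pow_eq_one_iff_dvd _).mp h2
    set i0 : Fin n := ⟨0, hnpos⟩ with hi0
    obtain ⟨s, t, hst, htn, hseq⟩ :
        ∃ s t : ℕ, s < t ∧ t ≤ n ∧ f^[s] i0 = f^[t] i0 := by
      obtain ⟨a, b, hab, h⟩ := Fintype.exists_ne_map_eq_of_card_lt
        (fun k : Fin (n + 1) => f^[k.val] i0) (by simp)
      rcases hab.lt_or_gt with h' | h'
      · exact ⟨a.val, b.val, h', Nat.lt_succ_iff.mp b.isLt, h⟩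
      · exact ⟨b.val, a.val, h', Nat.lt_succ_iff.mp a.isLt, h.symm⟩
    set v : Fin n := f^[s] i0 with hv
    have hpv : f^[t - s] v = v := by
      rw [hv, ← Function.iterate_add_apply, Nat.sub_add_cancel hst.le, ← hseq]
    have hωp : ω ^ (t - s) = 1 := by
      have h1 : x v = ω ^ (t - s) * x v := by
        conv_lhs => rw [← hpv]
        exact hiter _ v
      exact mul_right_cancel₀ (hxne v) (by rw [one_mul, ← h1])
    have hpn : t - s = n := by
      have h3 : n ∣ t - s := (hω.pow_eq_one_iff_dvd _).mp hωp
      have : 0 < t - s := by omega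
      exact Nat.le_antisymm (by omega) (Nat.le_of_dvd this h3)
    have hvn : f^[n] v = v := hpn ▸ hpv
    have gorb : ∀ a b : ℕ, a ≤ b → b < n → f^[a] v = f^[b] v → a = b := by
      intro a b hab hbn h
      have h1 : ω ^ a * x v = ω ^ b * x v := by
        rw [← hiter, ← hiter, h]
      have h2 : ω ^ a = ω ^ b := mul_right_cancel₀ (hxne v) h1
      have h3 := hdvd a b hab h2
      have := Nat.eq_zero_of_dvd_of_lt h3
      omega
    have ginj : Function.Injective (fun k : Fin n => f^[k.val] v) := by
      intro a b h
      simp only at h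
      rcases le_total a.val b.val with h' | h'
      · exact Fin.ext (gorb _ _ h' b.isLt h)
      · exact (Fin.ext (gorb _ _ h' a.isLt h.symm)).symm
    have gsurj : Function.Surjective (fun k : Fin n => f^[k.val] v) :=
      Finite.surjective_of_injective ginj
    have fsurj : Function.Surjective f := by
      intro w
      obtain ⟨k, hk⟩ := gsurj w
      refine ⟨f^[k.val + n - 1] v, ?_⟩
      have h1 : f^[k.val + n] v = w := by
        rw [Function.iterate_add_apply, hvn]; exact hk
      calc f (f^[k.val + n - 1] v) = f^[k.val + n - 1 + 1] v :=
            (Function.iterate_succ_apply' f _ v).symm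
        _ = w := by rw [show k.val + n - 1 + 1 = k.val + n by omega]; exact h1
    have fbij : Function.Bijective f :=
      ⟨Finite.injective_iff_surjective.mpr fsurj, fsurj⟩
    set σ : Equiv.Perm (Fin n) := Equiv.ofBijective f fbij with hσdef
    have hσ : ∀ z, σ z = f z := fun z => rfl
    have hσpow : ∀ (k : ℕ) (z : Fin n), (σ ^ k) z = f^[k] z := by
      intro k
      induction k with
      | zero => simp
      | succ k ih =>
        intro z
        rw [pow_succ, Equiv.Perm.mul_apply, hσ, Function.iterate_succ_apply, ih]
    refine ⟨σ, ⟨v, ?_, ?_⟩, ?_, fun i => hfA i⟩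
    · rw [hσ]; exact hne v
    · intro y _
      obtain ⟨k, hk⟩ := gsurj y
      exact ⟨(k.val : ℤ), by rw [zpow_natCast, hσpow]; exact hk⟩
    · refine Finset.eq_univ_iff_forall.mpr fun i => Equiv.Perm.mem_support.mpr ?_
      rw [hσ]; exact hne i
  · rintro ⟨σ, hc, hs, hA⟩
    have hne : ∀ i, σ i ≠ i := fun i =>
      Equiv.Perm.mem_support.mp (hs ▸ Finset.mem_univ i)
    have horder : orderOf σ = n := by
      rw [hc.orderOf, hs, Finset.card_univ, Fintype.card_fin]
    set b : Fin n := ⟨0, hnpos⟩ with hb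
    choose k hk using fun i => hc.exists_pow_eq (hne b) (hne i)
    have key : ∀ s t : ℕ, (σ ^ s) b = (σ ^ t) b → ω ^ s = ω ^ t := by
      suffices h : ∀ s t : ℕ, s ≤ t → (σ ^ s) b = (σ ^ t) b → ω ^ s = ω ^ t by
        intro s t hst
        rcases le_total s t with h' | h'
        · exact h s t h' hst
        · exact (h t s h' hst.symm).symm
      intro s t hst h
      have h1 : (σ ^ (t - s)) ((σ ^ t) b) = (σ ^ t) b := by
        conv_lhs => rw [← h]
        rw [← Equiv.Perm.mul_apply, ← pow_add, Nat.sub_add_cancel hst]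
      have h2 : σ ^ (t - s) = 1 := by
        rcases Nat.eq_zero_or_pos (t - s) with h0 | h0
        · rw [h0, pow_zero]
        · exact (hc.pow_eq_one_iff).mpr ⟨(σ ^ t) b, hne _, h1⟩
      have h3 : n ∣ t - s := horder ▸ orderOf_dvd_of_pow_eq_one h2
      have h4 : ω ^ (t - s) = 1 := (hω.pow_eq_one_iff_dvd _).mpr h3
      have : ω ^ t = ω ^ s := by
        calc ω ^ t = ω ^ (s + (t - s)) := by rw [Nat.add_sub_cancel' hst]
          _ = ω ^ s * ω ^ (t - s) := pow_add ω s (t - s)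
          _ = ω ^ s := by rw [h4, mul_one]
      exact this.symm
    refine ⟨fun i => ω ^ k i, fun i => ?_, fun i => ?_⟩
    · rw [← pow_mul, mul_comm, pow_mul, hωn, one_pow, sub_self]
    · apply Finset.prod_eq_zero (i := σ i)
      · simp [hA i]
      · have h1 : (σ ^ (k i + 1)) b = (σ ^ (k (σ i))) b := by
          rw [pow_succ', Equiv.Perm.mul_apply, hk i]
          exact (hk (σ i)).symm
        have h2 := key _ _ h1
        have h3 : ω * ω ^ k i = ω ^ (k i + 1) := (pow_succ' ω _).symm
        rw [h3, h2, sub_self]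
end

section
/- If a simple undirected graph G = (V,E) contains an odd wheel as a subgraph (a cycle of odd length at least 3 together with a hub vertex adjacent to every vertex of the cycle), then the polynomial system over 𝔽₂, J_G = {x_i³+1 = 0 (i ∈ V), x_i² + x_i x_j + x_j² = 0 ({i,j} ∈ E)}, has a degree one Nullstellensatz certificate of infeasibility: there exist a_i, a_{ij}, b_{ij}, b_{ijk} ∈ 𝔽₂ with ∑_{i∈V}(a_i + ∑_{j∈V} a_{ij}x_j)(x_i³+1) + ∑_{{i,j}∈E}(b_{ij} + ∑_{k∈V} b_{ijk}x_k)(x_i²+x_ix_j+x_j²) = 1 in 𝔽₂[x_1,…,x_n]. -/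
open MvPolynomial

private lemma ordpair {n : ℕ} {G : SimpleGraph (Fin n)} {p q : Fin n} (hpq : p ≠ q)
    (h : G.Adj p q) : min p q < max p q ∧ G.Adj (min p q) (max p q) := by
  rcases lt_or_gt_of_ne hpq with hlt | hlt
  · rw [min_eq_left hlt.le, max_eq_right hlt.le]; exact ⟨hlt, h⟩
  · rw [min_eq_right hlt.le, max_eq_left hlt.le]; exact ⟨hlt, h.symm⟩

private lemma esym {n : ℕ} (p q : Fin n) :
    (X (min p q))^2 + X (min p q) * X (max p q) + (X (max p q))^2
      = (X p^2 + X p * X q + X q^2 : MvPolynomial (Fin n) (ZMod 2)) := by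
  rcases le_total p q with hle | hle
  · rw [min_eq_left hle, max_eq_right hle]
  · rw [min_eq_right hle, max_eq_left hle]; ring

private lemma cyc {N : ℕ} [NeZero N] {R : Type*} [CommRing R]
    (h2 : (2:R) = 0) (hN : (N:R) = 1) (h : R) (y : Fin N → R) :
    (∑ t, (y t ^ 3 + 1)) +
      ∑ t, ((y (t-1) + y (t+1)) * (h^2 + h * y t + y t^2)
        + y t * (y t^2 + y t * y (t+1) + y (t+1)^2)) = 1 := by
  have two : ∀ s : R, s + s = 0 := fun s => by rw [← two_mul, h2, zero_mul]
  have reindex : ∀ f : Fin N → R, (∑ t, f t) = ∑ t, f (t+1) :=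
    fun f => (Fintype.sum_equiv (Equiv.addRight 1) (fun t => f (t+1)) f (fun t => rfl)).symm
  have r0 : ∀ g : Fin N → R, (∑ t, g (t-1)) = ∑ t, g (t+1) := by
    intro g
    calc (∑ t, g (t-1)) = ∑ t, g (t+1-1) := reindex (fun t => g (t-1))
    _ = ∑ t, g t := Finset.sum_congr rfl fun t _ => by rw [add_sub_cancel_right]
    _ = ∑ t, g (t+1) := reindex g
  have r1 : (∑ t, h^2 * y (t-1)) = ∑ t, h^2 * y (t+1) := r0 (fun s => h^2 * y s)
  have r2 : (∑ t, h * (y t * y (t-1))) = ∑ t, h * (y t * y (t+1)) :=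
    (reindex fun t => h * (y t * y (t-1))).trans
      (Finset.sum_congr rfl fun t _ => by rw [add_sub_cancel_right]; ring)
  have r3 : (∑ t, y t^2 * y (t-1)) = ∑ t, y t * y (t+1)^2 :=
    (reindex fun t => y t^2 * y (t-1)).trans
      (Finset.sum_congr rfl fun t _ => by rw [add_sub_cancel_right]; ring)
  calc (∑ t, (y t ^ 3 + 1)) +
      ∑ t, ((y (t-1) + y (t+1)) * (h^2 + h * y t + y t^2)
        + y t * (y t^2 + y t * y (t+1) + y (t+1)^2))
      = ∑ t : Fin N, ((1:R) + ((h^2*y (t-1) + h^2*y (t+1))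
          + ((h*(y t*y (t-1)) + h*(y t*y (t+1)))
          + (y t^2*y (t-1) + y t*y (t+1)^2)))) := by
        rw [← Finset.sum_add_distrib]
        exact Finset.sum_congr rfl fun t _ => by
          linear_combination (y t^3 + y t^2*y (t+1)) * h2
    _ = 1 := by
        simp only [Finset.sum_add_distrib]
        rw [r1, r2, r3, two, two, two, add_zero, add_zero, add_zero]
        simp [Finset.card_univ, hN]

theorem stmt_4 (n : ℕ) (G : SimpleGraph (Fin n)) [DecidableRel G.Adj]
    (m : ℕ) (hm : 1 ≤ m) (hub : Fin n) (v : Fin (2 * m + 1) → Fin n)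
    (hinj : Function.Injective v) (hne : ∀ i, v i ≠ hub)
    (hcyc : ∀ i, G.Adj (v i) (v (i + 1)))
    (hhub : ∀ i, G.Adj hub (v i)) :
    ∃ (a : Fin n → ZMod 2) (a2 : Fin n → Fin n → ZMod 2)
      (b : Fin n → Fin n → ZMod 2) (b2 : Fin n → Fin n → Fin n → ZMod 2),
      (∑ i, (C (a i) + ∑ j, C (a2 i j) * X j) * (X i ^ 3 + 1)) +
      (∑ i, ∑ j, if i < j ∧ G.Adj i j then
          (C (b i j) + ∑ k, C (b2 i j k) * X k) * (X i ^ 2 + X i * X j + X j ^ 2)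
        else 0) = (1 : MvPolynomial (Fin n) (ZMod 2)) := by
  classical
  have hone : (1 : Fin (2*m+1)) ≠ 0 := by
    intro h
    have := congrArg Fin.val h
    rw [Fin.val_one', Nat.mod_eq_of_lt (by omega)] at this
    simp at this
  have hvne : ∀ t : Fin (2*m+1), v t ≠ v (t+1) := fun t h =>
    hone (left_eq_add.mp (hinj h))
  have hA := fun t : Fin (2*m+1) => ordpair (Ne.symm (hne t)) (hhub t)
  have hB := fun t : Fin (2*m+1) => ordpair (hvne t) (hcyc t)
  refine ⟨fun i => ∑ t : Fin (2*m+1), if i = v t then 1 else 0,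
    fun _ _ => 0, fun _ _ => 0,
    fun i j k => ∑ t : Fin (2*m+1),
      ((if k = v (t-1) ∧ j = max hub (v t) ∧ i = min hub (v t) then 1 else 0)
     + (if k = v (t+1) ∧ j = max hub (v t) ∧ i = min hub (v t) then 1 else 0)
     + (if k = v t ∧ j = max (v t) (v (t+1)) ∧ i = min (v t) (v (t+1)) then 1 else 0)), ?_⟩
  simp only [map_zero, zero_mul, Finset.sum_const_zero, add_zero, zero_add]
  have S1 : (∑ i, C (∑ t : Fin (2*m+1), if i = v t then (1:ZMod 2) else 0) * (X i ^ 3 + 1))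
      = ∑ t : Fin (2*m+1), ((X (v t) : MvPolynomial (Fin n) (ZMod 2)) ^ 3 + 1) := by
    simp only [map_sum, apply_ite C, map_one, map_zero, Finset.sum_mul, ite_mul, one_mul, zero_mul]
    rw [Finset.sum_comm]
    simp
  rw [S1]
  have h2 : (2 : MvPolynomial (Fin n) (ZMod 2)) = 0 := by
    have h := map_natCast (C : ZMod 2 →+* MvPolynomial (Fin n) (ZMod 2)) 2
    rw [show ((2:ℕ):ZMod 2) = 0 by decide, map_zero] at h
    exact_mod_cast h.symm
  have hN : ((2*m+1 : ℕ) : MvPolynomial (Fin n) (ZMod 2)) = 1 := by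
    push_cast
    rw [h2, zero_mul, zero_add]
  have lin : ∀ i j : Fin n,
      (∑ k, C (∑ t : Fin (2*m+1),
        ((if k = v (t-1) ∧ j = max hub (v t) ∧ i = min hub (v t) then (1:ZMod 2) else 0)
       + (if k = v (t+1) ∧ j = max hub (v t) ∧ i = min hub (v t) then 1 else 0)
       + (if k = v t ∧ j = max (v t) (v (t+1)) ∧ i = min (v t) (v (t+1)) then 1 else 0))) * X k)
      = ∑ t : Fin (2*m+1),
        ((if j = max hub (v t) then (if i = min hub (v t) then (X (v (t-1)) : MvPolynomial (Fin n) (ZMod 2)) else 0) else 0)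
       + (if j = max hub (v t) then (if i = min hub (v t) then X (v (t+1)) else 0) else 0)
       + (if j = max (v t) (v (t+1)) then (if i = min (v t) (v (t+1)) then X (v t) else 0) else 0)) := by
    intro i j
    simp only [map_sum, map_add, apply_ite C, map_one, map_zero, Finset.sum_mul, add_mul,
      ite_mul, zero_mul, one_mul]
    rw [Finset.sum_comm]
    simp only [Finset.sum_add_distrib, ite_and, Finset.sum_ite_eq', Finset.mem_univ, if_true]
  have swap1 : ∀ (f : Fin n → Fin n → Fin (2*m+1) → MvPolynomial (Fin n) (ZMod 2)),
      (∑ i, ∑ j, ∑ t, f i j t) = ∑ t, ∑ i, ∑ j, f i j t := by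
    intro f
    calc (∑ i, ∑ j, ∑ t, f i j t) = ∑ i, ∑ t, ∑ j, f i j t :=
          Finset.sum_congr rfl fun i _ => Finset.sum_comm
    _ = ∑ t, ∑ i, ∑ j, f i j t := Finset.sum_comm
  have comp : ∀ t : Fin (2*m+1),
      (∑ i, ∑ j,
        ((if j = max hub (v t) then (if i = min hub (v t) then (X (v (t-1)) : MvPolynomial (Fin n) (ZMod 2)) else 0) else 0)
       + (if j = max hub (v t) then (if i = min hub (v t) then X (v (t+1)) else 0) else 0)
       + (if j = max (v t) (v (t+1)) then (if i = min (v t) (v (t+1)) then X (v t) else 0) else 0))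
        * (X i ^ 2 + X i * X j + X j ^ 2))
      = (X (v (t-1)) + X (v (t+1))) * (X hub ^ 2 + X hub * X (v t) + X (v t) ^ 2)
        + X (v t) * (X (v t) ^ 2 + X (v t) * X (v (t+1)) + X (v (t+1)) ^ 2) := by
    intro t
    simp only [add_mul, ite_mul, zero_mul, Finset.sum_add_distrib,
      Finset.sum_ite_eq', Finset.mem_univ, if_true]
    rw [esym hub (v t), esym (v t) (v (t+1))]
  have drop : (∑ i, ∑ j, if i < j ∧ G.Adj i j then
        (∑ k, C (∑ t : Fin (2*m+1),
          ((if k = v (t-1) ∧ j = max hub (v t) ∧ i = min hub (v t) then (1:ZMod 2) else 0)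
         + (if k = v (t+1) ∧ j = max hub (v t) ∧ i = min hub (v t) then 1 else 0)
         + (if k = v t ∧ j = max (v t) (v (t+1)) ∧ i = min (v t) (v (t+1)) then 1 else 0))) * X k)
          * (X i ^ 2 + X i * X j + X j ^ 2)
      else 0)
      = ∑ i, ∑ j,
        (∑ k, C (∑ t : Fin (2*m+1),
          ((if k = v (t-1) ∧ j = max hub (v t) ∧ i = min hub (v t) then (1:ZMod 2) else 0)
         + (if k = v (t+1) ∧ j = max hub (v t) ∧ i = min hub (v t) then 1 else 0)
         + (if k = v t ∧ j = max (v t) (v (t+1)) ∧ i = min (v t) (v (t+1)) then 1 else 0))) * X k)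
          * (X i ^ 2 + X i * X j + X j ^ 2) := by
    refine Finset.sum_congr rfl fun i _ => Finset.sum_congr rfl fun j _ => ?_
    split_ifs with h
    · rfl
    · symm
      have hz : ∀ k, (∑ t : Fin (2*m+1),
          ((if k = v (t-1) ∧ j = max hub (v t) ∧ i = min hub (v t) then (1:ZMod 2) else 0)
         + (if k = v (t+1) ∧ j = max hub (v t) ∧ i = min hub (v t) then 1 else 0)
         + (if k = v t ∧ j = max (v t) (v (t+1)) ∧ i = min (v t) (v (t+1)) then 1 else 0))) = 0 := by
        intro k
        apply Finset.sum_eq_zero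
        intro t _
        have n1 : ¬(k = v (t-1) ∧ j = max hub (v t) ∧ i = min hub (v t)) := by
          rintro ⟨-, rfl, rfl⟩; exact h ⟨(hA t).1, (hA t).2⟩
        have n2 : ¬(k = v (t+1) ∧ j = max hub (v t) ∧ i = min hub (v t)) := by
          rintro ⟨-, rfl, rfl⟩; exact h ⟨(hA t).1, (hA t).2⟩
        have n3 : ¬(k = v t ∧ j = max (v t) (v (t+1)) ∧ i = min (v t) (v (t+1))) := by
          rintro ⟨-, rfl, rfl⟩; exact h ⟨(hB t).1, (hB t).2⟩
        rw [if_neg n1, if_neg n2, if_neg n3, add_zero, add_zero]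
      simp [hz]
  rw [drop]
  have step2 : (∑ i, ∑ j,
        (∑ k, C (∑ t : Fin (2*m+1),
          ((if k = v (t-1) ∧ j = max hub (v t) ∧ i = min hub (v t) then (1:ZMod 2) else 0)
         + (if k = v (t+1) ∧ j = max hub (v t) ∧ i = min hub (v t) then 1 else 0)
         + (if k = v t ∧ j = max (v t) (v (t+1)) ∧ i = min (v t) (v (t+1)) then 1 else 0))) * X k)
          * (X i ^ 2 + X i * X j + X j ^ 2))
      = ∑ t : Fin (2*m+1),
          ((X (v (t-1)) + X (v (t+1))) * (X hub ^ 2 + X hub * X (v t) + X (v t) ^ 2)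
            + X (v t) * (X (v t) ^ 2 + X (v t) * X (v (t+1)) + X (v (t+1)) ^ 2)) := by
    calc _ = ∑ i, ∑ j, (∑ t : Fin (2*m+1),
        ((if j = max hub (v t) then (if i = min hub (v t) then (X (v (t-1)) : MvPolynomial (Fin n) (ZMod 2)) else 0) else 0)
       + (if j = max hub (v t) then (if i = min hub (v t) then X (v (t+1)) else 0) else 0)
       + (if j = max (v t) (v (t+1)) then (if i = min (v t) (v (t+1)) then X (v t) else 0) else 0)))
          * (X i ^ 2 + X i * X j + X j ^ 2) :=
        Finset.sum_congr rfl fun i _ => Finset.sum_congr rfl fun j _ => by rw [lin i j]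
    _ = ∑ i, ∑ j, ∑ t : Fin (2*m+1),
        (((if j = max hub (v t) then (if i = min hub (v t) then (X (v (t-1)) : MvPolynomial (Fin n) (ZMod 2)) else 0) else 0)
       + (if j = max hub (v t) then (if i = min hub (v t) then X (v (t+1)) else 0) else 0)
       + (if j = max (v t) (v (t+1)) then (if i = min (v t) (v (t+1)) then X (v t) else 0) else 0))
          * (X i ^ 2 + X i * X j + X j ^ 2)) :=
        Finset.sum_congr rfl fun i _ => Finset.sum_congr rfl fun j _ => Finset.sum_mul _ _ _
    _ = ∑ t : Fin (2*m+1), ∑ i, ∑ j,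
        (((if j = max hub (v t) then (if i = min hub (v t) then (X (v (t-1)) : MvPolynomial (Fin n) (ZMod 2)) else 0) else 0)
       + (if j = max hub (v t) then (if i = min hub (v t) then X (v (t+1)) else 0) else 0)
       + (if j = max (v t) (v (t+1)) then (if i = min (v t) (v (t+1)) then X (v t) else 0) else 0))
          * (X i ^ 2 + X i * X j + X j ^ 2)) := swap1 _
    _ = _ := Finset.sum_congr rfl fun t _ => comp t
  rw [step2]
  exact cyc h2 hN (X hub) (fun t => X (v t))
end

section
/- Let G = (V,E) be a simple undirected graph on {1,…,n}, and work in 𝔽₂[x_1,…,x_n]. Let F be the set of polynomials {x_i³+1 : i ∈ V} ∪ {x_k(x_i² + x_i x_j + x_j²) : {i,j} ∈ E, k ∈ V}, and let H be the set of polynomials {x_i²x_j + x_i x_j² + 1 : {i,j} ∈ E} ∪ {x_i x_j² + x_j x_k² : (i,j),(j,k),(k,i) ∈ Arcs(G)} ∪ {x_i x_j² + x_j x_k² + x_k x_l² + x_l x_i² : (i,j),(j,k),(k,l),(l,i) ∈ Arcs(G), (i,k),(j,l) ∉ Arcs(G)}. Then the constant polynomial 1 lies in the 𝔽₂-linear span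 of F if and only if 1 lies in the 𝔽₂-linear span of H. -/
open MvPolynomial

def Fset (n : ℕ) (G : SimpleGraph (Fin n)) : Set (MvPolynomial (Fin n) (ZMod 2)) :=
  {p | ∃ i : Fin n, p = X i ^ 3 + 1} ∪
  {p | ∃ i j k : Fin n, G.Adj i j ∧
      p = X k * (X i ^ 2 + X i * X j + X j ^ 2)}

def Hset (n : ℕ) (G : SimpleGraph (Fin n)) : Set (MvPolynomial (Fin n) (ZMod 2)) :=
  {p | ∃ i j : Fin n, G.Adj i j ∧ p = X i ^ 2 * X j + X i * X j ^ 2 + 1} ∪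
  {p | ∃ i j k : Fin n, G.Adj i j ∧ G.Adj j k ∧ G.Adj k i ∧
      p = X i * X j ^ 2 + X j * X k ^ 2} ∪
  {p | ∃ i j k l : Fin n, G.Adj i j ∧ G.Adj j k ∧ G.Adj k l ∧ G.Adj l i ∧
      ¬ G.Adj i k ∧ ¬ G.Adj j l ∧
      p = X i * X j ^ 2 + X j * X k ^ 2 + X k * X l ^ 2 + X l * X i ^ 2}

namespace Stmt5Aux
open Finsupp

variable {n : ℕ}

abbrev V (n : ℕ) := MvPolynomial (Fin n) (ZMod 2)

lemma two_zero : (2 : V n) = 0 := by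
  have := CharP.cast_eq_zero (V n) 2
  simpa using this

variable (G : SimpleGraph (Fin n))

/-- common neighbors -/
noncomputable def cn (a b : Fin n) : Finset (Fin n) :=
  open scoped Classical in Finset.univ.filter (fun w => G.Adj a w ∧ G.Adj b w)

lemma mem_cn {a b w : Fin n} (hw : w ∈ cn G a b) : G.Adj a w ∧ G.Adj b w := by
  classical
  simpa [cn] using hw

lemma cn_mem {a b w : Fin n} (h1 : G.Adj a w) (h2 : G.Adj b w) : w ∈ cn G a b := by
  classical
  simp [cn, h1, h2]

noncomputable def u (a b : Fin n) : V n :=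
  open scoped Classical in
  if G.Adj a b then X a * X b ^ 2
  else if h : a < b ∧ (cn G a b).Nonempty then
    X a * X ((cn G a b).min' h.2) ^ 2 + X b * X ((cn G a b).min' h.2) ^ 2
  else 0

lemma u_self (a : Fin n) : u G a a = 0 := by
  rw [u, if_neg (G.irrefl), dif_neg (by rintro ⟨h, -⟩; exact lt_irrefl _ h)]

lemma u_adj {a b : Fin n} (h : G.Adj a b) : u G a b = X a * X b ^ 2 := by
  rw [u, if_pos h]

noncomputable def t (i j k : Fin n) : V n :=
  open scoped Classical in
  if i < j ∧ j < k then
    if G.Adj i j then u G k i + u G k j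
    else if G.Adj i k then u G j i + u G j k
    else if G.Adj j k then u G i j + u G i k
    else 0
  else 0

lemma t_not_sorted {i j k : Fin n} (h : ¬(i < j ∧ j < k)) : t G i j k = 0 := by
  rw [t, if_neg h]

end Stmt5Aux
namespace Stmt5Aux
open Finsupp
variable {n : ℕ} (G : SimpleGraph (Fin n))

lemma mem_edge {i j : Fin n} (h : G.Adj i j) :
    (X i ^ 2 * X j + X i * X j ^ 2 + 1 : V n) ∈ Submodule.span (ZMod 2) (Hset n G) :=
  Submodule.subset_span (Or.inl (Or.inl ⟨i, j, h, rfl⟩))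

lemma mem_tri {i j k : Fin n} (h1 : G.Adj i j) (h2 : G.Adj j k) (h3 : G.Adj k i) :
    (X i * X j ^ 2 + X j * X k ^ 2 : V n) ∈ Submodule.span (ZMod 2) (Hset n G) :=
  Submodule.subset_span (Or.inl (Or.inr ⟨i, j, k, h1, h2, h3, rfl⟩))

lemma mem_c4 {i j k l : Fin n} (h1 : G.Adj i j) (h2 : G.Adj j k) (h3 : G.Adj k l)
    (h4 : G.Adj l i) (h5 : ¬ G.Adj i k) (h6 : ¬ G.Adj j l) :
    (X i * X j ^ 2 + X j * X k ^ 2 + X k * X l ^ 2 + X l * X i ^ 2 : V n) ∈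
      Submodule.span (ZMod 2) (Hset n G) :=
  Submodule.subset_span (Or.inr ⟨i, j, k, l, h1, h2, h3, h4, h5, h6, rfl⟩)

lemma D2 {x y s w : Fin n} (hA : ¬ G.Adj x y) (hxs : G.Adj x s) (hys : G.Adj y s)
    (hxw : G.Adj x w) (hyw : G.Adj y w) (hws : w ≠ s) :
    (X x * X s ^ 2 + X y * X s ^ 2 + X x * X w ^ 2 + X y * X w ^ 2 : V n) ∈
      Submodule.span (ZMod 2) (Hset n G) := by
  by_cases hsw : G.Adj s w
  · have e : (X x * X s ^ 2 + X y * X s ^ 2 + X x * X w ^ 2 + X y * X w ^ 2 : V n) =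
        (X w * X x ^ 2 + X x * X s ^ 2) + (X x ^ 2 * X w + X x * X w ^ 2 + 1)
        + ((X w * X y ^ 2 + X y * X s ^ 2) + (X y ^ 2 * X w + X y * X w ^ 2 + 1)) := by
      linear_combination (-(X x ^ 2 * X w + X y ^ 2 * X w + 1) : V n) * two_zero
    rw [e]
    exact add_mem (add_mem (mem_tri G hxw.symm hxs hsw) (mem_edge G hxw))
      (add_mem (mem_tri G hyw.symm hys hsw) (mem_edge G hyw))
  · have e : (X x * X s ^ 2 + X y * X s ^ 2 + X x * X w ^ 2 + X y * X w ^ 2 : V n) =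
        (X x * X s ^ 2 + X s * X y ^ 2 + X y * X w ^ 2 + X w * X x ^ 2)
        + (X s ^ 2 * X y + X s * X y ^ 2 + 1) + (X w ^ 2 * X x + X w * X x ^ 2 + 1) := by
      linear_combination (-(X s * X y ^ 2 + X w * X x ^ 2 + 1) : V n) * two_zero
    rw [e]
    exact add_mem (add_mem (mem_c4 G hxs hys.symm hyw hxw.symm hA hsw) (mem_edge G hys.symm))
      (mem_edge G hxw.symm)

lemma keyPair {s x y : Fin n} (hxy : x ≠ y) (hsx : G.Adj s x) (hsy : G.Adj s y) :
    u G y s + u G y x + u G x s + u G x y ∈ Submodule.span (ZMod 2) (Hset n G) := by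
  rw [u_adj G hsy.symm, u_adj G hsx.symm]
  by_cases hA : G.Adj x y
  · rw [u_adj G hA.symm, u_adj G hA]
    have e : (X y * X s ^ 2 + X y * X x ^ 2 + X x * X s ^ 2 + X x * X y ^ 2 : V n) =
        (X y * X x ^ 2 + X x * X s ^ 2) + (X x * X y ^ 2 + X y * X s ^ 2) := by ring
    rw [e]
    exact add_mem (mem_tri G hA.symm hsx.symm hsy) (mem_tri G hA hsy.symm hsx)
  · rcases hxy.lt_or_gt with hlt | hlt
    · have hne : (cn G x y).Nonempty := ⟨s, cn_mem G hsx.symm hsy.symm⟩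
      have hw := mem_cn G ((cn G x y).min'_mem hne)
      have hxy' : u G x y = X x * X ((cn G x y).min' hne) ^ 2
          + X y * X ((cn G x y).min' hne) ^ 2 := by
        rw [u, if_neg hA, dif_pos ⟨hlt, hne⟩]
      have hyx : u G y x = 0 := by
        rw [u, if_neg (fun h => hA h.symm), dif_neg (by rintro ⟨h, -⟩; exact absurd hlt (asymm h))]
      rw [hxy', hyx]
      set w := (cn G x y).min' hne with hwdef
      by_cases hws : w = s
      · rw [hws]
        have e : (X y * X s ^ 2 + 0 + X x * X s ^ 2 + (X x * X s ^ 2 + X y * X s ^ 2) : V n) = 0 := by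
          linear_combination ((X x * X s ^ 2 + X y * X s ^ 2 : V n)) * two_zero
        rw [e]; exact zero_mem _
      · have := D2 G hA hsx.symm hsy.symm hw.1 hw.2 hws
        have e : (X y * X s ^ 2 + 0 + X x * X s ^ 2 + (X x * X w ^ 2 + X y * X w ^ 2) : V n) =
            X x * X s ^ 2 + X y * X s ^ 2 + X x * X w ^ 2 + X y * X w ^ 2 := by ring
        rw [e]; exact this
    · have hne : (cn G y x).Nonempty := ⟨s, cn_mem G hsy.symm hsx.symm⟩
      have hw := mem_cn G ((cn G y x).min'_mem hne)
      have hyx : u G y x = X y * X ((cn G y x).min' hne) ^ 2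
          + X x * X ((cn G y x).min' hne) ^ 2 := by
        rw [u, if_neg (fun h => hA h.symm), dif_pos ⟨hlt, hne⟩]
      have hxy' : u G x y = 0 := by
        rw [u, if_neg hA, dif_neg (by rintro ⟨h, -⟩; exact absurd hlt (asymm h))]
      rw [hxy', hyx]
      set w := (cn G y x).min' hne with hwdef
      by_cases hws : w = s
      · rw [hws]
        have e : (X y * X s ^ 2 + (X y * X s ^ 2 + X x * X s ^ 2) + X x * X s ^ 2 + 0 : V n) = 0 := by
          linear_combination ((X x * X s ^ 2 + X y * X s ^ 2 : V n)) * two_zero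
        rw [e]; exact zero_mem _
      · have := D2 G hA hsx.symm hsy.symm hw.2 hw.1 hws
        have e : (X y * X s ^ 2 + (X y * X w ^ 2 + X x * X w ^ 2) + X x * X s ^ 2 + 0 : V n) =
            X x * X s ^ 2 + X y * X s ^ 2 + X x * X w ^ 2 + X y * X w ^ 2 := by ring
        rw [e]; exact this

end Stmt5Aux
namespace Stmt5Aux
open Finsupp
variable {n : ℕ} (G : SimpleGraph (Fin n))

lemma fin_ne {a b : Fin n} (h : a ≠ b) : (a : ℕ) ≠ (b : ℕ) :=
  fun hh => h (Fin.val_injective hh)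

lemma pair_ne_zero (a b : Fin n) : (single a 1 + single b 2 : Fin n →₀ ℕ) ≠ 0 := by
  intro h
  have hv := DFunLike.congr_fun h b
  simp only [Finsupp.add_apply, Finsupp.single_apply, Finsupp.coe_zero, Pi.zero_apply,
    Fin.ext_iff] at hv
  split_ifs at hv <;> omega

lemma triple_ne_zero (i j k : Fin n) :
    (single i 1 + single j 1 + single k 1 : Fin n →₀ ℕ) ≠ 0 := by
  intro h
  have hv := DFunLike.congr_fun h i
  simp only [Finsupp.add_apply, Finsupp.single_apply, Finsupp.coe_zero, Pi.zero_apply,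
    Fin.ext_iff] at hv
  split_ifs at hv <;> omega

lemma cube_ne_zero (i : Fin n) : (single i 3 : Fin n →₀ ℕ) ≠ 0 := by
  intro h
  have hv := DFunLike.congr_fun h i
  simp only [Finsupp.single_apply, Finsupp.coe_zero, Pi.zero_apply, Fin.ext_iff] at hv
  split_ifs at hv <;> omega

lemma pair_ne_cube {a b : Fin n} (hab : a ≠ b) (i : Fin n) :
    (single a 1 + single b 2 : Fin n →₀ ℕ) ≠ single i 3 := by
  intro h
  have hv := DFunLike.congr_fun h a
  have h1 := fin_ne hab
  simp only [Finsupp.add_apply, Finsupp.single_apply, Fin.ext_iff] at hv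
  split_ifs at hv <;> omega

lemma triple_ne_cube {i j k : Fin n} (hij : i ≠ j) (hik : i ≠ k) (m : Fin n) :
    (single i 1 + single j 1 + single k 1 : Fin n →₀ ℕ) ≠ single m 3 := by
  intro h
  have hv := DFunLike.congr_fun h i
  have h1 := fin_ne hij
  have h2 := fin_ne hik
  simp only [Finsupp.add_apply, Finsupp.single_apply, Fin.ext_iff] at hv
  split_ifs at hv <;> omega

lemma triple_ne_pair {i j k a b : Fin n} (hij : i ≠ j) (hik : i ≠ k) (hjk : j ≠ k)
    (hab : a ≠ b) :
    (single i 1 + single j 1 + single k 1 : Fin n →₀ ℕ) ≠ single a 1 + single b 2 := by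
  intro h
  have hv := DFunLike.congr_fun h b
  have h1 := fin_ne hij
  have h2 := fin_ne hik
  have h3 := fin_ne hjk
  have h4 := fin_ne hab
  simp only [Finsupp.add_apply, Finsupp.single_apply, Fin.ext_iff] at hv
  split_ifs at hv <;> omega

lemma eq21 {a b a' b' : Fin n} (hab : a ≠ b) (hab' : a' ≠ b')
    (h : (single a 1 + single b 2 : Fin n →₀ ℕ) = single a' 1 + single b' 2) :
    a = a' ∧ b = b' := by
  have hv1 := DFunLike.congr_fun h b
  have hv2 := DFunLike.congr_fun h a
  have hv3 := DFunLike.congr_fun h b'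
  have hv4 := DFunLike.congr_fun h a'
  have h1 := fin_ne hab
  have h2 := fin_ne hab'
  simp only [Finsupp.add_apply, Finsupp.single_apply, Fin.ext_iff] at hv1 hv2 hv3 hv4
  have hbv : (b:ℕ) = (b':ℕ) := by split_ifs at hv1 hv3 <;> omega
  have hav : (a:ℕ) = (a':ℕ) := by split_ifs at hv2 hv4 <;> omega
  exact ⟨Fin.val_injective hav, Fin.val_injective hbv⟩

lemma eq111 {i j k p q r : Fin n} (h1 : i < j) (h2 : j < k) (h3 : p < q) (h4 : q < r)
    (h : (single i 1 + single j 1 + single k 1 : Fin n →₀ ℕ)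
      = single p 1 + single q 1 + single r 1) :
    i = p ∧ j = q ∧ k = r := by
  have e1 := DFunLike.congr_fun h i
  have e2 := DFunLike.congr_fun h j
  have e3 := DFunLike.congr_fun h k
  have e4 := DFunLike.congr_fun h p
  have e5 := DFunLike.congr_fun h q
  have e6 := DFunLike.congr_fun h r
  simp only [Finsupp.add_apply, Finsupp.single_apply, Fin.ext_iff] at e1 e2 e3 e4 e5 e6
  have o1 : (i:ℕ) < j := h1
  have o2 : (j:ℕ) < k := h2
  have o3 : (p:ℕ) < q := h3
  have o4 : (q:ℕ) < r := h4
  have m1 : (i:ℕ) = p ∨ (i:ℕ) = q ∨ (i:ℕ) = r := by split_ifs at e1 <;> omega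
  have m2 : (j:ℕ) = p ∨ (j:ℕ) = q ∨ (j:ℕ) = r := by split_ifs at e2 <;> omega
  have m3 : (k:ℕ) = p ∨ (k:ℕ) = q ∨ (k:ℕ) = r := by split_ifs at e3 <;> omega
  have m4 : (p:ℕ) = i ∨ (p:ℕ) = j ∨ (p:ℕ) = k := by split_ifs at e4 <;> omega
  have m5 : (q:ℕ) = i ∨ (q:ℕ) = j ∨ (q:ℕ) = k := by split_ifs at e5 <;> omega
  have m6 : (r:ℕ) = i ∨ (r:ℕ) = j ∨ (r:ℕ) = k := by split_ifs at e6 <;> omega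
  refine ⟨Fin.val_injective ?_, Fin.val_injective ?_, Fin.val_injective ?_⟩ <;> omega

end Stmt5Aux
namespace Stmt5Aux
open Finsupp
variable {n : ℕ} (G : SimpleGraph (Fin n))

noncomputable def psi (p : V n) : V n :=
  C (coeff 0 p)
  + ∑ m : Fin n, C (coeff (single m 3) p)
  + ∑ ab : Fin n × Fin n, C (coeff (single ab.1 1 + single ab.2 2) p) * u G ab.1 ab.2
  + ∑ tr : Fin n × Fin n × Fin n,
      C (coeff (single tr.1 1 + single tr.2.1 1 + single tr.2.2 1) p) * t G tr.1 tr.2.1 tr.2.2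

lemma psi_add (p q : V n) : psi G (p + q) = psi G p + psi G q := by
  simp only [psi, coeff_add, map_add, add_mul, Finset.sum_add_distrib]
  ring

lemma psi_zero : psi G 0 = 0 := by
  simp [psi]

lemma psi_smul (c : ZMod 2) (p : V n) : psi G (c • p) = c • psi G p := by
  have hc : c = 0 ∨ c = 1 := by revert c; decide
  rcases hc with rfl | rfl
  · simp [psi_zero]
  · simp

lemma psi_one : psi G 1 = 1 := by
  rw [psi]
  rw [Finset.sum_eq_zero (fun m _ => by
    rw [coeff_one, if_neg (fun hh => cube_ne_zero m hh.symm), map_zero])]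
  rw [Finset.sum_eq_zero (fun ab _ => by
    rw [coeff_one, if_neg (fun hh => pair_ne_zero ab.1 ab.2 hh.symm), map_zero, zero_mul])]
  rw [Finset.sum_eq_zero (fun tr _ => by
    rw [coeff_one, if_neg (fun hh => triple_ne_zero tr.1 tr.2.1 tr.2.2 hh.symm), map_zero,
      zero_mul])]
  rw [coeff_one, if_pos rfl, map_one]
  ring

lemma psi_monomial_cube (i : Fin n) : psi G (monomial (single i 3) (1 : ZMod 2)) = 1 := by
  rw [psi]
  rw [show (∑ m : Fin n, C (coeff (single m 3) (monomial (single i 3) (1 : ZMod 2))) : V n)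
      = 1 from by
    rw [Finset.sum_eq_single i (fun b _ hb => by
        rw [coeff_monomial, if_neg (fun hh => hb ((Finsupp.single_left_inj
          (by norm_num : (3:ℕ) ≠ 0)).mp hh).symm), map_zero])
      (fun hi => absurd (Finset.mem_univ i) hi)]
    rw [coeff_monomial, if_pos rfl, map_one]]
  rw [Finset.sum_eq_zero (fun ab _ => by
    by_cases hab : ab.1 = ab.2
    · rw [show u G ab.1 ab.2 = 0 from by rw [hab, u_self], mul_zero]
    · rw [coeff_monomial, if_neg (fun hh => pair_ne_cube hab i hh.symm), map_zero, zero_mul])]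
  rw [Finset.sum_eq_zero (fun tr _ => by
    by_cases hs : tr.1 < tr.2.1 ∧ tr.2.1 < tr.2.2
    · rw [coeff_monomial,
        if_neg (fun hh => triple_ne_cube hs.1.ne (hs.1.trans hs.2).ne i hh.symm),
        map_zero, zero_mul]
    · rw [t_not_sorted G hs, mul_zero])]
  rw [coeff_monomial, if_neg (cube_ne_zero i), map_zero]
  ring

lemma psi_monomial_pair {a b : Fin n} (hab : a ≠ b) :
    psi G (monomial (single a 1 + single b 2) (1 : ZMod 2)) = u G a b := by
  rw [psi]
  rw [show (∑ ab : Fin n × Fin n, C (coeff (single ab.1 1 + single ab.2 2)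
        (monomial (single a 1 + single b 2) (1 : ZMod 2))) * u G ab.1 ab.2 : V n)
      = u G a b from by
    rw [Finset.sum_eq_single (a, b) (fun xy _ hxy => by
        by_cases h1 : xy.1 = xy.2
        · rw [show u G xy.1 xy.2 = 0 from by rw [h1, u_self], mul_zero]
        · rw [coeff_monomial, if_neg (fun hh => by
            obtain ⟨e1, e2⟩ := eq21 hab h1 hh
            exact hxy (by rw [show xy = (xy.1, xy.2) from rfl, ← e1, ← e2])),
            map_zero, zero_mul])
      (fun hi => absurd (Finset.mem_univ _) hi)]
    rw [coeff_monomial, if_pos rfl, map_one, one_mul]]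
  rw [Finset.sum_eq_zero (fun m _ => by
    rw [coeff_monomial, if_neg (pair_ne_cube hab m), map_zero])]
  rw [Finset.sum_eq_zero (fun tr _ => by
    by_cases hs : tr.1 < tr.2.1 ∧ tr.2.1 < tr.2.2
    · rw [coeff_monomial, if_neg (fun hh =>
        triple_ne_pair hs.1.ne (hs.1.trans hs.2).ne hs.2.ne hab hh.symm), map_zero, zero_mul]
    · rw [t_not_sorted G hs, mul_zero])]
  rw [coeff_monomial, if_neg (pair_ne_zero a b), map_zero]
  ring

lemma psi_monomial_triple {i j k : Fin n} (h1 : i < j) (h2 : j < k) :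
    psi G (monomial (single i 1 + single j 1 + single k 1) (1 : ZMod 2)) = t G i j k := by
  rw [psi]
  rw [show (∑ tr : Fin n × Fin n × Fin n, C (coeff (single tr.1 1 + single tr.2.1 1
        + single tr.2.2 1) (monomial (single i 1 + single j 1 + single k 1) (1 : ZMod 2)))
        * t G tr.1 tr.2.1 tr.2.2 : V n)
      = t G i j k from by
    rw [Finset.sum_eq_single (i, j, k) (fun tr _ htr => by
        by_cases hs : tr.1 < tr.2.1 ∧ tr.2.1 < tr.2.2
        · rw [coeff_monomial, if_neg (fun hh => by
            obtain ⟨e1, e2, e3⟩ := eq111 h1 h2 hs.1 hs.2 hh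
            exact htr (by rw [show tr = (tr.1, tr.2.1, tr.2.2) from rfl, ← e1, ← e2, ← e3])),
            map_zero, zero_mul]
        · rw [t_not_sorted G hs, mul_zero])
      (fun hi => absurd (Finset.mem_univ _) hi)]
    rw [coeff_monomial, if_pos rfl, map_one, one_mul]]
  rw [Finset.sum_eq_zero (fun m _ => by
    rw [coeff_monomial, if_neg (triple_ne_cube h1.ne (h1.trans h2).ne m), map_zero])]
  rw [Finset.sum_eq_zero (fun ab _ => by
    by_cases hab : ab.1 = ab.2
    · rw [show u G ab.1 ab.2 = 0 from by rw [hab, u_self], mul_zero]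
    · rw [coeff_monomial, if_neg (triple_ne_pair h1.ne (h1.trans h2).ne h2.ne hab),
        map_zero, zero_mul])]
  rw [coeff_monomial, if_neg (triple_ne_zero i j k), map_zero]
  ring

end Stmt5Aux
namespace Stmt5Aux
open Finsupp
variable {n : ℕ} (G : SimpleGraph (Fin n))

lemma X_cube_eq (i : Fin n) : (X i : V n) ^ 3 = monomial (single i 3) 1 :=
  X_pow_eq_monomial

lemma X_mul_sq (i j : Fin n) :
    (X i : V n) * X j ^ 2 = monomial (single i 1 + single j 2) 1 := by
  rw [X_pow_eq_monomial, ← pow_one (X i), X_pow_eq_monomial, monomial_mul, one_mul]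

lemma X_sq_mul (i j : Fin n) :
    (X i : V n) ^ 2 * X j = monomial (single j 1 + single i 2) 1 := by
  rw [X_pow_eq_monomial, ← pow_one (X j), X_pow_eq_monomial, monomial_mul, one_mul, add_comm]

lemma X_trip (i j k : Fin n) :
    (X i : V n) * X j * X k = monomial (single i 1 + single j 1 + single k 1) 1 := by
  rw [← pow_one (X i), ← pow_one (X j), ← pow_one (X k), X_pow_eq_monomial,
    X_pow_eq_monomial, X_pow_eq_monomial, monomial_mul, monomial_mul, one_mul, one_mul]

lemma main3 {i j k : Fin n} (hij : G.Adj i j) (hik : i ≠ k) (hjk : j ≠ k) (hlt : i < j) :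
    u G k i + u G k j + psi G (monomial (single i 1 + single j 1 + single k 1) (1 : ZMod 2))
      ∈ Submodule.span (ZMod 2) (Hset n G) := by
  rcases lt_trichotomy k i with hki | heq | hik'
  · rw [show (single i 1 + single j 1 + single k 1 : Fin n →₀ ℕ)
      = single k 1 + single i 1 + single j 1 from by abel]
    rw [psi_monomial_triple G hki hlt, t, if_pos ⟨hki, hlt⟩]
    by_cases hA1 : G.Adj k i
    · rw [if_pos hA1]
      rw [show u G k i + u G k j + (u G j k + u G j i)
        = u G k i + u G k j + u G j i + u G j k from by ring]
      exact keyPair G hjk hij hA1.symm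
    · rw [if_neg hA1]
      by_cases hA2 : G.Adj k j
      · rw [if_pos hA2]
        rw [show u G k i + u G k j + (u G i k + u G i j)
          = u G k j + u G k i + u G i j + u G i k from by ring]
        exact keyPair G hik hij.symm hA2.symm
      · rw [if_neg hA2, if_pos hij]
        rw [show u G k i + u G k j + (u G k i + u G k j) = 0 from by
          linear_combination (u G k i + u G k j) * (two_zero (n := n))]
        exact zero_mem _
  · exact absurd heq.symm hik
  · rcases lt_trichotomy k j with hkj | heq | hjk'
    · rw [show (single i 1 + single j 1 + single k 1 : Fin n →₀ ℕ)
        = single i 1 + single k 1 + single j 1 from by abel]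
      rw [psi_monomial_triple G hik' hkj, t, if_pos ⟨hik', hkj⟩]
      by_cases hA1 : G.Adj i k
      · rw [if_pos hA1]
        rw [show u G k i + u G k j + (u G j i + u G j k)
          = u G k i + u G k j + u G j i + u G j k from by ring]
        exact keyPair G hjk hij hA1
      · rw [if_neg hA1, if_pos hij]
        rw [show u G k i + u G k j + (u G k i + u G k j) = 0 from by
          linear_combination (u G k i + u G k j) * (two_zero (n := n))]
        exact zero_mem _
    · exact absurd heq.symm hjk
    · rw [psi_monomial_triple G hlt hjk', t, if_pos ⟨hlt, hjk'⟩, if_pos hij]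
      rw [show u G k i + u G k j + (u G k i + u G k j) = 0 from by
        linear_combination (u G k i + u G k j) * (two_zero (n := n))]
      exact zero_mem _

lemma psi_F {f : V n} (hf : f ∈ Fset n G) :
    psi G f ∈ Submodule.span (ZMod 2) (Hset n G) := by
  rcases hf with ⟨i, rfl⟩ | ⟨i, j, k, hij, rfl⟩
  · rw [X_cube_eq i, psi_add, psi_monomial_cube, psi_one]
    rw [show (1 + 1 : V n) = 0 from by linear_combination (two_zero (n := n))]
    exact zero_mem _
  · have hij' : i ≠ j := hij.ne
    by_cases hk1 : k = i
    · subst hk1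
      rw [show (X k * (X k ^ 2 + X k * X j + X j ^ 2) : V n)
        = monomial (single k 3) 1 + (monomial (single j 1 + single k 2) 1
          + monomial (single k 1 + single j 2) 1) from by
        rw [← X_cube_eq k, ← X_sq_mul k j, ← X_mul_sq k j]; ring]
      rw [psi_add, psi_add, psi_monomial_cube, psi_monomial_pair G (Ne.symm hij'),
        psi_monomial_pair G hij']
      rw [u_adj G hij.symm, u_adj G hij]
      rw [show (1 + (X j * X k ^ 2 + X k * X j ^ 2) : V n)
        = X k ^ 2 * X j + X k * X j ^ 2 + 1 from by ring]
      exact mem_edge G hij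
    · by_cases hk2 : k = j
      · subst hk2
        rw [show (X k * (X i ^ 2 + X i * X k + X k ^ 2) : V n)
          = monomial (single k 3) 1 + (monomial (single k 1 + single i 2) 1
            + monomial (single i 1 + single k 2) 1) from by
          rw [← X_cube_eq k, ← X_sq_mul i k, ← X_mul_sq i k]; ring]
        rw [psi_add, psi_add, psi_monomial_cube, psi_monomial_pair G hk1,
          psi_monomial_pair G hij']
        rw [u_adj G hij.symm, u_adj G hij]
        rw [show (1 + (X k * X i ^ 2 + X i * X k ^ 2) : V n)
          = X i ^ 2 * X k + X i * X k ^ 2 + 1 from by ring]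
        exact mem_edge G hij
      · rw [show (X k * (X i ^ 2 + X i * X j + X j ^ 2) : V n)
          = monomial (single k 1 + single i 2) 1
            + (monomial (single i 1 + single j 1 + single k 1) 1
            + monomial (single k 1 + single j 2) 1) from by
          rw [← X_mul_sq k i, ← X_mul_sq k j, ← X_trip i j k]; ring]
        rw [psi_add, psi_add, psi_monomial_pair G hk1, psi_monomial_pair G hk2]
        rcases lt_or_gt_of_ne hij' with hlt | hlt
        · rw [show u G k i + (psi G (monomial (single i 1 + single j 1 + single k 1)
              (1 : ZMod 2)) + u G k j)
            = u G k i + u G k j + psi G (monomial (single i 1 + single j 1 + single k 1)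
              (1 : ZMod 2)) from by ring]
          exact main3 G hij (Ne.symm hk1) (Ne.symm hk2) hlt
        · rw [show (single i 1 + single j 1 + single k 1 : Fin n →₀ ℕ)
            = single j 1 + single i 1 + single k 1 from by abel]
          rw [show u G k i + (psi G (monomial (single j 1 + single i 1 + single k 1)
              (1 : ZMod 2)) + u G k j)
            = u G k j + u G k i + psi G (monomial (single j 1 + single i 1 + single k 1)
              (1 : ZMod 2)) from by ring]
          exact main3 G hij.symm (Ne.symm hk2) (Ne.symm hk1) hlt

lemma memF_cube (i : Fin n) :
    (X i ^ 3 + 1 : V n) ∈ Submodule.span (ZMod 2) (Fset n G) :=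
  Submodule.subset_span (Or.inl ⟨i, rfl⟩)

lemma memF_e {i j : Fin n} (k : Fin n) (h : G.Adj i j) :
    (X k * (X i ^ 2 + X i * X j + X j ^ 2) : V n) ∈ Submodule.span (ZMod 2) (Fset n G) :=
  Submodule.subset_span (Or.inr ⟨i, j, k, h, rfl⟩)

lemma H_sub : Hset n G ⊆ ↑(Submodule.span (ZMod 2) (Fset n G)) := by
  rintro p ((⟨i, j, hij, rfl⟩ | ⟨i, j, k, h1, h2, h3, rfl⟩) |
    ⟨i, j, k, l, h1, h2, h3, h4, h5, h6, rfl⟩)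
  · rw [show (X i ^ 2 * X j + X i * X j ^ 2 + 1 : V n)
      = X j * (X i ^ 2 + X i * X j + X j ^ 2) + (X j ^ 3 + 1) from by
      linear_combination (-(X j ^ 3) : V n) * two_zero]
    exact add_mem (memF_e G j hij) (memF_cube G j)
  · rw [show (X i * X j ^ 2 + X j * X k ^ 2 : V n)
      = X i * (X j ^ 2 + X j * X k + X k ^ 2) + X j * (X j ^ 2 + X j * X k + X k ^ 2)
        + X k * (X i ^ 2 + X i * X j + X j ^ 2) + X i * (X i ^ 2 + X i * X k + X k ^ 2)
        + (X i ^ 3 + 1) + (X j ^ 3 + 1) from by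
      linear_combination (-(X i * X j * X k + X i * X k ^ 2 + X j ^ 3 + X j ^ 2 * X k
        + X i ^ 2 * X k + X i ^ 3 + 1) : V n) * two_zero]
    exact add_mem (add_mem (add_mem (add_mem (add_mem (memF_e G i h2) (memF_e G j h2))
      (memF_e G k h1)) (memF_e G i h3.symm)) (memF_cube G i)) (memF_cube G j)
  · rw [show (X i * X j ^ 2 + X j * X k ^ 2 + X k * X l ^ 2 + X l * X i ^ 2 : V n)
      = X i * (X i ^ 2 + X i * X j + X j ^ 2) + X i * (X j ^ 2 + X j * X k + X k ^ 2)
        + X i * (X k ^ 2 + X k * X l + X l ^ 2) + X i * (X l ^ 2 + X l * X i + X i ^ 2)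
        + X j * (X i ^ 2 + X i * X j + X j ^ 2) + X j * (X j ^ 2 + X j * X k + X k ^ 2)
        + X k * (X i ^ 2 + X i * X j + X j ^ 2) + X k * (X l ^ 2 + X l * X i + X i ^ 2) from by
      linear_combination (-(X i ^ 3 + X i ^ 2 * X j + X i * X j ^ 2 + X i * X j * X k
        + X i * X k ^ 2 + X i * X k * X l + X i * X l ^ 2 + X j ^ 3 + X j ^ 2 * X k
        + X i ^ 2 * X k) : V n) * two_zero]
    exact add_mem (add_mem (add_mem (add_mem (add_mem (add_mem (add_mem
      (memF_e G i h1) (memF_e G i h2)) (memF_e G i h3)) (memF_e G i h4))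
      (memF_e G j h1)) (memF_e G j h2)) (memF_e G k h1)) (memF_e G k h4)

end Stmt5Aux

theorem stmt_5 (n : ℕ) (G : SimpleGraph (Fin n)) :
    (1 : MvPolynomial (Fin n) (ZMod 2)) ∈ Submodule.span (ZMod 2) (Fset n G) ↔
    (1 : MvPolynomial (Fin n) (ZMod 2)) ∈ Submodule.span (ZMod 2) (Hset n G) := by
  constructor
  · intro h1
    have key := Submodule.span_induction
      (p := fun x _ => Stmt5Aux.psi G x ∈ Submodule.span (ZMod 2) (Hset n G))
      (fun x hx => Stmt5Aux.psi_F G hx)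
      (by show Stmt5Aux.psi G 0 ∈ _; rw [Stmt5Aux.psi_zero]; exact zero_mem _)
      (fun x y _ _ hx hy => by
        show Stmt5Aux.psi G (x + y) ∈ _
        rw [Stmt5Aux.psi_add]; exact add_mem hx hy)
      (fun c x _ hx => by
        show Stmt5Aux.psi G (c • x) ∈ _
        rw [Stmt5Aux.psi_smul]; exact Submodule.smul_mem _ c hx)
      h1
    rwa [Stmt5Aux.psi_one] at key
  · intro h1
    exact Submodule.span_le.mpr (Stmt5Aux.H_sub G) h1
end

section
/- Let k > 2 be an integer, K an algebraically closed field whose characteristic does not divide k, and ω ∈ K a primitive k-th root of unity. In K[x_1,…,x_k], let I be the ideal generated by the doubly covered cycle encoding polynomials: g_i = x_i + ((ω^{2+i} − ω^{2−i})/(ω³−ω)) x_{k−1} + ((ω^{1−i} − ω^{3+i})/(ω³−ω)) x_k for i = 1,…,k−2, g_{k−1} = (x_{k−1} − ω x_k)(x_{k−1} − ω^{−1} x_k), and g_k = x_k^k − 1 (note ω³ − ω ≠ 0 since k > 2). Then I is a radical ideal, and the zero set {x ∈ K^k : g(x) = 0 for all g ∈ I} has exactly 2k elements. -/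
open MvPolynomial

section Aux

variable {K : Type*} [Field K]

/-- The point of the variety parameterized by the last two coordinates `u, v`. -/
def dcPt (k : ℕ) (c d : ℕ → K) (u v : K) : Fin k → K := fun j =>
  if (j : ℕ) < k - 2 then -(c ((j : ℕ) + 1) * u + d ((j : ℕ) + 1) * v)
  else if (j : ℕ) = k - 2 then u else v

theorem dcPt_low (k : ℕ) (c d : ℕ → K) (u v : K) (j : Fin k) (h : (j : ℕ) < k - 2) :
    dcPt k c d u v j = -(c ((j : ℕ) + 1) * u + d ((j : ℕ) + 1) * v) := if_pos h

theorem dcPt_low' (k : ℕ) (c d : ℕ → K) (u v : K) (j : ℕ) (hj : j < k) (h : j < k - 2) :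
    dcPt k c d u v ⟨j, hj⟩ = -(c (j + 1) * u + d (j + 1) * v) := if_pos h

theorem dcPt_A (k : ℕ) (c d : ℕ → K) (u v : K) (j : Fin k) (h : (j : ℕ) = k - 2) :
    dcPt k c d u v j = u := by
  rw [dcPt, if_neg (by omega), if_pos h]

theorem dcPt_B (k : ℕ) (hk : 2 < k) (c d : ℕ → K) (u v : K) (j : Fin k) (h : (j : ℕ) = k - 1) :
    dcPt k c d u v j = v := by
  rw [dcPt, if_neg (by omega), if_neg (by omega)]

set_option maxHeartbeats 1000000 in
theorem key (k : ℕ) (hk : k > 2) (K : Type*) [Field K]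
    (ω : K) (hω : IsPrimitiveRoot ω k) (c d : ℕ → K)
    (I : Ideal (MvPolynomial (Fin k) K))
    (hI : I = Ideal.span (
      {p | ∃ (i : ℕ) (_ : 1 ≤ i) (_ : i ≤ k - 2),
        p = X (⟨i - 1, by omega⟩ : Fin k)
          + C (c i) * X (⟨k - 2, by omega⟩ : Fin k)
          + C (d i) * X (⟨k - 1, by omega⟩ : Fin k)} ∪
      {(X (⟨k - 2, by omega⟩ : Fin k) - C ω * X (⟨k - 1, by omega⟩ : Fin k)) *
         (X (⟨k - 2, by omega⟩ : Fin k) - C ω⁻¹ * X (⟨k - 1, by omega⟩ : Fin k))} ∪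
      {X (⟨k - 1, by omega⟩ : Fin k) ^ k - 1})) :
    I.IsRadical ∧
      {x : Fin k → K | ∀ f ∈ I, MvPolynomial.eval x f = 0}.ncard = 2 * k := by
  have hk0 : k ≠ 0 := by omega
  haveI : NeZero k := ⟨hk0⟩
  have hω0 : ω ≠ 0 := hω.ne_zero hk0
  have hωinv : ω * ω⁻¹ = 1 := mul_inv_cancel₀ hω0
  have hωne : ω ≠ ω⁻¹ := by
    intro h
    refine hω.pow_ne_one_of_pos_of_lt two_ne_zero hk ?_
    rw [sq]; nth_rewrite 2 [h]; exact hωinv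
  -- generators are in I
  have hlin : ∀ i : ℕ, ∀ _h1 : 1 ≤ i, ∀ _h2 : i ≤ k - 2,
      (X (⟨i - 1, by omega⟩ : Fin k) + C (c i) * X (⟨k - 2, by omega⟩ : Fin k)
        + C (d i) * X (⟨k - 1, by omega⟩ : Fin k)) ∈ I := by
    intro i h1 h2
    rw [hI]
    exact Ideal.subset_span (Or.inl (Or.inl ⟨i, h1, h2, rfl⟩))
  have hquad : ((X (⟨k - 2, by omega⟩ : Fin k) - C ω * X (⟨k - 1, by omega⟩ : Fin k)) *
      (X (⟨k - 2, by omega⟩ : Fin k) - C ω⁻¹ * X (⟨k - 1, by omega⟩ : Fin k))) ∈ I := by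
    rw [hI]
    exact Ideal.subset_span (Or.inl (Or.inr rfl))
  have hpow : ((X (⟨k - 1, by omega⟩ : Fin k) : MvPolynomial (Fin k) K) ^ k - 1) ∈ I := by
    rw [hI]
    exact Ideal.subset_span (Or.inr rfl)
  -- the parameterization of the points
  set F : Bool × Fin k → (Fin k → K) := fun e =>
    dcPt k c d ((if e.1 then ω else ω⁻¹) * ω ^ ((e.2 : Fin k) : ℕ)) (ω ^ ((e.2 : Fin k) : ℕ))
    with hF
  -- all points of the form `dcPt _ _ (ε * v) v` with `ε ∈ {ω, ω⁻¹}`, `v ^ k = 1` kill I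
  have hvan : ∀ ε v : K, (ε = ω ∨ ε = ω⁻¹) → v ^ k = 1 →
      ∀ f ∈ I, MvPolynomial.eval (dcPt k c d (ε * v) v) f = 0 := by
    intro ε v hε hv f hf
    have hxA : dcPt k c d (ε * v) v (⟨k - 2, by omega⟩ : Fin k) = ε * v :=
      dcPt_A k c d _ _ _ rfl
    have hxB : dcPt k c d (ε * v) v (⟨k - 1, by omega⟩ : Fin k) = v :=
      dcPt_B k hk c d _ _ _ rfl
    have hker : I ≤ RingHom.ker (MvPolynomial.eval (dcPt k c d (ε * v) v)) := by
      rw [hI, Ideal.span_le]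
      rintro p ((⟨i, h1, h2, rfl⟩ | rfl) | rfl) <;> simp only [SetLike.mem_coe, RingHom.mem_ker]
      · have hxi : dcPt k c d (ε * v) v (⟨i - 1, by omega⟩ : Fin k)
            = -(c i * (ε * v) + d i * v) := by
          have h := dcPt_low' k c d (ε * v) v (i - 1) (by omega) (by omega)
          have e1 : i - 1 + 1 = i := by omega
          rw [e1] at h
          exact h
        simp only [map_add, map_mul, eval_C, eval_X, hxi, hxA, hxB]
        ring
      · simp only [map_mul, map_sub, eval_X, eval_C, hxA, hxB]
        rcases hε with rfl | rfl
        · apply mul_eq_zero_of_left; ring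
        · apply mul_eq_zero_of_right; ring
      · simp only [map_sub, map_pow, map_one, eval_X, hxB, hv, sub_self]
    exact RingHom.mem_ker.mp (hker hf)
  have hvanF : ∀ e : Bool × Fin k, ∀ f ∈ I, MvPolynomial.eval (F e) f = 0 := by
    intro e
    refine hvan (if e.1 then ω else ω⁻¹) (ω ^ ((e.2 : Fin k) : ℕ)) ?_ ?_
    · cases e.1 <;> simp
    · rw [← pow_mul, mul_comm, pow_mul, hω.pow_eq_one, one_pow]
  -- normal form machinery
  set av : Polynomial K →ₐ[K] MvPolynomial (Fin k) K :=
    Polynomial.aeval (X (⟨k - 1, by omega⟩ : Fin k)) with hav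
  set N : Polynomial K → Polynomial K → MvPolynomial (Fin k) K := fun p q =>
    av p + X (⟨k - 2, by omega⟩ : Fin k) * av q with hN
  have havX : av Polynomial.X = X (⟨k - 1, by omega⟩ : Fin k) := Polynomial.aeval_X _
  have havC : ∀ r : K, av (Polynomial.C r) = C r := fun r => Polynomial.aeval_C _ r
  have hNmul : ∀ p1 q1 p2 q2 : Polynomial K,
      N p1 q1 * N p2 q2 - N (p1 * p2 - Polynomial.X ^ 2 * (q1 * q2))
        (p1 * q2 + p2 * q1 + (Polynomial.C ω + Polynomial.C ω⁻¹) * Polynomial.X * (q1 * q2)) ∈ I := by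
    intro p1 q1 p2 q2
    have hC1 : (C ω : MvPolynomial (Fin k) K) * C ω⁻¹ = 1 := by
      rw [← C_mul, hωinv, C_1]
    have hid : N p1 q1 * N p2 q2 - N (p1 * p2 - Polynomial.X ^ 2 * (q1 * q2))
        (p1 * q2 + p2 * q1 + (Polynomial.C ω + Polynomial.C ω⁻¹) * Polynomial.X * (q1 * q2))
        = (av q1 * av q2) *
          ((X (⟨k - 2, by omega⟩ : Fin k) - C ω * X (⟨k - 1, by omega⟩ : Fin k)) *
           (X (⟨k - 2, by omega⟩ : Fin k) - C ω⁻¹ * X (⟨k - 1, by omega⟩ : Fin k))) := by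
      simp only [hN, map_sub, map_add, map_mul, map_pow, havX, havC]
      linear_combination (-(av q1 * av q2) * X (⟨k - 1, by omega⟩ : Fin k) ^ 2) * hC1
    rw [hid]
    exact Ideal.mul_mem_left _ _ hquad
  have hNX : ∀ j : Fin k, ∃ p q : Polynomial K, X j - N p q ∈ I := by
    intro j
    by_cases h1 : (j : ℕ) < k - 2
    · refine ⟨Polynomial.C (-(d ((j : ℕ) + 1))) * Polynomial.X,
        Polynomial.C (-(c ((j : ℕ) + 1))), ?_⟩
      have hmem := hlin ((j : ℕ) + 1) (by omega) (by omega)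
      have hj' : (⟨(j : ℕ) + 1 - 1, by omega⟩ : Fin k) = j := by
        apply Fin.ext; simp
      rw [hj'] at hmem
      have heq : X j - N (Polynomial.C (-(d ((j : ℕ) + 1))) * Polynomial.X)
          (Polynomial.C (-(c ((j : ℕ) + 1))))
          = X j + C (c ((j : ℕ) + 1)) * X (⟨k - 2, by omega⟩ : Fin k)
            + C (d ((j : ℕ) + 1)) * X (⟨k - 1, by omega⟩ : Fin k) := by
        simp only [hN, map_mul, havX, havC, map_neg]
        ring
      rw [heq]
      exact hmem
    · by_cases h2 : (j : ℕ) = k - 2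
      · refine ⟨0, 1, ?_⟩
        have hj' : (⟨k - 2, by omega⟩ : Fin k) = j := by apply Fin.ext; simp [h2.symm]
        have heq : X j - N 0 1 = 0 := by
          simp only [hN, map_zero, map_one, zero_add, mul_one, hj', sub_self]
        rw [heq]
        exact I.zero_mem
      · refine ⟨Polynomial.X, 0, ?_⟩
        have hj' : (⟨k - 1, by omega⟩ : Fin k) = j := by
          apply Fin.ext
          have := j.isLt
          simp only [Fin.val_mk]
          omega
        have heq : X j - N Polynomial.X 0 = 0 := by
          simp only [hN, map_zero, mul_zero, add_zero, havX, hj', sub_self]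
        rw [heq]
        exact I.zero_mem
  have hNF : ∀ f : MvPolynomial (Fin k) K, ∃ p q : Polynomial K, f - N p q ∈ I := by
    intro f
    induction f using MvPolynomial.induction_on with
    | C r =>
        refine ⟨Polynomial.C r, 0, ?_⟩
        have heq : C r - N (Polynomial.C r) 0 = 0 := by
          simp only [hN, map_zero, mul_zero, add_zero, havC, sub_self]
        rw [heq]; exact I.zero_mem
    | add f g hf hg =>
        obtain ⟨p1, q1, h1⟩ := hf
        obtain ⟨p2, q2, h2⟩ := hg
        refine ⟨p1 + p2, q1 + q2, ?_⟩
        have heq : f + g - N (p1 + p2) (q1 + q2) = (f - N p1 q1) + (g - N p2 q2) := by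
          simp only [hN, map_add]; ring
        rw [heq]; exact I.add_mem h1 h2
    | mul_X f j hf =>
        obtain ⟨p1, q1, h1⟩ := hf
        obtain ⟨xp, xq, hx⟩ := hNX j
        refine ⟨p1 * xp - Polynomial.X ^ 2 * (q1 * xq),
          p1 * xq + xp * q1 + (Polynomial.C ω + Polynomial.C ω⁻¹) * Polynomial.X * (q1 * xq), ?_⟩
        have hsplit : f * X j - N (p1 * xp - Polynomial.X ^ 2 * (q1 * xq))
            (p1 * xq + xp * q1 + (Polynomial.C ω + Polynomial.C ω⁻¹) * Polynomial.X * (q1 * xq))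
            = (f - N p1 q1) * X j + N p1 q1 * (X j - N xp xq)
              + (N p1 q1 * N xp xq - N (p1 * xp - Polynomial.X ^ 2 * (q1 * xq))
                (p1 * xq + xp * q1
                  + (Polynomial.C ω + Polynomial.C ω⁻¹) * Polynomial.X * (q1 * xq))) := by
          ring
        rw [hsplit]
        exact I.add_mem (I.add_mem (I.mul_mem_right _ h1) (I.mul_mem_left _ hx))
          (hNmul p1 q1 xp xq)
  -- evaluation of the normal form
  have heval : ∀ (x : Fin k → K) (r : Polynomial K),
      MvPolynomial.eval x (av r) = Polynomial.eval (x (⟨k - 1, by omega⟩ : Fin k)) r := by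
    intro x r
    induction r using Polynomial.induction_on' with
    | add f g hf hg => simp only [map_add, hf, hg, Polynomial.eval_add]
    | monomial n a =>
        simp only [hav, Polynomial.aeval_monomial, algebraMap_eq, map_mul, map_pow, eval_C,
          eval_X, Polynomial.eval_monomial]
  -- the main lemma: vanishing at all points implies membership
  have hmain : ∀ f : MvPolynomial (Fin k) K,
      (∀ e : Bool × Fin k, MvPolynomial.eval (F e) f = 0) → f ∈ I := by
    intro f hf
    obtain ⟨p, q, hpq⟩ := hNF f
    set m : Polynomial K := Polynomial.X ^ k - Polynomial.C 1 with hm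
    have hmonic : m.Monic := Polynomial.monic_X_pow_sub_C 1 hk0
    have havm : av m ∈ I := by
      have heq : av m = X (⟨k - 1, by omega⟩ : Fin k) ^ k - 1 := by
        simp only [hm, map_sub, map_pow, havX, havC, C_1]
      rw [heq]; exact hpow
    have hred : ∀ r : Polynomial K, av r - av (r %ₘ m) ∈ I := by
      intro r
      have heq : av r - av (r %ₘ m) = av m * av (r /ₘ m) := by
        conv_lhs => rw [Polynomial.modByMonic_eq_sub_mul_div r m]
        rw [map_sub, map_mul]; ring
      rw [heq]
      exact I.mul_mem_right _ havm
    have hpq' : f - N (p %ₘ m) (q %ₘ m) ∈ I := by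
      have heq : f - N (p %ₘ m) (q %ₘ m) = (f - N p q) + (av p - av (p %ₘ m))
          + X (⟨k - 2, by omega⟩ : Fin k) * (av q - av (q %ₘ m)) := by
        simp only [hN]; ring
      rw [heq]
      exact I.add_mem (I.add_mem hpq (hred p)) (I.mul_mem_left _ (hred q))
    -- evaluate the normal form at the points
    have hevalN : ∀ e : Bool × Fin k,
        Polynomial.eval (ω ^ ((e.2 : Fin k) : ℕ)) (p %ₘ m)
          + (if e.1 then ω else ω⁻¹) * ω ^ ((e.2 : Fin k) : ℕ)
            * Polynomial.eval (ω ^ ((e.2 : Fin k) : ℕ)) (q %ₘ m) = 0 := by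
      intro e
      have h1 : MvPolynomial.eval (F e) (f - N (p %ₘ m) (q %ₘ m)) = 0 := hvanF e _ hpq'
      rw [map_sub, hf e, zero_sub, neg_eq_zero] at h1
      have hFB : F e (⟨k - 1, by omega⟩ : Fin k) = ω ^ ((e.2 : Fin k) : ℕ) :=
        dcPt_B k hk c d _ _ _ rfl
      have hFA : F e (⟨k - 2, by omega⟩ : Fin k)
          = (if e.1 then ω else ω⁻¹) * ω ^ ((e.2 : Fin k) : ℕ) := dcPt_A k c d _ _ _ rfl
      rw [hN] at h1
      simp only [map_add, map_mul, eval_X, heval, hFA, hFB] at h1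
      exact h1
    have hroots : ∀ j : Fin k, Polynomial.eval (ω ^ (j : ℕ)) (q %ₘ m) = 0
        ∧ Polynomial.eval (ω ^ (j : ℕ)) (p %ₘ m) = 0 := by
      intro j
      have h1 := hevalN (true, j)
      have h2 := hevalN (false, j)
      rw [if_pos rfl] at h1
      rw [if_neg Bool.false_ne_true] at h2
      have hvne : ω ^ (j : ℕ) ≠ 0 := pow_ne_zero _ hω0
      have hq : Polynomial.eval (ω ^ (j : ℕ)) (q %ₘ m) = 0 := by
        have hsub : (ω - ω⁻¹) * ω ^ (j : ℕ) * Polynomial.eval (ω ^ (j : ℕ)) (q %ₘ m) = 0 := by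
          linear_combination h1 - h2
        rcases mul_eq_zero.mp hsub with h | h
        · rcases mul_eq_zero.mp h with h' | h'
          · exact absurd (sub_eq_zero.mp h') hωne
          · exact absurd h' hvne
        · exact h
      refine ⟨hq, ?_⟩
      rw [hq, mul_zero, add_zero] at h1
      exact h1
    have hdegm : m.degree = (k : ℕ) := Polynomial.degree_X_pow_sub_C (by omega) 1
    have hdeg : ∀ r : Polynomial K, (r %ₘ m).natDegree < k := by
      intro r
      have hlt : (r %ₘ m).degree < m.degree := Polynomial.degree_modByMonic_lt r hmonic
      rw [hdegm] at hlt
      by_cases h0 : r %ₘ m = 0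
      · rw [h0]; simp only [Polynomial.natDegree_zero]; omega
      · exact (Polynomial.natDegree_lt_iff_degree_lt h0).mpr hlt
    have hinj : Function.Injective (fun j : Fin k => ω ^ (j : ℕ)) := by
      intro i j h
      exact Fin.ext (hω.pow_inj i.isLt j.isLt h)
    have hq0 : q %ₘ m = 0 := by
      apply Polynomial.eq_zero_of_natDegree_lt_card_of_eval_eq_zero _ hinj
        (fun j => (hroots j).1)
      simpa using hdeg q
    have hp0 : p %ₘ m = 0 := by
      apply Polynomial.eq_zero_of_natDegree_lt_card_of_eval_eq_zero _ hinj
        (fun j => (hroots j).2)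
      simpa using hdeg p
    have heq : f - N (p %ₘ m) (q %ₘ m) = f := by
      rw [hp0, hq0]
      simp only [hN, map_zero, mul_zero, add_zero, sub_zero]
    rwa [heq] at hpq'
  constructor
  · -- radicality
    intro f hf
    obtain ⟨n, hn⟩ := hf
    rcases Nat.eq_zero_or_pos n with rfl | hn0
    · rw [pow_zero] at hn
      have hT : I = ⊤ := (Ideal.eq_top_iff_one I).mpr hn
      rw [hT]; exact Submodule.mem_top
    · apply hmain
      intro e
      have h1 : MvPolynomial.eval (F e) (f ^ n) = 0 := hvanF e _ hn
      rw [map_pow] at h1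
      exact pow_eq_zero_iff (by omega) |>.mp h1
  · -- cardinality
    have hZeq : {x : Fin k → K | ∀ f ∈ I, MvPolynomial.eval x f = 0} = Set.range F := by
      apply Set.Subset.antisymm
      · intro x hx
        have h1 : x (⟨k - 1, by omega⟩ : Fin k) ^ k = 1 := by
          have h := hx _ hpow
          rw [map_sub, map_pow, map_one, eval_X, sub_eq_zero] at h
          exact h
        obtain ⟨j, hj, hjv⟩ := hω.eq_pow_of_pow_eq_one h1
        have h2 := hx _ hquad
        rw [map_mul] at h2
        obtain ⟨b, hb⟩ : ∃ b : Bool, x (⟨k - 2, by omega⟩ : Fin k)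
            = (if b then ω else ω⁻¹) * x (⟨k - 1, by omega⟩ : Fin k) := by
          rcases mul_eq_zero.mp h2 with h | h
          · refine ⟨true, ?_⟩
            rw [map_sub, map_mul, eval_X, eval_X, eval_C, sub_eq_zero] at h
            simpa using h
          · refine ⟨false, ?_⟩
            rw [map_sub, map_mul, eval_X, eval_X, eval_C, sub_eq_zero] at h
            simpa using h
        refine ⟨(b, ⟨j, hj⟩), ?_⟩
        show dcPt k c d ((if b then ω else ω⁻¹) * ω ^ j) (ω ^ j) = x
        funext mm
        by_cases hmm : (mm : ℕ) < k - 2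
        · rw [dcPt_low k c d _ _ _ hmm]
          have hg := hx _ (hlin ((mm : ℕ) + 1) (by omega) (by omega))
          have hm' : (⟨(mm : ℕ) + 1 - 1, by omega⟩ : Fin k) = mm := by apply Fin.ext; simp
          rw [hm'] at hg
          simp only [map_add, map_mul, eval_C, eval_X] at hg
          have hxmm : x mm = -(c ((mm : ℕ) + 1) * x (⟨k - 2, by omega⟩ : Fin k)
              + d ((mm : ℕ) + 1) * x (⟨k - 1, by omega⟩ : Fin k)) := by
            linear_combination hg
          rw [hxmm, hb, hjv]
        · by_cases hmm2 : (mm : ℕ) = k - 2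
          · rw [dcPt_A k c d _ _ _ hmm2]
            have hmmA : mm = (⟨k - 2, by omega⟩ : Fin k) := Fin.ext hmm2
            rw [hmmA, hb, hjv]
          · have hmm3 : (mm : ℕ) = k - 1 := by have := mm.isLt; omega
            rw [dcPt_B k hk c d _ _ _ hmm3]
            have hmmB : mm = (⟨k - 1, by omega⟩ : Fin k) := Fin.ext hmm3
            rw [hmmB, hjv]
      · rintro _ ⟨e, rfl⟩
        intro f hf
        exact hvanF e f hf
    rw [hZeq]
    have hFinj : Function.Injective F := by
      intro e1 e2 h
      have hB1 := congrFun h (⟨k - 1, by omega⟩ : Fin k)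
      rw [show F e1 (⟨k - 1, by omega⟩ : Fin k) = ω ^ ((e1.2 : Fin k) : ℕ) from
          dcPt_B k hk c d _ _ _ rfl,
        show F e2 (⟨k - 1, by omega⟩ : Fin k) = ω ^ ((e2.2 : Fin k) : ℕ) from
          dcPt_B k hk c d _ _ _ rfl] at hB1
      have h2 : e1.2 = e2.2 := Fin.ext (hω.pow_inj e1.2.isLt e2.2.isLt hB1)
      have hA1 := congrFun h (⟨k - 2, by omega⟩ : Fin k)
      rw [show F e1 (⟨k - 2, by omega⟩ : Fin k)
            = (if e1.1 then ω else ω⁻¹) * ω ^ ((e1.2 : Fin k) : ℕ) from dcPt_A k c d _ _ _ rfl,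
        show F e2 (⟨k - 2, by omega⟩ : Fin k)
            = (if e2.1 then ω else ω⁻¹) * ω ^ ((e2.2 : Fin k) : ℕ) from dcPt_A k c d _ _ _ rfl,
        ← h2] at hA1
      have hv : ω ^ ((e1.2 : Fin k) : ℕ) ≠ 0 := pow_ne_zero _ hω0
      have hε : (if e1.1 then ω else ω⁻¹) = (if e2.1 then ω else ω⁻¹) :=
        mul_right_cancel₀ hv hA1
      have h1 : e1.1 = e2.1 := by
        cases he1 : e1.1 <;> cases he2 : e2.1
        · rfl
        · rw [he1, he2, if_neg Bool.false_ne_true, if_pos rfl] at hε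
          exact absurd hε.symm hωne
        · rw [he1, he2, if_pos rfl, if_neg Bool.false_ne_true] at hε
          exact absurd hε hωne
        · rfl
      exact Prod.ext h1 h2
    rw [← Set.image_univ, Set.ncard_image_of_injective _ hFinj, Set.ncard_univ]
    simp only [Nat.card_eq_fintype_card, Fintype.card_prod, Fintype.card_bool, Fintype.card_fin]

end Aux

theorem stmt_7 (k : ℕ) (hk : 2 < k) (K : Type*) [Field K] [IsAlgClosed K]
    (hchar : (k : K) ≠ 0) (ω : K) (hω : IsPrimitiveRoot ω k)
    (I : Ideal (MvPolynomial (Fin k) K))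
    (hI : I = Ideal.span (
      {p | ∃ (i : ℕ) (_ : 1 ≤ i) (_ : i ≤ k - 2),
        p = X (⟨i - 1, by omega⟩ : Fin k)
          + C ((ω ^ ((2 : ℤ) + (i : ℤ)) - ω ^ ((2 : ℤ) - (i : ℤ))) / (ω ^ 3 - ω)) *
              X (⟨k - 2, by omega⟩ : Fin k)
          + C ((ω ^ ((1 : ℤ) - (i : ℤ)) - ω ^ ((3 : ℤ) + (i : ℤ))) / (ω ^ 3 - ω)) *
              X (⟨k - 1, by omega⟩ : Fin k)} ∪
      {(X (⟨k - 2, by omega⟩ : Fin k) - C ω * X (⟨k - 1, by omega⟩ : Fin k)) *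
         (X (⟨k - 2, by omega⟩ : Fin k) - C ω⁻¹ * X (⟨k - 1, by omega⟩ : Fin k))} ∪
      {X (⟨k - 1, by omega⟩ : Fin k) ^ k - 1})) :
    I.IsRadical ∧
      {x : Fin k → K | ∀ f ∈ I, MvPolynomial.eval x f = 0}.ncard = 2 * k := by
  exact key k hk K ω hω
    (fun i => (ω ^ ((2 : ℤ) + (i : ℤ)) - ω ^ ((2 : ℤ) - (i : ℤ))) / (ω ^ 3 - ω))
    (fun i => (ω ^ ((1 : ℤ) - (i : ℤ)) - ω ^ ((3 : ℤ) + (i : ℤ))) / (ω ^ 3 - ω)) I hI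
end

section
/- Let G = (V,A) be a connected simple directed graph on vertices V = {1,…,n}, K an algebraically closed field whose characteristic does not divide n, and ω ∈ K a primitive n-th root of unity. Let H_G ⊆ K[x_1,…,x_n] be the Hamiltonian ideal generated by {x_i^n − 1 : i ∈ V} ∪ {∏_{j∈δ⁺(i)}(ω x_i − x_j) : i ∈ V}, and for each Hamiltonian cycle permutation σ of G let I_σ ⊆ K[x_1,…,x_n] be the cycle ideal generated by {x_v^n − 1 : v ∈ V} ∪ {x_{σ(v)} − ω x_v : v ∈ V}. Then the variety of H_G is the union of the varieties of the cycle ideals: {x ∈ K^n : f(x) = 0 ∀ f ∈ H_G} = ⋃_σ {x ∈ K^n : f(x) = 0 ∀ f ∈ I_σ}, where the union runs over all Hamiltonian cycle permutations σ of G. -/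
open MvPolynomial

/-- The Hamiltonian ideal of a directed graph on `Fin n` with arc relation `A`. -/
noncomputable def hamIdeal (n : ℕ) (A : Fin n → Fin n → Prop) [DecidableRel A]
    {K : Type*} [Field K] (ω : K) : Ideal (MvPolynomial (Fin n) K) :=
  Ideal.span ({p | ∃ i : Fin n, p = X i ^ n - 1} ∪
    {p | ∃ i : Fin n,
      p = ∏ j ∈ Finset.univ.filter (fun j => A i j), (C ω * X i - X j)})

/-- The cycle ideal of the Hamiltonian cycle given by the permutation `σ`. -/
noncomputable def cycleIdeal (n : ℕ) (σ : Equiv.Perm (Fin n))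
    {K : Type*} [Field K] (ω : K) : Ideal (MvPolynomial (Fin n) K) :=
  Ideal.span ({p | ∃ v : Fin n, p = X v ^ n - 1} ∪
    {p | ∃ v : Fin n, p = X (σ v) - C ω * X v})

/-- A Hamiltonian cycle permutation: a single `n`-cycle whose successor arcs
all lie in the digraph. -/
def IsHamCyclePerm (n : ℕ) (A : Fin n → Fin n → Prop) (σ : Equiv.Perm (Fin n)) : Prop :=
  σ.IsCycle ∧ σ.support = Finset.univ ∧ ∀ v, A v (σ v)

set_option maxHeartbeats 1000000 in
theorem stmt_9 (n : ℕ) (A : Fin n → Fin n → Prop) [DecidableRel A]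
    (hirr : ∀ i, ¬ A i i) (hconn : (SimpleGraph.fromRel A).Connected)
    (K : Type*) [Field K] [IsAlgClosed K] (hchar : (n : K) ≠ 0)
    (ω : K) (hω : IsPrimitiveRoot ω n) :
    {x : Fin n → K | ∀ f ∈ hamIdeal n A ω, MvPolynomial.eval x f = 0} =
      ⋃ (σ : Equiv.Perm (Fin n)) (_ : IsHamCyclePerm n A σ),
        {x : Fin n → K | ∀ f ∈ cycleIdeal n σ ω, MvPolynomial.eval x f = 0} := by
  haveI : NeZero n := ⟨fun h => hchar (by simp [h])⟩
  have hn : 0 < n := Nat.pos_of_ne_zero (NeZero.ne n)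
  -- powers of ω are determined by exponent mod n
  have key : ∀ s t : ℕ, (s : ZMod n) = (t : ZMod n) → ω ^ s = ω ^ t := by
    intro s t h
    have hmod : s % n = t % n := (ZMod.natCast_eq_natCast_iff s t n).mp h
    calc ω ^ s = ω ^ (s % n + n * (s / n)) := by rw [Nat.mod_add_div]
      _ = ω ^ (s % n) * (ω ^ n) ^ (s / n) := by rw [pow_add, pow_mul]
      _ = ω ^ (s % n) := by rw [hω.pow_eq_one, one_pow, mul_one]
      _ = ω ^ (t % n) := by rw [hmod]
      _ = ω ^ (t % n) * (ω ^ n) ^ (t / n) := by rw [hω.pow_eq_one, one_pow, mul_one]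
      _ = ω ^ (t % n + n * (t / n)) := by rw [pow_add, pow_mul]
      _ = ω ^ t := by rw [Nat.mod_add_div]
  have hGinj : ∀ a b : ZMod n, ω ^ a.val = ω ^ b.val → a = b := by
    intro a b hab
    have := hω.pow_inj (ZMod.val_lt a) (ZMod.val_lt b) hab
    calc a = ((a.val : ℕ) : ZMod n) := (ZMod.natCast_rightInverse a).symm
      _ = ((b.val : ℕ) : ZMod n) := by rw [this]
      _ = b := ZMod.natCast_rightInverse b
  have hGsucc : ∀ a : ZMod n, ω ^ (a + 1).val = ω * ω ^ a.val := by
    intro a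
    have h1 : ω ^ (a + 1).val = ω ^ (a.val + 1) := by
      apply key
      push_cast
      rw [ZMod.natCast_rightInverse a, ZMod.natCast_rightInverse (a + 1)]
    rw [h1, pow_succ, mul_comm]
  ext x
  simp only [Set.mem_setOf_eq, Set.mem_iUnion]
  constructor
  · intro hx
    have h1 : ∀ i : Fin n, x i ^ n = 1 := by
      intro i
      have := hx (X i ^ n - 1) (Ideal.subset_span (Or.inl ⟨i, rfl⟩))
      simp only [map_sub, map_pow, eval_X, map_one] at this
      exact sub_eq_zero.mp this
    have h2 : ∀ i : Fin n, ∃ j, A i j ∧ x j = ω * x i := by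
      intro i
      have h0 := hx _ (Ideal.subset_span (Or.inr ⟨i, rfl⟩))
      rw [map_prod] at h0
      obtain ⟨j, hj, hj0⟩ := Finset.prod_eq_zero_iff.mp h0
      refine ⟨j, (Finset.mem_filter.mp hj).2, ?_⟩
      simp only [map_sub, map_mul, eval_C, eval_X] at hj0
      exact (sub_eq_zero.mp hj0).symm
    -- level map
    choose L hLlt hLx using fun i => hω.eq_pow_of_pow_eq_one (h1 i)
    set ℓ : Fin n → ZMod n := fun i => (L i : ZMod n) with hℓdef
    have hℓval : ∀ i, (ℓ i).val = L i := fun i => ZMod.val_cast_of_lt (hLlt i)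
    have hxω : ∀ i, x i = ω ^ (ℓ i).val := by
      intro i; rw [hℓval i, hLx i]
    have hstep : ∀ i j : Fin n, x j = ω * x i → ℓ j = ℓ i + 1 := by
      intro i j hij
      apply hGinj
      rw [hGsucc (ℓ i), ← hxω i, ← hxω j, hij]
    -- ℓ is surjective, hence bijective
    have hplus : ∀ (m : ℕ) (i : Fin n), ∃ j, ℓ j = ℓ i + m := by
      intro m
      induction m with
      | zero => intro i; exact ⟨i, by push_cast; ring⟩
      | succ m ih =>
        intro i
        obtain ⟨j, hj⟩ := ih i
        obtain ⟨j', _, hj'⟩ := h2 j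
        exact ⟨j', by rw [hstep j j' hj', hj]; push_cast; ring⟩
    have hsurj : Function.Surjective ℓ := by
      intro b
      obtain ⟨j, hj⟩ := hplus (b - ℓ ⟨0, hn⟩).val ⟨0, hn⟩
      refine ⟨j, ?_⟩
      rw [hj, ZMod.natCast_rightInverse (b - ℓ ⟨0, hn⟩)]
      ring
    have hbij : Function.Bijective ℓ :=
      (Fintype.bijective_iff_surjective_and_card ℓ).mpr ⟨hsurj, by simp [ZMod.card]⟩
    set e : Fin n ≃ ZMod n := Equiv.ofBijective ℓ hbij with hedef
    have he : ∀ i, e i = ℓ i := fun i => rfl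
    set σ : Equiv.Perm (Fin n) :=
      e.trans ((Equiv.addRight (1 : ZMod n)).trans e.symm) with hσdef
    have hℓσ : ∀ v, ℓ (σ v) = ℓ v + 1 := by
      intro v
      have : e (σ v) = e v + 1 := by
        simp [hσdef, Equiv.trans_apply, Equiv.addRight]
      rwa [he, he] at this
    have hxσ : ∀ v, x (σ v) = ω * x v := by
      intro v
      rw [hxω (σ v), hxω v, hℓσ v, hGsucc]
    have hA : ∀ v, A v (σ v) := by
      intro v
      obtain ⟨j, hAj, hxj⟩ := h2 v
      have : ℓ j = ℓ (σ v) := by rw [hstep v j hxj, hℓσ v]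
      rwa [hbij.1 this] at hAj
    have hn1 : n ≠ 1 := by
      rintro rfl
      obtain ⟨j, hAj, -⟩ := h2 ⟨0, hn⟩
      obtain rfl : j = ⟨0, hn⟩ := Subsingleton.elim _ _
      exact hirr _ hAj
    haveI : Fact (1 < n) := ⟨by omega⟩
    have hne : ∀ v, σ v ≠ v := by
      intro v hv
      have h10 : (1 : ZMod n) = 0 := by
        have := hℓσ v
        rw [hv] at this
        exact add_left_cancel (a := ℓ v) (by rw [add_zero]; exact this.symm)
      exact one_ne_zero h10
    have hpow : ∀ (m : ℕ) (v : Fin n), (σ ^ m) v = e.symm (ℓ v + m) := by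
      intro m
      induction m with
      | zero =>
        intro v
        simp only [pow_zero, Equiv.Perm.coe_one, id_eq, Nat.cast_zero, add_zero]
        rw [← he, Equiv.symm_apply_apply]
      | succ m ih =>
        intro v
        rw [pow_succ, Equiv.Perm.mul_apply, ih (σ v), hℓσ v]
        push_cast
        ring_nf
    have hsc : ∀ v w : Fin n, σ.SameCycle v w := by
      intro v w
      refine ⟨((ℓ w - ℓ v).val : ℕ), ?_⟩
      rw [zpow_natCast, hpow _ v, ZMod.natCast_rightInverse (ℓ w - ℓ v)]
      have : ℓ v + (ℓ w - ℓ v) = ℓ w := by ring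
      rw [this, ← he, Equiv.symm_apply_apply]
    have hHam : IsHamCyclePerm n A σ := by
      refine ⟨⟨⟨0, hn⟩, hne _, fun w _ => hsc _ w⟩, ?_, hA⟩
      exact Finset.eq_univ_iff_forall.mpr fun v => Equiv.Perm.mem_support.mpr (hne v)
    refine ⟨σ, hHam, ?_⟩
    intro f hf
    have hle : cycleIdeal n σ ω ≤ RingHom.ker (eval x) := by
      rw [cycleIdeal, Ideal.span_le]
      rintro p (⟨v, rfl⟩ | ⟨v, rfl⟩) <;> rw [SetLike.mem_coe, RingHom.mem_ker]
      · simp [h1 v]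
      · simp [hxσ v]
    exact hle hf
  · rintro ⟨σ, hσ, hx⟩
    have h1 : ∀ v : Fin n, x v ^ n = 1 := by
      intro v
      have := hx (X v ^ n - 1) (Ideal.subset_span (Or.inl ⟨v, rfl⟩))
      simp only [map_sub, map_pow, eval_X, map_one] at this
      exact sub_eq_zero.mp this
    have h2 : ∀ v : Fin n, x (σ v) = ω * x v := by
      intro v
      have := hx (X (σ v) - C ω * X v) (Ideal.subset_span (Or.inr ⟨v, rfl⟩))
      simp only [map_sub, map_mul, eval_C, eval_X] at this
      exact sub_eq_zero.mp this
    intro f hf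
    have hle : hamIdeal n A ω ≤ RingHom.ker (eval x) := by
      rw [hamIdeal, Ideal.span_le]
      rintro p (⟨i, rfl⟩ | ⟨i, rfl⟩) <;> rw [SetLike.mem_coe, RingHom.mem_ker]
      · simp [h1 i]
      · rw [map_prod]
        apply Finset.prod_eq_zero (i := σ i)
        · exact Finset.mem_filter.mpr ⟨Finset.mem_univ _, hσ.2.2 i⟩
        · simp [h2 i]
    exact hle hf
end

section
/- Let G = (V,A) be a connected simple directed graph on vertices V = {1,…,n}, K an algebraically closed field whose characteristic does not divide n, and ω ∈ K a primitive n-th root of unity. Let H_G ⊆ K[x_1,…,x_n] be the Hamiltonian ideal generated by {x_i^n − 1 : i ∈ V} ∪ {∏_{j∈δ⁺(i)}(ω x_i − x_j) : i ∈ V}, and for each Hamiltonian cycle permutation σ of G let I_σ be the cycle ideal generated by {x_v^n − 1 : v ∈ V} ∪ {x_{σ(v)} − ω x_v : v ∈ V}. Then H_G = ⋂_σ I_σ, where the intersection runs over all Hamiltonian cycle permutations σ of G (an empty intersection being the whole ring). -/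
open MvPolynomial

noncomputable section
namespace Ham10

variable {n : ℕ} {K : Type*} [Field K] {ω : K}

lemma injOn_pow (hω : IsPrimitiveRoot ω n) :
    Set.InjOn (fun j : Fin n => ω ^ (j : ℕ)) ↑(Finset.univ : Finset (Fin n)) := by
  intro a _ b _ h
  exact Fin.ext (hω.pow_inj a.2 b.2 h)

lemma prod_X_sub_pow (hn : 0 < n) (hω : IsPrimitiveRoot ω n) :
    ∏ k : Fin n, (Polynomial.X - Polynomial.C (ω ^ (k : ℕ))) =
      Polynomial.X ^ n - 1 := by
  rw [Polynomial.X_pow_sub_one_eq_prod hn hω]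
  refine Finset.prod_nbij (fun k => ω ^ (k : ℕ)) (fun k _ => ?_) ?_ ?_ (fun _ _ => rfl)
  · exact (Polynomial.mem_nthRootsFinset hn 1).2 (by
      rw [← pow_mul, mul_comm, pow_mul, hω.pow_eq_one, one_pow])
  · intro a _ b _ h
    exact Fin.ext (hω.pow_inj a.2 b.2 h)
  · intro ζ hζ
    have : NeZero n := ⟨hn.ne'⟩
    obtain ⟨k, hk, rfl⟩ := hω.eq_pow_of_pow_eq_one ((Polynomial.mem_nthRootsFinset hn 1).1 hζ)
    exact ⟨⟨k, hk⟩, by simp, rfl⟩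

/-- univariate Lagrange basis at the powers of ω -/
def L (n : ℕ) (ω : K) (k : Fin n) : Polynomial K :=
  Lagrange.basis Finset.univ (fun j : Fin n => ω ^ (j : ℕ)) k

lemma sum_L (hn : 0 < n) (hω : IsPrimitiveRoot ω n) :
    ∑ k : Fin n, L n ω k = 1 :=
  Lagrange.sum_basis (injOn_pow hω) ⟨⟨0, hn⟩, Finset.mem_univ _⟩

lemma eval_L (hω : IsPrimitiveRoot ω n) (k j : Fin n) :
    Polynomial.eval (ω ^ (j : ℕ)) (L n ω k) = if k = j then 1 else 0 := by
  rcases eq_or_ne k j with rfl | h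
  · simpa [L] using Lagrange.eval_basis_self (injOn_pow hω) (Finset.mem_univ k)
  · simpa [h, L] using Lagrange.eval_basis_of_ne (v := fun j : Fin n => ω ^ (j : ℕ)) h
      (Finset.mem_univ j)

lemma X_sub_mul_L (hn : 0 < n) (hω : IsPrimitiveRoot ω n) (k : Fin n) :
    ∃ c : K, (Polynomial.X - Polynomial.C (ω ^ (k : ℕ))) * L n ω k =
      Polynomial.C c * (Polynomial.X ^ n - 1) := by
  classical
  refine ⟨∏ j ∈ Finset.univ.erase k, (ω ^ (k : ℕ) - ω ^ (j : ℕ))⁻¹, ?_⟩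
  rw [← prod_X_sub_pow hn hω, L, Lagrange.basis]
  unfold Lagrange.basisDivisor
  rw [Finset.prod_mul_distrib, ← map_prod (Polynomial.C (R := K))]
  rw [← Finset.mul_prod_erase Finset.univ _ (Finset.mem_univ k)]
  ring

/-- the base ideal generated by x_i^n - 1 -/
def T (n : ℕ) (K : Type*) [Field K] : Ideal (MvPolynomial (Fin n) K) :=
  Ideal.span {q | ∃ i : Fin n, q = X i ^ n - 1}

def E (n : ℕ) (ω : K) (i k : Fin n) : MvPolynomial (Fin n) K :=
  Polynomial.aeval (X i) (L n ω k)

def idem (n : ℕ) (ω : K) (p : Fin n → Fin n) : MvPolynomial (Fin n) K :=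
  ∏ i, E n ω i (p i)

/-- the evaluation point attached to `p` -/
def pt (ω : K) (p : Fin n → Fin n) : Fin n → K := fun i => ω ^ (p i : ℕ)

lemma eval_aeval (x : Fin n → K) (i : Fin n) (q : Polynomial K) :
    eval x (Polynomial.aeval (X i) q) = Polynomial.eval (x i) q := by
  have : (MvPolynomial.aeval x).comp (Polynomial.aeval (X i : MvPolynomial (Fin n) K))
      = Polynomial.aeval (x i) := by
    apply Polynomial.algHom_ext
    simp
  calc eval x (Polynomial.aeval (X i) q)
      = MvPolynomial.aeval x (Polynomial.aeval (X i) q) := rfl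
    _ = Polynomial.aeval (x i) q := by rw [← this]; rfl
    _ = Polynomial.eval (x i) q := by rw [← Polynomial.coe_aeval_eq_eval]

lemma sum_E (hn : 0 < n) (hω : IsPrimitiveRoot ω n) (i : Fin n) :
    ∑ k : Fin n, E n ω i k = 1 := by
  unfold E
  rw [← map_sum, sum_L hn hω, map_one]

lemma eval_E (hω : IsPrimitiveRoot ω n) (p : Fin n → Fin n) (i k : Fin n) :
    eval (pt ω p) (E n ω i k) = if k = p i then 1 else 0 := by
  rw [E, eval_aeval]
  exact eval_L hω k (p i)

lemma X_sub_mul_E_mem (hn : 0 < n) (hω : IsPrimitiveRoot ω n) (i k : Fin n) :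
    (X i - C (ω ^ (k : ℕ))) * E n ω i k ∈ T n K := by
  obtain ⟨c, hc⟩ := X_sub_mul_L hn hω (K := K) k
  have := congrArg (Polynomial.aeval (X i : MvPolynomial (Fin n) K)) hc
  simp only [map_mul, map_sub, map_pow, map_one, Polynomial.aeval_X, Polynomial.aeval_C,
    algebraMap_eq] at this
  rw [E, C_pow, this]
  exact Ideal.mul_mem_left _ _ (Ideal.subset_span ⟨i, rfl⟩)

lemma sum_idem (hn : 0 < n) (hω : IsPrimitiveRoot ω n) :
    ∑ p : Fin n → Fin n, idem n ω p = 1 := by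
  classical
  unfold idem
  have h1 : (1 : MvPolynomial (Fin n) K) = ∏ i : Fin n, ∑ k : Fin n, E n ω i k := by
    simp [sum_E hn hω]
  rw [h1, Finset.prod_univ_sum]
  rw [Fintype.piFinset_univ]

lemma eval_idem (hω : IsPrimitiveRoot ω n) (p q : Fin n → Fin n) :
    eval (pt ω q) (idem n ω p) = if p = q then 1 else 0 := by
  classical
  rw [idem, map_prod]
  rcases eq_or_ne p q with rfl | h
  · simp [eval_E hω]
  · obtain ⟨i, hi⟩ := Function.ne_iff.1 h
    rw [if_neg h]
    apply Finset.prod_eq_zero (Finset.mem_univ i)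
    rw [eval_E hω, if_neg hi]

lemma X_sub_mul_idem_mem (hn : 0 < n) (hω : IsPrimitiveRoot ω n) (p : Fin n → Fin n)
    (i : Fin n) : (X i - C (ω ^ (p i : ℕ))) * idem n ω p ∈ T n K := by
  classical
  rw [idem, ← Finset.mul_prod_erase Finset.univ _ (Finset.mem_univ i), ← mul_assoc]
  exact Ideal.mul_mem_right _ _ (X_sub_mul_E_mem hn hω i (p i))

/-- key decomposition: every polynomial is congruent mod T to its interpolation -/
lemma decomp (hn : 0 < n) (hω : IsPrimitiveRoot ω n) (f : MvPolynomial (Fin n) K) :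
    f - ∑ p : Fin n → Fin n, C (eval (pt ω p) f) * idem n ω p ∈ T n K := by
  classical
  induction f using MvPolynomial.induction_on with
  | C a =>
      have : ∑ p : Fin n → Fin n, C (eval (pt ω p) (C a : MvPolynomial (Fin n) K)) * idem n ω p
          = C a := by
        simp only [eval_C, ← Finset.mul_sum, sum_idem hn hω, mul_one]
      rw [this, sub_self]
      exact Submodule.zero_mem _
  | add f g hf hg =>
      have : (f + g) - ∑ p : Fin n → Fin n, C (eval (pt ω p) (f + g)) * idem n ω p
          = (f - ∑ p : Fin n → Fin n, C (eval (pt ω p) f) * idem n ω p)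
            + (g - ∑ p : Fin n → Fin n, C (eval (pt ω p) g) * idem n ω p) := by
        simp only [map_add, add_mul, Finset.sum_add_distrib]
        ring
      rw [this]
      exact Ideal.add_mem _ hf hg
  | mul_X f i hf =>
      have key : (f * X i) - ∑ p : Fin n → Fin n, C (eval (pt ω p) (f * X i)) * idem n ω p
          = (f - ∑ p : Fin n → Fin n, C (eval (pt ω p) f) * idem n ω p) * X i
            + ∑ p : Fin n → Fin n,
                C (eval (pt ω p) f) * ((X i - C (ω ^ (p i : ℕ))) * idem n ω p) := by
        simp only [map_mul, eval_X]
        rw [sub_mul, Finset.sum_mul]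
        rw [Finset.sum_congr rfl (fun p _ => by ring :
          ∀ p ∈ Finset.univ, C (eval (pt ω p) f) * ((X i - C (ω ^ (p i : ℕ))) * idem n ω p)
            = C (eval (pt ω p) f) * idem n ω p * X i
              - C (eval (pt ω p) f) * C (ω ^ (p i : ℕ)) * idem n ω p)]
        rw [Finset.sum_sub_distrib]
        simp only [pt, ← C_mul]
        ring
      rw [key]
      exact Ideal.add_mem _ (Ideal.mul_mem_right _ _ hf)
        (Ideal.sum_mem _ fun p _ => Ideal.mul_mem_left _ _ (X_sub_mul_idem_mem hn hω p i))

lemma radical_le (hn : 0 < n) (hω : IsPrimitiveRoot ω n)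
    (J : Ideal (MvPolynomial (Fin n) K)) (hTJ : T n K ≤ J) :
    J.radical ≤ J := by
  classical
  intro f hf
  obtain ⟨m, hm⟩ := hf
  rcases Nat.eq_zero_or_pos m with rfl | hm0
  · rw [pow_zero] at hm
    exact (Ideal.eq_top_iff_one J).2 hm ▸ Submodule.mem_top
  set c : (Fin n → Fin n) → K := fun p => eval (pt ω p) f with hc
  set g : MvPolynomial (Fin n) K := ∑ p : Fin n → Fin n, C (c p / (c p) ^ m) * idem n ω p
    with hg
  have hevalg : ∀ p, eval (pt ω p) g = c p / (c p) ^ m := by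
    intro p
    rw [hg, map_sum]
    rw [Finset.sum_congr rfl (fun q _ => by
      rw [map_mul, eval_C, eval_idem hω] :
      ∀ q ∈ Finset.univ, eval (pt ω p) (C (c q / (c q) ^ m) * idem n ω q)
        = (c q / (c q) ^ m) * if q = p then 1 else 0)]
    simp
  have hevals : ∀ p, eval (pt ω p) (f ^ m * g) = c p := by
    intro p
    rw [map_mul, map_pow, hevalg p]
    have : (eval (pt ω p)) f = c p := rfl
    rw [this]
    rcases eq_or_ne (c p) 0 with h0 | h0
    · simp [h0, zero_pow hm0.ne']
    · field_simp
  have hS : (∑ p : Fin n → Fin n, C (eval (pt ω p) f) * idem n ω p)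
      = ∑ p : Fin n → Fin n, C (eval (pt ω p) (f ^ m * g)) * idem n ω p :=
    Finset.sum_congr rfl fun p _ => by rw [hevals p, hc]
  have key : f - f ^ m * g
      = (f - ∑ p : Fin n → Fin n, C (eval (pt ω p) f) * idem n ω p)
        - ((f ^ m * g) - ∑ p : Fin n → Fin n, C (eval (pt ω p) (f ^ m * g)) * idem n ω p) := by
    rw [← hS]; ring
  have hmem : f - f ^ m * g ∈ T n K := by
    rw [key]
    exact Ideal.sub_mem _ (decomp hn hω f) (decomp hn hω (f ^ m * g))
  have : f = (f - f ^ m * g) + f ^ m * g := by ring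
  rw [this]
  exact Ideal.add_mem _ (hTJ hmem) (Ideal.mul_mem_right _ _ hm)

lemma exists_ham (A : Fin n → Fin n → Prop) [DecidableRel A] (hirr : ∀ i, ¬ A i i)
    (hn : 0 < n) (hω : IsPrimitiveRoot ω n)
    (x : Fin n → K) (hx : x ∈ zeroLocus K (hamIdeal n A ω)) :
    ∃ σ : Equiv.Perm (Fin n), IsHamCyclePerm n A σ ∧ x ∈ zeroLocus K (cycleIdeal n σ ω) := by
  classical
  rw [mem_zeroLocus_iff] at hx
  simp only [aeval_eq_eval] at hx
  have hx1 : ∀ i, x i ^ n = 1 := by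
    intro i
    have := hx _ (Ideal.subset_span (Or.inl ⟨i, rfl⟩))
    simpa [sub_eq_zero] using this
  have xne : ∀ i, x i ≠ 0 := by
    intro i h
    have := hx1 i
    rw [h, zero_pow hn.ne'] at this
    exact zero_ne_one this
  have hωne : ω ≠ 0 := hω.ne_zero hn.ne'
  have hx2 : ∀ i, ∃ j, A i j ∧ x j = ω * x i := by
    intro i
    have h0 := hx _ (Ideal.subset_span (Or.inr ⟨i, rfl⟩))
    rw [map_prod] at h0
    obtain ⟨j, hj, hj0⟩ := Finset.prod_eq_zero_iff.1 h0
    refine ⟨j, (Finset.mem_filter.1 hj).2, ?_⟩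
    simpa [sub_eq_zero, eq_comm] using hj0
  set s : Fin n → Fin n := fun i => (hx2 i).choose with hs
  have hs1 : ∀ i, A i (s i) := fun i => (hx2 i).choose_spec.1
  have hs2 : ∀ i, x (s i) = ω * x i := fun i => (hx2 i).choose_spec.2
  have iter : ∀ (i : Fin n) (k : ℕ), x (s^[k] i) = ω ^ k * x i := by
    intro i k
    induction k with
    | zero => simp
    | succ k ih =>
        rw [Function.iterate_succ_apply', hs2, ih, pow_succ]
        ring
  have claim : ∀ (i : Fin n) (k l : ℕ), k < l → l ≤ n → s^[k] i = s^[l] i →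
      k = 0 ∧ l = n := by
    intro i k l hkl hln heq
    have h1 : ω ^ k * x i = ω ^ l * x i := by rw [← iter, ← iter, heq]
    have h2 : ω ^ k = ω ^ l := mul_right_cancel₀ (xne i) h1
    have h3 : ω ^ (l - k) = 1 := by
      have : ω ^ k * ω ^ (l - k) = ω ^ k * 1 := by
        rw [← pow_add, Nat.add_sub_cancel' hkl.le, ← h2, mul_one]
      exact mul_left_cancel₀ (pow_ne_zero _ hωne) this
    have h4 : n ∣ l - k := hω.dvd_of_pow_eq_one _ h3
    have h5 : l - k = n := le_antisymm (by omega) (Nat.le_of_dvd (by omega) h4)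
    omega
  have hsn : ∀ i, s^[n] i = i := by
    intro i
    obtain ⟨a, b, hab, heq⟩ := Fintype.exists_ne_map_eq_of_card_lt
      (fun k : Fin (n + 1) => s^[(k : ℕ)] i) (by simp)
    rcases lt_or_gt_of_ne (fun h : (a : ℕ) = (b : ℕ) => hab (Fin.ext h)) with h | h
    · obtain ⟨h0, hN⟩ := claim i a b h (Nat.lt_succ_iff.1 b.2) heq
      rw [h0, hN] at heq
      simpa using heq.symm
    · obtain ⟨h0, hN⟩ := claim i b a h (Nat.lt_succ_iff.1 a.2) heq.symm
      rw [h0, hN] at heq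
      simpa using heq
  have inj : Function.Injective s := by
    have hiter : ∀ a, s^[n] a = s^[n - 1] (s a) := by
      intro a
      rw [← Function.iterate_succ_apply, show (n - 1).succ = n by omega]
    intro a b h
    have ha := hsn a
    have hb := hsn b
    rw [hiter] at ha hb
    rw [← ha, ← hb, h]
  let σ : Equiv.Perm (Fin n) := Equiv.ofBijective s (Finite.injective_iff_bijective.1 inj)
  have hσ : ∀ v, σ v = s v := fun _ => rfl
  have hfix : ∀ v, σ v ≠ v := by
    intro v hv
    rw [hσ] at hv
    have : ω * x v = x v := by rw [← hs2, hv]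
    have hω1 : ω = 1 := by
      have := mul_right_cancel₀ (xne v) (this.trans (one_mul (x v)).symm)
      exact this
    have hn1 : n = 1 := Nat.dvd_one.1 (hω.dvd_of_pow_eq_one 1 (by rw [pow_one, hω1]))
    have := hs1 v
    rw [hv] at this
    exact hirr v this
  have hσpow : ∀ (k : ℕ) (v : Fin n), (σ ^ k) v = s^[k] v := by
    intro k v
    rw [← Equiv.Perm.iterate_eq_pow]
    clear * - hσ
    induction k with
    | zero => simp
    | succ k ih => rw [Function.iterate_succ_apply', Function.iterate_succ_apply', ih, hσ]
  refine ⟨σ, ⟨?_, ?_, fun v => hσ v ▸ hs1 v⟩, ?_⟩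
  · refine ⟨⟨0, hn⟩, hfix _, fun b _ => ?_⟩
    have orb : Function.Surjective (fun k : Fin n => s^[(k : ℕ)] ⟨0, hn⟩) := by
      apply Finite.injective_iff_surjective.1
      intro a b h
      by_contra hab
      rcases lt_or_gt_of_ne (fun h' : (a : ℕ) = (b : ℕ) => hab (Fin.ext h')) with hl | hl
      · exact absurd (claim _ _ _ hl (le_of_lt b.2) h).2 (by omega)
      · exact absurd (claim _ _ _ hl (le_of_lt a.2) h.symm).2 (by omega)
    obtain ⟨k, hk⟩ := orb b
    exact ⟨(k : ℕ), by rw [zpow_natCast, hσpow]; exact hk⟩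
  · refine Finset.eq_univ_iff_forall.2 fun v => Equiv.Perm.mem_support.2 (hfix v)
  · rw [cycleIdeal, zeroLocus_span, Set.mem_setOf_eq]
    rintro p (⟨v, rfl⟩ | ⟨v, rfl⟩)
    · simp [hx1 v, sub_eq_zero]
    · simp only [aeval_eq_eval, map_sub, map_mul, eval_X, eval_C]
      rw [hσ, hs2, sub_self]

end Ham10
end

theorem stmt_10 (n : ℕ) (A : Fin n → Fin n → Prop) [DecidableRel A]
    (hirr : ∀ i, ¬ A i i) (hconn : (SimpleGraph.fromRel A).Connected)
    (K : Type*) [Field K] [IsAlgClosed K] (hchar : (n : K) ≠ 0)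
    (ω : K) (hω : IsPrimitiveRoot ω n) :
    hamIdeal n A ω =
      ⨅ (σ : Equiv.Perm (Fin n)) (_ : IsHamCyclePerm n A σ), cycleIdeal n σ ω := by
  classical
  have hn : 0 < n := Nat.pos_of_ne_zero (fun h => hchar (by simp [h]))
  have hTle : Ham10.T n K ≤ hamIdeal n A ω :=
    Ideal.span_mono Set.subset_union_left
  apply le_antisymm
  · refine le_iInf fun σ => le_iInf fun hσ => ?_
    rw [hamIdeal, Ideal.span_le]
    rintro q (⟨i, rfl⟩ | ⟨i, rfl⟩)
    · exact Ideal.subset_span (Or.inl ⟨i, rfl⟩)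
    · have hmem : σ i ∈ Finset.univ.filter (fun j => A i j) :=
        Finset.mem_filter.2 ⟨Finset.mem_univ _, hσ.2.2 i⟩
      rw [← Finset.mul_prod_erase _ _ hmem]
      have hneg : (C ω * X i - X (σ i) : MvPolynomial (Fin n) K)
          = -(X (σ i) - C ω * X i) := by ring
      rw [hneg]
      exact Ideal.mul_mem_right _ _
        (neg_mem (Ideal.subset_span (Or.inr ⟨i, rfl⟩)))
  · intro f hf
    apply Ham10.radical_le hn hω _ hTle
    rw [← vanishingIdeal_zeroLocus_eq_radical (K := K), mem_vanishingIdeal_iff]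
    intro x hx
    obtain ⟨σ, hσ, hxσ⟩ := Ham10.exists_ham A hirr hn hω x hx
    have hfσ : f ∈ cycleIdeal n σ ω := by
      have h1 := (Submodule.mem_iInf _).1 hf σ
      exact (Submodule.mem_iInf _).1 h1 hσ
    exact mem_zeroLocus_iff.1 hxσ f hfσ
end

section
/- Let G = (V,A) be a connected simple directed graph on vertices V = {1,…,n}, K an algebraically closed field whose characteristic does not divide n, and ω ∈ K a primitive n-th root of unity. Let H_G ⊆ K[x_1,…,x_n] be the Hamiltonian ideal generated by {x_i^n − 1 : i ∈ V} ∪ {∏_{j∈δ⁺(i)}(ω x_i − x_j) : i ∈ V}, and for a Hamiltonian cycle permutation σ let I_σ be the cycle ideal generated by {x_v^n − 1 : v ∈ V} ∪ {x_{σ(v)} − ω x_v : v ∈ V}. Then G has exactly one Hamiltonian cycle permutation if and only if there exists a Hamiltonian cycle permutation σ of G with H_G = I_σ. -/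
open MvPolynomial

universe u_ham

lemma pow_mod_eq_pow' {n : ℕ} {M : Type*} [Monoid M] {u : M} (hu : u ^ n = 1) (a : ℕ) :
    u ^ (a % n) = u ^ a := by
  conv_rhs => rw [← Nat.div_add_mod a n]
  rw [pow_add, pow_mul, hu, one_pow, one_mul]

lemma isReduced_of_comm_semisimple (R : Type*) [CommRing R] [IsSemisimpleRing R] :
    IsReduced R := by
  constructor
  intro x hx
  obtain ⟨e, he, hspan⟩ := IsSemisimpleRing.ideal_eq_span_idempotent (Ideal.span {x})
  have he_mem : e ∈ Ideal.span {x} := hspan ▸ Ideal.subset_span rfl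
  obtain ⟨c, rfl⟩ := Ideal.mem_span_singleton'.mp he_mem
  have hnil : IsNilpotent (c * x) := by
    obtain ⟨m, hm⟩ := hx
    exact ⟨m, by rw [mul_pow, hm, mul_zero]⟩
  obtain ⟨m, hm⟩ := hnil
  have he0 : c * x = 0 := by
    cases m with
    | zero =>
      have : (1 : R) = 0 := by simpa using hm
      calc c * x = c * x * 1 := by ring
      _ = 0 := by rw [this, mul_zero]
    | succ m =>
      calc c * x = (c * x) ^ (m + 1) := (he.pow_succ_eq m).symm
      _ = 0 := hm
  have : Ideal.span {x} = ⊥ := by rw [hspan, he0, Ideal.span_singleton_eq_bot]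
  have hx_mem : x ∈ (⊥ : Ideal R) := this ▸ Ideal.subset_span rfl
  simpa using hx_mem


set_option maxHeartbeats 1000000 in
set_option synthInstance.maxHeartbeats 400000 in
lemma ham_isRadical {n : ℕ} (hn : 1 < n) {K : Type u_ham} [Field K] (hchar : (n : K) ≠ 0)
    (I : Ideal (MvPolynomial (Fin n) K))
    (hI : ∀ i, (X i ^ n - 1 : MvPolynomial (Fin n) K) ∈ I) : I.IsRadical := by
  classical
  haveI : NeZero n := ⟨by omega⟩
  rw [Ideal.isRadical_iff_quotient_reduced]
  set Q := MvPolynomial (Fin n) K ⧸ I with hQ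
  let G : Type u_ham := Multiplicative (ULift.{u_ham} (Fin n → ZMod n))
  let y : Fin n → Q := fun i => Ideal.Quotient.mk I (X i)
  have hy : ∀ i, y i ^ n = 1 := by
    intro i
    have : Ideal.Quotient.mk I (X i ^ n - 1) = 0 :=
      (Ideal.Quotient.eq_zero_iff_mem).mpr (hI i)
    rw [map_sub, map_pow, map_one, sub_eq_zero] at this
    exact this
  have key : ∀ (i : Fin n) (a b : ZMod n), y i ^ (a + b).val = y i ^ a.val * y i ^ b.val := by
    intro i a b
    rw [ZMod.val_add, pow_mod_eq_pow' (hy i), pow_add]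
  let F0 : G →* Q :=
    { toFun := fun g => ∏ i, y i ^ ((Multiplicative.toAdd g).down i).val
      map_one' := by simp
      map_mul' := by
        intro a b
        show ∏ i, y i ^ ((Multiplicative.toAdd a + Multiplicative.toAdd b).down i).val = (∏ i, y i ^ ((Multiplicative.toAdd a).down i).val) * ∏ i, y i ^ ((Multiplicative.toAdd b).down i).val
        rw [← Finset.prod_mul_distrib]
        exact Finset.prod_congr rfl fun i _ => key i _ _ }
  let F : MonoidAlgebra K G →ₐ[K] Q := MonoidAlgebra.lift K Q G F0
  have hXmem : ∀ i : Fin n, Ideal.Quotient.mk I (X i) ∈ F.range := by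
    intro i
    refine ⟨MonoidAlgebra.of K G (Multiplicative.ofAdd (ULift.up (Pi.single i (1 : ZMod n)))), ?_⟩
    show F (MonoidAlgebra.of K G (Multiplicative.ofAdd (ULift.up (Pi.single i (1 : ZMod n))))) = _
    rw [MonoidAlgebra.lift_of]
    show ∏ j, y j ^ ((Pi.single i 1 : Fin n → ZMod n) j).val = y i
    rw [Fintype.prod_eq_single i]
    · rw [Pi.single_eq_same, ZMod.val_one_eq_one_mod]
      rw [Nat.mod_eq_of_lt hn, pow_one]
    · intro j hj
      rw [Pi.single_eq_of_ne hj, ZMod.val_zero, pow_zero]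
  have hsurj : Function.Surjective F := by
    rw [← AlgHom.range_eq_top]
    have h := congrArg (Subalgebra.map (Ideal.Quotient.mkₐ K I))
      (MvPolynomial.adjoin_range_X (R := K) (σ := Fin n))
    rw [AlgHom.map_adjoin, Algebra.map_top] at h
    rw [(AlgHom.range_eq_top _).mpr (Ideal.Quotient.mkₐ_surjective K I)] at h
    rw [eq_top_iff, ← h]
    refine Algebra.adjoin_le ?_
    rintro _ ⟨_, ⟨i, rfl⟩, rfl⟩
    exact hXmem i
  haveI : NeZero ((Fintype.card G : K)) := by
    constructor
    have hcard : (Fintype.card G) = n ^ n := by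
      show Fintype.card (Multiplicative (ULift.{u_ham} (Fin n → ZMod n))) = n ^ n
      rw [Fintype.card_multiplicative, Fintype.card_ulift, Fintype.card_fun, ZMod.card,
        Fintype.card_fin]
    rw [hcard]
    push_cast
    exact pow_ne_zero _ hchar
  haveI : NeZero ((Nat.card G : K)) := by rw [Nat.card_eq_fintype_card]; infer_instance
  haveI : IsSemisimpleRing (MonoidAlgebra K G) := inferInstance
  haveI : IsSemisimpleRing Q := (F : MonoidAlgebra K G →+* Q).isSemisimpleRing_of_surjective hsurj
  exact isReduced_of_comm_semisimple Q

section Aux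

variable {n : ℕ} {K : Type*} [Field K] {ω : K} {A : Fin n → Fin n → Prop} [DecidableRel A]

lemma hamIdeal_le_cycleIdeal {τ : Equiv.Perm (Fin n)} (hτ : ∀ v, A v (τ v)) :
    hamIdeal n A ω ≤ cycleIdeal n τ ω := by
  rw [hamIdeal, Ideal.span_le]
  rintro p (⟨i, rfl⟩ | ⟨i, rfl⟩)
  · exact Ideal.subset_span (Or.inl ⟨i, rfl⟩)
  · have hmem : τ i ∈ Finset.univ.filter (fun j => A i j) := by
      simp [hτ i]
    rw [← Finset.mul_prod_erase _ _ hmem]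
    have h1 : (X (τ i) - C ω * X i : MvPolynomial (Fin n) K) ∈ cycleIdeal n τ ω :=
      Ideal.subset_span (Or.inr ⟨i, rfl⟩)
    have h2 : (C ω * X i - X (τ i) : MvPolynomial (Fin n) K) = -(X (τ i) - C ω * X i) := by
      ring
    rw [h2, neg_mul]
    exact neg_mem (Ideal.mul_mem_right _ _ h1)

lemma mem_zeroLocus_cycleIdeal {τ : Equiv.Perm (Fin n)} {x : Fin n → K} :
    x ∈ zeroLocus K (cycleIdeal n τ ω) ↔
      (∀ v, x v ^ n = 1) ∧ ∀ v, x (τ v) = ω * x v := by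
  constructor
  · intro hx
    constructor
    · intro v
      have := hx _ (Ideal.subset_span (Or.inl ⟨v, rfl⟩))
      simpa [sub_eq_zero] using this
    · intro v
      have := hx _ (Ideal.subset_span (Or.inr ⟨v, rfl⟩))
      simpa [sub_eq_zero] using this
  · rintro ⟨h1, h2⟩ p hp
    have hle : cycleIdeal n τ ω ≤ RingHom.ker (eval x) := by
      rw [cycleIdeal, Ideal.span_le]
      rintro q (⟨v, rfl⟩ | ⟨v, rfl⟩) <;>
        simp [RingHom.mem_ker, h1 v, h2 v, sub_eq_zero]
    exact hle hp

lemma exists_point {τ : Equiv.Perm (Fin n)} (hτc : τ.IsCycle)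
    (hτs : τ.support = Finset.univ) (hω : IsPrimitiveRoot ω n) (hn : 1 < n) :
    ∃ x : Fin n → K, Function.Injective x ∧ (∀ v, x v ^ n = 1) ∧ ∀ v, x (τ v) = ω * x v := by
  haveI : NeZero n := ⟨by omega⟩
  have hn0 : 0 < n := by omega
  let v0 : Fin n := ⟨0, hn0⟩
  have horder : orderOf τ = n := by
    rw [hτc.orderOf, hτs, Finset.card_univ, Fintype.card_fin]
  have hfix : ∀ v : Fin n, τ v ≠ v := fun v =>
    Equiv.Perm.mem_support.mp (hτs ▸ Finset.mem_univ v)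
  have hωn : ω ^ n = 1 := hω.pow_eq_one
  have key1 : ∀ a b : ℕ, b ≤ a → (τ ^ a) v0 = (τ ^ b) v0 → a % n = b % n := by
    intro a b hba hab
    obtain ⟨c, rfl⟩ := Nat.exists_eq_add_of_le hba
    have h1 : (τ ^ c) ((τ ^ b) v0) = (τ ^ b) v0 := by
      rw [← Equiv.Perm.mul_apply, ← pow_add]
      rw [Nat.add_comm b c] at hab
      exact hab
    have h2 : τ ^ c = 1 := by
      rw [hτc.pow_eq_one_iff]
      exact ⟨(τ ^ b) v0, hfix _, h1⟩
    have h3 : n ∣ c := by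
      rw [← horder]
      exact orderOf_dvd_of_pow_eq_one h2
    obtain ⟨d, rfl⟩ := h3
    rw [Nat.add_mul_mod_self_left]
  have key1' : ∀ a b : ℕ, (τ ^ a) v0 = (τ ^ b) v0 → a % n = b % n := by
    intro a b hab
    rcases le_total b a with h | h
    · exact key1 a b h hab
    · exact (key1 b a h hab.symm).symm
  have key2 : ∀ a b : ℕ, a % n = b % n → (τ ^ a) v0 = (τ ^ b) v0 := by
    intro a b h
    have hτn : τ ^ n = 1 := by
      have := pow_orderOf_eq_one τ
      rwa [horder] at this
    rw [← pow_mod_eq_pow' hτn a, ← pow_mod_eq_pow' hτn b, h]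
  let e : ZMod n → Fin n := fun k => (τ ^ k.val) v0
  have einj : Function.Injective e := by
    intro a b hab
    have := key1' _ _ hab
    rw [Nat.mod_eq_of_lt (ZMod.val_lt a), Nat.mod_eq_of_lt (ZMod.val_lt b)] at this
    exact ZMod.val_injective n this
  have ebij : Function.Bijective e :=
    (Fintype.bijective_iff_injective_and_card e).mpr ⟨einj, by simp [ZMod.card]⟩
  let E := Equiv.ofBijective e ebij
  refine ⟨fun v => ω ^ (E.symm v).val, ?_, ?_, ?_⟩
  · intro a b hab
    have hval : (E.symm a).val = (E.symm b).val :=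
      hω.pow_inj (ZMod.val_lt _) (ZMod.val_lt _) hab
    have : E.symm a = E.symm b := ZMod.val_injective n hval
    exact E.symm.injective this
  · intro v
    rw [← pow_mul, Nat.mul_comm, pow_mul, hωn, one_pow]
  · intro v
    set k := E.symm v with hk
    have hv : E k = v := Equiv.apply_symm_apply E v
    have hEk1 : E (k + 1) = τ v := by
      show (τ ^ (k + 1).val) v0 = τ v
      have hval : (k + 1).val % n = (k.val + 1) % n := by
        rw [Nat.mod_eq_of_lt (ZMod.val_lt _), ZMod.val_add, ZMod.val_one_eq_one_mod,
          Nat.mod_eq_of_lt hn]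
      rw [key2 _ _ hval, pow_succ', Equiv.Perm.mul_apply]
      show τ (e k) = τ v
      rw [show e k = v from hv]
    have hsymm : E.symm (τ v) = k + 1 := by
      rw [← hEk1, Equiv.symm_apply_apply]
    show ω ^ (E.symm (τ v)).val = ω * ω ^ (E.symm v).val
    rw [hsymm]
    have hval : (k + 1).val % n = (k.val + 1) % n := by
      rw [Nat.mod_eq_of_lt (ZMod.val_lt _), ZMod.val_add, ZMod.val_one_eq_one_mod,
        Nat.mod_eq_of_lt hn]
    rw [← pow_mod_eq_pow' hωn, hval, pow_mod_eq_pow' hωn, pow_succ, mul_comm]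

lemma inj_of_closed (hn : 0 < n) (hω : IsPrimitiveRoot ω n) {x : Fin n → K}
    (h1 : ∀ v, x v ^ n = 1) (h2 : ∀ v, ∃ w, x w = ω * x v) : Function.Injective x := by
  classical
  haveI : NeZero n := ⟨hn.ne'⟩
  set s := Finset.image x Finset.univ with hs
  have hstep : ∀ c ∈ s, ω * c ∈ s := by
    intro c hc
    obtain ⟨v, -, rfl⟩ := Finset.mem_image.mp hc
    obtain ⟨w, hw⟩ := h2 v
    exact Finset.mem_image.mpr ⟨w, Finset.mem_univ w, hw⟩
  set v0 : Fin n := ⟨0, hn⟩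
  have hpow : ∀ m : ℕ, ω ^ m * x v0 ∈ s := by
    intro m
    induction m with
    | zero =>
      rw [pow_zero, one_mul]
      exact Finset.mem_image_of_mem x (Finset.mem_univ v0)
    | succ m ih =>
      have := hstep _ ih
      rwa [← mul_assoc, ← pow_succ'] at this
  obtain ⟨k0, hk0lt, hk0⟩ := hω.eq_pow_of_pow_eq_one (h1 v0)
  have hall : ∀ j : ℕ, ω ^ j ∈ s := by
    intro j
    have h := hpow (n - k0 + j)
    rw [← hk0, ← pow_add] at h
    have hexp : n - k0 + j + k0 = n + j := by omega
    rw [hexp, pow_add, hω.pow_eq_one, one_mul] at h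
    exact h
  have hsub : Finset.image (fun j => ω ^ j) (Finset.range n) ⊆ s := by
    intro c hc
    obtain ⟨j, -, rfl⟩ := Finset.mem_image.mp hc
    exact hall j
  have hcard1 : (Finset.image (fun j => ω ^ j) (Finset.range n)).card = n := by
    rw [Finset.card_image_of_injOn, Finset.card_range]
    intro i hi j hj hij
    exact hω.pow_inj (Finset.mem_range.mp hi) (Finset.mem_range.mp hj) hij
  have hge : n ≤ s.card := hcard1 ▸ Finset.card_le_card hsub
  have hle : s.card ≤ n := le_trans Finset.card_image_le (by simp)
  have hcard : s.card = (Finset.univ : Finset (Fin n)).card := by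
    rw [Finset.card_univ, Fintype.card_fin]
    omega
  have hinjOn := Finset.card_image_iff.mp (hs ▸ hcard)
  intro a b hab
  exact hinjOn (Finset.mem_coe.mpr (Finset.mem_univ a)) (Finset.mem_coe.mpr (Finset.mem_univ b)) hab

lemma exists_ham_of_point (hn : 1 < n) (hω : IsPrimitiveRoot ω n) {x : Fin n → K}
    (hinj : Function.Injective x) (h1 : ∀ v, x v ^ n = 1)
    (h2 : ∀ v, ∃ j, A v j ∧ x j = ω * x v) :
    ∃ τ : Equiv.Perm (Fin n), IsHamCyclePerm n A τ ∧ ∀ v, x (τ v) = ω * x v := by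
  classical
  haveI : NeZero n := ⟨by omega⟩
  have hω0 : ω ≠ 0 := hω.ne_zero (by omega)
  choose f hfA hfx using h2
  have hfinj : Function.Injective f := by
    intro a b hab
    apply hinj
    have h := hfx a
    rw [hab, hfx b] at h
    exact (mul_left_cancel₀ hω0 h).symm
  let τ : Equiv.Perm (Fin n) :=
    Equiv.ofBijective f ((Fintype.bijective_iff_injective_and_card f).mpr ⟨hfinj, rfl⟩)
  have hτ : ∀ v, τ v = f v := fun _ => rfl
  have hpow : ∀ (k : ℕ) (v : Fin n), x ((τ ^ k) v) = ω ^ k * x v := by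
    intro k
    induction k with
    | zero => intro v; simp
    | succ k ih =>
      intro v
      rw [pow_succ', Equiv.Perm.mul_apply, hτ, hfx, ih, ← mul_assoc, ← pow_succ']
  have hmove : ∀ v, τ v ≠ v := by
    intro v hv
    have h := hfx v
    rw [← hτ, hv] at h
    have hx0 : x v ≠ 0 := by
      intro h0
      have := h1 v
      rw [h0, zero_pow (by omega : n ≠ 0)] at this
      exact zero_ne_one this
    have hω1 : ω = 1 := mul_right_cancel₀ hx0 (by rw [one_mul]; exact h.symm)
    exact hω.ne_one hn hω1
  have hsame : ∀ v w : Fin n, τ.SameCycle v w := by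
    intro v w
    obtain ⟨a, halt, ha⟩ := hω.eq_pow_of_pow_eq_one (h1 v)
    obtain ⟨b, hblt, hb⟩ := hω.eq_pow_of_pow_eq_one (h1 w)
    refine ⟨((n - a + b : ℕ) : ℤ), ?_⟩
    rw [zpow_natCast]
    apply hinj
    rw [hpow, ← ha, ← pow_add]
    have hexp : n - a + b + a = n + b := by omega
    rw [hexp, pow_add, hω.pow_eq_one, one_mul, hb]
  have hham : IsHamCyclePerm n A τ := by
    refine ⟨⟨⟨0, by omega⟩, hmove _, fun y _ => hsame _ y⟩, ?_, fun v => hτ v ▸ hfA v⟩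
    exact Finset.eq_univ_iff_forall.mpr fun v => Equiv.Perm.mem_support.mpr (hmove v)
  exact ⟨τ, hham, fun v => hτ v ▸ hfx v⟩

end Aux

theorem stmt_11 (n : ℕ) (A : Fin n → Fin n → Prop) [DecidableRel A]
    (hirr : ∀ i, ¬ A i i) (hconn : (SimpleGraph.fromRel A).Connected)
    (K : Type*) [Field K] [IsAlgClosed K] (hchar : (n : K) ≠ 0)
    (ω : K) (hω : IsPrimitiveRoot ω n) :
    (∃! σ : Equiv.Perm (Fin n), IsHamCyclePerm n A σ) ↔
      (∃ σ : Equiv.Perm (Fin n), IsHamCyclePerm n A σ ∧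
        hamIdeal n A ω = cycleIdeal n σ ω) := by
  classical
  have hn0 : 0 < n := by
    rcases Nat.eq_zero_or_pos n with h | h
    · exact absurd (by simp [h] : ((n : ℕ) : K) = 0) hchar
    · exact h
  constructor
  · rintro ⟨σ, hσ, huniq⟩
    have hn2 : 1 < n := by
      obtain ⟨a, ha, -⟩ := hσ.1
      rw [← Fintype.card_fin n]
      exact Fintype.one_lt_card_iff.mpr ⟨σ a, a, ha⟩
    refine ⟨σ, hσ, le_antisymm (hamIdeal_le_cycleIdeal hσ.2.2) ?_⟩
    have hrad : (hamIdeal n A ω).IsRadical := by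
      apply ham_isRadical hn2 hchar
      intro i
      exact Ideal.subset_span (Or.inl ⟨i, rfl⟩)
    have hzl : zeroLocus K (hamIdeal n A ω) ⊆ zeroLocus K (cycleIdeal n σ ω) := by
      intro x hx
      have h1 : ∀ v : Fin n, x v ^ n = 1 := by
        intro v
        have := hx _ (Ideal.subset_span (Or.inl ⟨v, rfl⟩))
        simpa [sub_eq_zero] using this
      have h2 : ∀ v : Fin n, ∃ j, A v j ∧ x j = ω * x v := by
        intro v
        have hpz := hx _ (Ideal.subset_span (Or.inr ⟨v, rfl⟩))
        rw [map_prod] at hpz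
        obtain ⟨j, hj, hj0⟩ := Finset.prod_eq_zero_iff.mp hpz
        refine ⟨j, (Finset.mem_filter.mp hj).2, ?_⟩
        simp only [map_sub, map_mul, eval_C, eval_X, aeval_C, aeval_X, Algebra.algebraMap_self, RingHom.id_apply] at hj0
        exact (sub_eq_zero.mp hj0).symm
      have hinj := inj_of_closed hn0 hω h1 fun v => (h2 v).imp fun j h => h.2
      obtain ⟨τ, hτham, hτx⟩ := exists_ham_of_point hn2 hω hinj h1 h2
      have hτσ : τ = σ := huniq τ hτham
      exact mem_zeroLocus_cycleIdeal.mpr ⟨h1, hτσ ▸ hτx⟩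
    calc cycleIdeal n σ ω
        ≤ vanishingIdeal K (zeroLocus K (cycleIdeal n σ ω)) := le_vanishingIdeal_zeroLocus _
      _ ≤ vanishingIdeal K (zeroLocus K (hamIdeal n A ω)) := vanishingIdeal_anti_mono hzl
      _ = (hamIdeal n A ω).radical := vanishingIdeal_zeroLocus_eq_radical _
      _ = hamIdeal n A ω := hrad.radical
  · rintro ⟨σ, hσ, heq⟩
    refine ⟨σ, hσ, ?_⟩
    intro τ hτ
    have hn2 : 1 < n := by
      obtain ⟨a, ha, -⟩ := hσ.1
      rw [← Fintype.card_fin n]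
      exact Fintype.one_lt_card_iff.mpr ⟨σ a, a, ha⟩
    have hle : cycleIdeal n σ ω ≤ cycleIdeal n τ ω := heq ▸ hamIdeal_le_cycleIdeal hτ.2.2
    obtain ⟨x, hxinj, hx1, hxτ⟩ := exists_point hτ.1 hτ.2.1 hω hn2
    have hxzl : x ∈ zeroLocus K (cycleIdeal n τ ω) := mem_zeroLocus_cycleIdeal.mpr ⟨hx1, hxτ⟩
    have hxσ : ∀ v, x (σ v) = ω * x v :=
      (mem_zeroLocus_cycleIdeal.mp fun p hp => hxzl p (hle hp)).2
    apply Equiv.ext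
    intro v
    apply hxinj
    rw [hxτ v, hxσ v]
end

section
/- Let G₁ and G₂ be k-regular simple undirected graphs on n₁ and n₂ vertices respectively with adjacency matrices A_{G₁} and A_{G₂}, and suppose G₂ is connected. If B is a real n₁×n₂ matrix satisfying B A_{G₂} = A_{G₁} B, then all column sums of B are equal: ∑_{i=1}^{n₁} B_{i,s} = ∑_{i=1}^{n₁} B_{i,t} for all 1 ≤ s,t ≤ n₂. -/
theorem stmt_14 (k n₁ n₂ : ℕ) (G₁ : SimpleGraph (Fin n₁)) (G₂ : SimpleGraph (Fin n₂))
    [DecidableRel G₁.Adj] [DecidableRel G₂.Adj]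
    (h₁ : G₁.IsRegularOfDegree k) (h₂ : G₂.IsRegularOfDegree k)
    (hconn : G₂.Connected)
    (B : Matrix (Fin n₁) (Fin n₂) ℝ)
    (hB : B * G₂.adjMatrix ℝ = G₁.adjMatrix ℝ * B) :
    ∀ s t : Fin n₂, ∑ i, B i s = ∑ i, B i t := by
  set f : Fin n₂ → ℝ := fun j => ∑ i, B i j with hf
  -- key equation: for all j, ∑_{u ∈ N(j)} f u = k * f j
  have key : ∀ j : Fin n₂, ∑ u ∈ G₂.neighborFinset j, f u = (k : ℝ) * f j := by
    intro j
    have h := congrArg (fun M : Matrix (Fin n₁) (Fin n₂) ℝ => ∑ i, M i j) hB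
    simp only [Matrix.mul_apply, SimpleGraph.adjMatrix_apply, ite_mul, mul_ite, one_mul,
      mul_one, zero_mul, mul_zero] at h
    calc ∑ u ∈ G₂.neighborFinset j, f u
        = ∑ u, if G₂.Adj j u then ∑ i, B i u else 0 := by
          rw [SimpleGraph.neighborFinset_eq_filter, Finset.sum_filter]
      _ = ∑ u, ∑ i, if G₂.Adj u j then B i u else 0 := by
          refine Finset.sum_congr rfl fun u _ => ?_
          by_cases h' : G₂.Adj u j
          · simp [h', h'.symm]
          · simp [h', mt SimpleGraph.Adj.symm h']
      _ = ∑ i, ∑ u, if G₂.Adj u j then B i u else 0 := Finset.sum_comm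
      _ = ∑ i, ∑ u, if G₁.Adj i u then B u j else 0 := h
      _ = ∑ u, ∑ i, if G₁.Adj i u then B u j else 0 := Finset.sum_comm
      _ = ∑ u, (k : ℝ) * B u j := by
          refine Finset.sum_congr rfl fun u _ => ?_
          have hfil : (Finset.univ.filter fun i => G₁.Adj i u) = G₁.neighborFinset u := by
            ext i; simp [SimpleGraph.adj_comm]
          rw [← Finset.sum_filter, hfil, Finset.sum_const,
            SimpleGraph.card_neighborFinset_eq_degree, h₁ u, nsmul_eq_mul]
      _ = (k : ℝ) * f j := by rw [Finset.mul_sum]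
  -- maximum principle
  have : Nonempty (Fin n₂) := hconn.nonempty
  obtain ⟨t₀, -, ht₀⟩ := Finset.exists_max_image Finset.univ f ⟨Classical.arbitrary _, Finset.mem_univ _⟩
  set M := f t₀ with hM
  have hle : ∀ j, f j ≤ M := fun j => ht₀ j (Finset.mem_univ j)
  have step : ∀ j, f j = M → ∀ u ∈ G₂.neighborFinset j, f u = M := by
    intro j hj u hu
    by_contra hne
    have hlt : f u < M := lt_of_le_of_ne (hle u) hne
    have hsum : ∑ u ∈ G₂.neighborFinset j, f u < ∑ _u ∈ G₂.neighborFinset j, M :=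
      Finset.sum_lt_sum (fun v _ => hle v) ⟨u, hu, hlt⟩
    rw [key j, hj, Finset.sum_const, SimpleGraph.card_neighborFinset_eq_degree, h₂ j,
      nsmul_eq_mul] at hsum
    exact lt_irrefl _ hsum
  have prop : ∀ ⦃a b : Fin n₂⦄ (w : G₂.Walk a b), f a = M → f b = M := by
    intro a b w
    induction w with
    | nil => exact id
    | cons h p ih =>
      intro ha
      exact ih (step _ ha _ ((SimpleGraph.mem_neighborFinset _ _ _).mpr h))
  have all : ∀ t, f t = M := fun t => (hconn.preconnected t₀ t).elim fun w => prop w rfl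
  intro s t
  rw [show (∑ i, B i s) = f s from rfl, show (∑ i, B i t) = f t from rfl, all s, all t]
end

section
/- Let G₁ and G₂ be connected k-regular compact simple graphs on n₁ and n₂ vertices respectively with n₁ ≤ n₂, and suppose G₁ and G₂ are not isomorphic. Let G be their disjoint union on n = n₁ + n₂ vertices (vertices 1,…,n₁ from G₁ and n₁+1,…,n from G₂) with adjacency matrix A_G, and let P_G = {P ∈ ℝ^{n×n} : P A_G = A_G P, all row sums and column sums of P equal 1, and P_{i,j} ≥ 0 for all i,j}. Then the convex hull of the integer (0/1) points of P_G equals {P ∈ P_G : ∑_{i=1}^{n₁} ∑_{j=n₁+1}^{n} P_{i,j} = 0}. -/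
open Matrix

/-- The polytope of doubly stochastic matrices commuting with a given matrix `A`. -/
def commPolytope {V : Type*} [Fintype V] (A : Matrix V V ℝ) : Set (Matrix V V ℝ) :=
  {P | P * A = A * P ∧ (∀ j, ∑ i, P i j = 1) ∧ (∀ i, ∑ j, P i j = 1) ∧
    ∀ i j, 0 ≤ P i j}

/-- The 0/1 (integer) points of a set of real matrices. -/
def intPoints {V : Type*} (S : Set (Matrix V V ℝ)) : Set (Matrix V V ℝ) :=
  {P ∈ S | ∀ i j, P i j = 0 ∨ P i j = 1}

/-- A graph is compact if its polytope `P_G` equals the convex hull of its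
integer points. -/
def IsCompactGraph {V : Type*} [Fintype V] (G : SimpleGraph V) [DecidableRel G.Adj] : Prop :=
  commPolytope (G.adjMatrix ℝ) = convexHull ℝ (intPoints (commPolytope (G.adjMatrix ℝ)))

/-- The adjacency matrix of the disjoint union of two graphs, in block form. -/
def sumAdjMatrix (n₁ n₂ : ℕ) (G₁ : SimpleGraph (Fin n₁)) (G₂ : SimpleGraph (Fin n₂))
    [DecidableRel G₁.Adj] [DecidableRel G₂.Adj] :
    Matrix (Fin n₁ ⊕ Fin n₂) (Fin n₁ ⊕ Fin n₂) ℝ :=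
  Matrix.fromBlocks (G₁.adjMatrix ℝ) 0 0 (G₂.adjMatrix ℝ)

set_option linter.unusedSectionVars false

lemma aux_exists_perm {V : Type*} [Fintype V] [DecidableEq V] {A : Matrix V V ℝ}
    {P : Matrix V V ℝ} (hP : P ∈ intPoints (commPolytope A)) :
    ∃ σ : Equiv.Perm V, (∀ u v, P u v = if σ u = v then 1 else 0) ∧
      ∀ u v, A (σ u) (σ v) = A u v := by
  obtain ⟨⟨hcomm, hcol, hrow, hpos⟩, h01⟩ := hP
  have key : ∀ u, ∃! v, P u v = 1 := by
    intro u
    have hex : ∃ v, P u v = 1 := by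
      by_contra h
      push_neg at h
      have h0 : ∑ v, P u v = 0 :=
        Finset.sum_eq_zero fun v _ => (h01 u v).resolve_right (h v)
      rw [hrow u] at h0
      exact one_ne_zero h0
    obtain ⟨v, hv⟩ := hex
    refine ⟨v, hv, fun y hy => ?_⟩
    by_contra hne
    have h2 : (2:ℝ) ≤ ∑ w, P u w := by
      have hsub : ({y, v} : Finset V) ⊆ Finset.univ := Finset.subset_univ _
      have := Finset.sum_le_sum_of_subset_of_nonneg hsub (fun i _ _ => hpos u i)
      rw [Finset.sum_pair hne, hy, hv] at this
      linarith
    rw [hrow u] at h2; linarith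
  classical
  set f : V → V := fun u => (key u).choose with hfdef
  have hf1 : ∀ u, P u (f u) = 1 := fun u => (key u).choose_spec.1
  have hfu : ∀ u v, P u v = 1 → v = f u := fun u v hv => (key u).choose_spec.2 v hv
  have hinj : Function.Injective f := by
    intro u u' huu
    by_contra hne
    have e2 : P u' (f u) = 1 := by rw [huu]; exact hf1 u'
    have h2 : (2:ℝ) ≤ ∑ w, P w (f u) := by
      have hsub : ({u, u'} : Finset V) ⊆ Finset.univ := Finset.subset_univ _
      have h3 := Finset.sum_le_sum_of_subset_of_nonneg hsub (fun i _ _ => hpos i (f u))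
      rw [Finset.sum_pair hne, hf1 u, e2] at h3
      linarith
    rw [hcol (f u)] at h2; linarith
  obtain ⟨hinj', hsurj⟩ := Finite.injective_iff_bijective.mp hinj
  set σ : Equiv.Perm V := Equiv.ofBijective f ⟨hinj', hsurj⟩ with hσdef
  have hσ : ∀ u, σ u = f u := fun u => rfl
  have hform : ∀ u v, P u v = if σ u = v then 1 else 0 := by
    intro u v
    rw [hσ]
    split
    · next h => rw [← h]; exact hf1 u
    · next h =>
      rcases h01 u v with h0 | h1
      · exact h0
      · exact absurd (hfu u v h1).symm h
  refine ⟨σ, hform, fun u v => ?_⟩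
  have h1 : (P * A) u (σ v) = A (σ u) (σ v) := by
    simp only [Matrix.mul_apply, hform, ite_mul, one_mul, zero_mul]
    simp
  have h2 : (A * P) u (σ v) = A u v := by
    simp only [Matrix.mul_apply, hform]
    have : ∀ k, (σ k = σ v) ↔ (k = v) := fun k => σ.apply_eq_iff_eq
    simp only [mul_ite, mul_one, mul_zero, this]
    simp
  rw [← h1, hcomm, h2]

section graphside
variable {n₁ n₂ : ℕ} {G₁ : SimpleGraph (Fin n₁)} {G₂ : SimpleGraph (Fin n₂)}
  [DecidableRel G₁.Adj] [DecidableRel G₂.Adj]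

lemma aux_sumAdj_one {u v} (h : (G₁ ⊕g G₂).Adj u v) : sumAdjMatrix n₁ n₂ G₁ G₂ u v = 1 := by
  cases u <;> cases v <;> simp_all [sumAdjMatrix, SimpleGraph.sum_adj]

lemma aux_sumAdj_zero {u v} (h : ¬ (G₁ ⊕g G₂).Adj u v) : sumAdjMatrix n₁ n₂ G₁ G₂ u v = 0 := by
  cases u <;> cases v <;> simp_all [sumAdjMatrix, SimpleGraph.sum_adj]

lemma aux_side_of_reachable {u v} (h : (G₁ ⊕g G₂).Reachable u v) : u.isLeft = v.isLeft := by
  obtain ⟨w⟩ := h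
  induction w with
  | nil => rfl
  | @cons x y z hadj p ih =>
    have hxy : x.isLeft = y.isLeft := by
      cases x <;> cases y <;> simp_all [SimpleGraph.sum_adj]
    exact hxy.trans ih

lemma aux_int_cross_zero (hconn₁ : G₁.Connected) (hconn₂ : G₂.Connected)
    (hniso : ¬ Nonempty (G₁ ≃g G₂)) {P}
    (hP : P ∈ intPoints (commPolytope (sumAdjMatrix n₁ n₂ G₁ G₂))) :
    ∀ i j, P (Sum.inl i) (Sum.inr j) = 0 := by
  obtain ⟨σ, hform, hA⟩ := aux_exists_perm hP
  have hadj : ∀ u v, (G₁ ⊕g G₂).Adj (σ u) (σ v) ↔ (G₁ ⊕g G₂).Adj u v := by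
    intro u v
    constructor
    · intro h
      by_contra h'
      have h1 := aux_sumAdj_one h
      rw [hA u v, aux_sumAdj_zero h'] at h1
      exact zero_ne_one h1
    · intro h
      by_contra h'
      have h1 := aux_sumAdj_one h
      rw [← hA u v, aux_sumAdj_zero h'] at h1
      exact zero_ne_one h1
  set φ : (G₁ ⊕g G₂) →g (G₁ ⊕g G₂) := ⟨σ, fun {a b} h => (hadj a b).mpr h⟩ with hφ
  suffices hleft : ∀ i, (σ (Sum.inl i)).isLeft = true by
    intro i j
    rw [hform]
    rw [if_neg]
    intro h
    have := hleft i
    rw [h] at this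
    simp at this
  by_contra hc
  push_neg at hc
  obtain ⟨i₀, hi₀⟩ := hc
  simp only [ne_eq, Bool.not_eq_true] at hi₀
  have hallr : ∀ i, (σ (Sum.inl i)).isLeft = false := by
    intro i
    have hreach : (G₁ ⊕g G₂).Reachable (Sum.inl i) (Sum.inl i₀) :=
      (hconn₁.preconnected i i₀).map (SimpleGraph.Embedding.sumInl.toHom)
    have h2 : (G₁ ⊕g G₂).Reachable (σ (Sum.inl i)) (σ (Sum.inl i₀)) := hreach.map φ
    have := aux_side_of_reachable h2
    rw [hi₀] at this
    exact this
  by_cases hcase : ∃ j, (σ (Sum.inr j)).isLeft = false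
  · obtain ⟨j₀, hj₀⟩ := hcase
    have hallr₂ : ∀ j, (σ (Sum.inr j)).isLeft = false := by
      intro j
      have hreach : (G₁ ⊕g G₂).Reachable (Sum.inr j) (Sum.inr j₀) :=
        (hconn₂.preconnected j j₀).map (SimpleGraph.Embedding.sumInr.toHom)
      have h2 : (G₁ ⊕g G₂).Reachable (σ (Sum.inr j)) (σ (Sum.inr j₀)) := hreach.map φ
      have h3 := aux_side_of_reachable h2
      rw [hj₀] at h3
      exact h3
    obtain ⟨u, hu⟩ := σ.surjective (Sum.inl i₀)
    cases u with
    | inl a => have := hallr a; rw [hu] at this; simp at this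
    | inr b => have := hallr₂ b; rw [hu] at this; simp at this
  · push_neg at hcase
    have hf' : ∀ i, ∃ j, σ (Sum.inl i) = Sum.inr j := by
      intro i
      have := hallr i
      cases hσi : σ (Sum.inl i) with
      | inl a => rw [hσi] at this; simp at this
      | inr b => exact ⟨b, rfl⟩
    have hg' : ∀ j, ∃ i, σ (Sum.inr j) = Sum.inl i := by
      intro j
      have := hcase j
      simp only [ne_eq, Bool.not_eq_false] at this
      cases hσj : σ (Sum.inr j) with
      | inl a => exact ⟨a, rfl⟩
      | inr b => rw [hσj] at this; simp at this
    choose f hf using hf'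
    choose g hg using hg'
    have hfinj : Function.Injective f := by
      intro a b hab
      have : σ (Sum.inl a) = σ (Sum.inl b) := by rw [hf a, hf b, hab]
      exact Sum.inl_injective (σ.injective this)
    have hginj : Function.Injective g := by
      intro a b hab
      have : σ (Sum.inr a) = σ (Sum.inr b) := by rw [hg a, hg b, hab]
      exact Sum.inr_injective (σ.injective this)
    have hcard : Fintype.card (Fin n₁) = Fintype.card (Fin n₂) :=
      le_antisymm (Fintype.card_le_of_injective f hfinj)
        (Fintype.card_le_of_injective g hginj)
    have hfbij : Function.Bijective f :=
      (Fintype.bijective_iff_injective_and_card f).mpr ⟨hfinj, hcard⟩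
    refine hniso ⟨⟨Equiv.ofBijective f hfbij, ?_⟩⟩
    intro a b
    show G₂.Adj (f a) (f b) ↔ G₁.Adj a b
    have h1 : G₂.Adj (f a) (f b) ↔ (G₁ ⊕g G₂).Adj (Sum.inr (f a)) (Sum.inr (f b)) := by
      simp [SimpleGraph.sum_adj]
    rw [h1, ← hf a, ← hf b, hadj]
    simp [SimpleGraph.sum_adj]

lemma aux_blockInt {Q₁ : Matrix (Fin n₁) (Fin n₁) ℝ} {Q₂ : Matrix (Fin n₂) (Fin n₂) ℝ}
    (hQ₁ : Q₁ ∈ intPoints (commPolytope (G₁.adjMatrix ℝ)))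
    (hQ₂ : Q₂ ∈ intPoints (commPolytope (G₂.adjMatrix ℝ))) :
    Matrix.fromBlocks Q₁ 0 0 Q₂ ∈ intPoints (commPolytope (sumAdjMatrix n₁ n₂ G₁ G₂)) := by
  obtain ⟨⟨hc₁, hcol₁, hrow₁, hpos₁⟩, h01₁⟩ := hQ₁
  obtain ⟨⟨hc₂, hcol₂, hrow₂, hpos₂⟩, h01₂⟩ := hQ₂
  refine ⟨⟨?_, ?_, ?_, ?_⟩, ?_⟩
  · rw [sumAdjMatrix, Matrix.fromBlocks_multiply, Matrix.fromBlocks_multiply]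
    simp [hc₁, hc₂]
  · intro j
    cases j with
    | inl j => rw [Fintype.sum_sum_type]; simp [hcol₁ j]
    | inr j => rw [Fintype.sum_sum_type]; simp [hcol₂ j]
  · intro i
    cases i with
    | inl i => rw [Fintype.sum_sum_type]; simp [hrow₁ i]
    | inr i => rw [Fintype.sum_sum_type]; simp [hrow₂ i]
  · intro i j
    cases i <;> cases j <;> simp [hpos₁, hpos₂]
  · intro i j
    cases i <;> cases j <;> simp [h01₁, h01₂]

end graphside

theorem stmt_15 (k n₁ n₂ : ℕ) (hn : n₁ ≤ n₂)
    (G₁ : SimpleGraph (Fin n₁)) (G₂ : SimpleGraph (Fin n₂))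
    [DecidableRel G₁.Adj] [DecidableRel G₂.Adj]
    (hreg₁ : G₁.IsRegularOfDegree k) (hreg₂ : G₂.IsRegularOfDegree k)
    (hconn₁ : G₁.Connected) (hconn₂ : G₂.Connected)
    (hcomp₁ : IsCompactGraph G₁) (hcomp₂ : IsCompactGraph G₂)
    (hniso : ¬ Nonempty (G₁ ≃g G₂)) :
    convexHull ℝ (intPoints (commPolytope (sumAdjMatrix n₁ n₂ G₁ G₂))) =
      {P ∈ commPolytope (sumAdjMatrix n₁ n₂ G₁ G₂) |
        ∑ i : Fin n₁, ∑ j : Fin n₂, P (Sum.inl i) (Sum.inr j) = 0} := by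
  set A := sumAdjMatrix n₁ n₂ G₁ G₂ with hAdef
  apply Set.Subset.antisymm
  · -- convex hull of integer points is contained in the RHS
    have hconv : Convex ℝ {P ∈ commPolytope A |
        ∑ i : Fin n₁, ∑ j : Fin n₂, P (Sum.inl i) (Sum.inr j) = 0} := by
      rintro P ⟨⟨hc, hcol, hrow, hpos⟩, hs⟩ Q ⟨⟨hc', hcol', hrow', hpos'⟩, hs'⟩ a b ha hb hab
      refine ⟨⟨?_, ?_, ?_, ?_⟩, ?_⟩
      · simp only [Matrix.add_mul, Matrix.mul_add, Matrix.smul_mul, Matrix.mul_smul, hc, hc']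
      · intro j
        simp only [Matrix.add_apply, Matrix.smul_apply, smul_eq_mul,
          Finset.sum_add_distrib, ← Finset.mul_sum, hcol j, hcol' j]
        linarith
      · intro i
        simp only [Matrix.add_apply, Matrix.smul_apply, smul_eq_mul,
          Finset.sum_add_distrib, ← Finset.mul_sum, hrow i, hrow' i]
        linarith
      · intro i j
        simp only [Matrix.add_apply, Matrix.smul_apply, smul_eq_mul]
        exact add_nonneg (mul_nonneg ha (hpos i j)) (mul_nonneg hb (hpos' i j))
      · simp only [Matrix.add_apply, Matrix.smul_apply, smul_eq_mul,
          Finset.sum_add_distrib, ← Finset.mul_sum, hs, hs']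
        ring
    apply convexHull_min _ hconv
    rintro Q hQ
    refine ⟨hQ.1, ?_⟩
    have hz := aux_int_cross_zero hconn₁ hconn₂ hniso hQ
    exact Finset.sum_eq_zero fun i _ => Finset.sum_eq_zero fun j _ => hz i j
  · -- RHS is contained in the convex hull
    rintro P ⟨⟨hc, hcol, hrow, hpos⟩, hs⟩
    -- top-right block vanishes entrywise
    have h12 : ∀ i j, P (Sum.inl i) (Sum.inr j) = 0 := by
      intro i j
      have h := (Finset.sum_eq_zero_iff_of_nonneg
        (fun i _ => Finset.sum_nonneg fun j _ => hpos _ _)).mp hs i (Finset.mem_univ i)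
      exact (Finset.sum_eq_zero_iff_of_nonneg (fun j _ => hpos _ _)).mp h j (Finset.mem_univ j)
    -- row sums of the top-left block are 1
    have hrow₁ : ∀ i : Fin n₁, ∑ j : Fin n₁, P (Sum.inl i) (Sum.inl j) = 1 := by
      intro i
      have := hrow (Sum.inl i)
      rw [Fintype.sum_sum_type] at this
      simpa [h12] using this
    -- bottom-left block vanishes entrywise
    have h21 : ∀ i j, P (Sum.inr i) (Sum.inl j) = 0 := by
      have hS : ∑ j : Fin n₁, ∑ i : Fin n₂, P (Sum.inr i) (Sum.inl j) = 0 := by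
        have h1 : ∑ j : Fin n₁, (∑ i : Fin n₁, P (Sum.inl i) (Sum.inl j)
            + ∑ i : Fin n₂, P (Sum.inr i) (Sum.inl j)) = n₁ := by
          have : ∀ j : Fin n₁, ∑ i : Fin n₁, P (Sum.inl i) (Sum.inl j)
              + ∑ i : Fin n₂, P (Sum.inr i) (Sum.inl j) = 1 := by
            intro j
            have := hcol (Sum.inl j)
            rwa [Fintype.sum_sum_type] at this
          simp [this]
        have h2 : ∑ j : Fin n₁, ∑ i : Fin n₁, P (Sum.inl i) (Sum.inl j) = n₁ := by
          rw [Finset.sum_comm]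
          simp [hrow₁]
        rw [Finset.sum_add_distrib, h2] at h1
        linarith
      intro i j
      have h := (Finset.sum_eq_zero_iff_of_nonneg
        (fun j _ => Finset.sum_nonneg fun i _ => hpos _ _)).mp hS j (Finset.mem_univ j)
      exact (Finset.sum_eq_zero_iff_of_nonneg (fun i _ => hpos _ _)).mp h i (Finset.mem_univ i)
    have hcol₁ : ∀ j : Fin n₁, ∑ i : Fin n₁, P (Sum.inl i) (Sum.inl j) = 1 := by
      intro j
      have := hcol (Sum.inl j)
      rw [Fintype.sum_sum_type] at this
      simpa [h21] using this
    have hrow₂ : ∀ i : Fin n₂, ∑ j : Fin n₂, P (Sum.inr i) (Sum.inr j) = 1 := by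
      intro i
      have := hrow (Sum.inr i)
      rw [Fintype.sum_sum_type] at this
      simpa [h21] using this
    have hcol₂ : ∀ j : Fin n₂, ∑ i : Fin n₂, P (Sum.inr i) (Sum.inr j) = 1 := by
      intro j
      have := hcol (Sum.inr j)
      rw [Fintype.sum_sum_type] at this
      simpa [h12] using this
    set P₁ : Matrix (Fin n₁) (Fin n₁) ℝ := Matrix.of fun i j => P (Sum.inl i) (Sum.inl j) with hP₁
    set P₂ : Matrix (Fin n₂) (Fin n₂) ℝ := Matrix.of fun i j => P (Sum.inr i) (Sum.inr j) with hP₂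
    have hPeq : P = Matrix.fromBlocks P₁ 0 0 P₂ := by
      ext i j
      cases i <;> cases j <;>
        simp [hP₁, hP₂, Matrix.fromBlocks, h12, h21]
    -- commuting of blocks
    have hcomm' : Matrix.fromBlocks (P₁ * G₁.adjMatrix ℝ) 0 0 (P₂ * G₂.adjMatrix ℝ)
        = Matrix.fromBlocks (G₁.adjMatrix ℝ * P₁) 0 0 (G₂.adjMatrix ℝ * P₂) := by
      have := hc
      rw [hPeq, hAdef, sumAdjMatrix, Matrix.fromBlocks_multiply, Matrix.fromBlocks_multiply]
        at this
      simpa using this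
    have hc₁ : P₁ * G₁.adjMatrix ℝ = G₁.adjMatrix ℝ * P₁ := by
      have := congrArg Matrix.toBlocks₁₁ hcomm'
      simpa [Matrix.toBlocks_fromBlocks₁₁] using this
    have hc₂ : P₂ * G₂.adjMatrix ℝ = G₂.adjMatrix ℝ * P₂ := by
      have := congrArg Matrix.toBlocks₂₂ hcomm'
      simpa [Matrix.toBlocks_fromBlocks₂₂] using this
    have hmem₁ : P₁ ∈ commPolytope (G₁.adjMatrix ℝ) :=
      ⟨hc₁, hcol₁, hrow₁, fun i j => hpos _ _⟩
    have hmem₂ : P₂ ∈ commPolytope (G₂.adjMatrix ℝ) :=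
      ⟨hc₂, hcol₂, hrow₂, fun i j => hpos _ _⟩
    rw [hcomp₁] at hmem₁
    rw [hcomp₂] at hmem₂
    -- assemble via the linear block map
    set L : Matrix (Fin n₁) (Fin n₁) ℝ × Matrix (Fin n₂) (Fin n₂) ℝ
        → Matrix (Fin n₁ ⊕ Fin n₂) (Fin n₁ ⊕ Fin n₂) ℝ :=
      fun Q => Matrix.fromBlocks Q.1 0 0 Q.2 with hLdef
    have hL : IsLinearMap ℝ L := by
      constructor
      · intro x y
        ext i j
        cases i <;> cases j <;> simp [hLdef, Matrix.fromBlocks]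
      · intro c x
        ext i j
        cases i <;> cases j <;> simp [hLdef, Matrix.fromBlocks]
    have hpair : (P₁, P₂) ∈ convexHull ℝ
        ((intPoints (commPolytope (G₁.adjMatrix ℝ))) ×ˢ
          (intPoints (commPolytope (G₂.adjMatrix ℝ)))) := by
      rw [convexHull_prod]
      exact ⟨hmem₁, hmem₂⟩
    have hPim : P ∈ L '' (convexHull ℝ
        ((intPoints (commPolytope (G₁.adjMatrix ℝ))) ×ˢ
          (intPoints (commPolytope (G₂.adjMatrix ℝ))))) :=
      ⟨(P₁, P₂), hpair, hPeq.symm⟩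
    rw [hL.image_convexHull] at hPim
    refine convexHull_mono ?_ hPim
    rintro _ ⟨⟨Q₁, Q₂⟩, ⟨hQ₁, hQ₂⟩, rfl⟩
    exact aux_blockInt hQ₁ hQ₂
end

section
/- Let G₁ and G₂ be connected k-regular compact simple graphs on n₁ and n₂ vertices respectively with n₁ ≤ n₂, and suppose G₁ and G₂ are not isomorphic. Let G be their disjoint union on n = n₁ + n₂ vertices with adjacency matrix A_G, and P_G = {P ∈ ℝ^{n×n} : P A_G = A_G P, all row and column sums of P equal 1, P ≥ 0 entrywise}. If P is an extreme point of P_G that is not a 0/1 matrix, then every row sum of the off-diagonal block B_P = (P_{i,j})_{1 ≤ i ≤ n₁, n₁+1 ≤ j ≤ n} equals 1. -/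
open Matrix

/-- An eigenvector of the adjacency matrix of a connected `k`-regular graph for the
eigenvalue `k` is constant. -/
lemma perron_const {n : ℕ} (G : SimpleGraph (Fin n)) [DecidableRel G.Adj]
    (hconn : G.Connected) {k : ℕ} (hreg : G.IsRegularOfDegree k)
    (r : Fin n → ℝ)
    (heig : G.adjMatrix ℝ *ᵥ r = (k : ℝ) • r) :
    ∀ i j, r i = r j := by
  have hne : Nonempty (Fin n) := hconn.nonempty
  have huniv : (Finset.univ : Finset (Fin n)).Nonempty := Finset.univ_nonempty
  set M := Finset.univ.sup' huniv r with hM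
  have hle : ∀ i, r i ≤ M := fun i => Finset.le_sup' r (Finset.mem_univ i)
  have hstep : ∀ u v, G.Adj u v → r u = M → r v = M := by
    intro u v huv hu
    have h1 : ∑ w ∈ G.neighborFinset u, r w = (k : ℝ) * r u := by
      have := congrFun heig u
      simpa using this
    have hcard : (G.neighborFinset u).card = k := hreg u
    have h2 : ∑ w ∈ G.neighborFinset u, r w = ∑ w ∈ G.neighborFinset u, M := by
      rw [h1, hu, Finset.sum_const, hcard, nsmul_eq_mul]
    have hall := (Finset.sum_eq_sum_iff_of_le (fun w _ => hle w)).mp h2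
    exact hall v (by rwa [SimpleGraph.mem_neighborFinset])
  obtain ⟨i₀, _, hi₀⟩ := Finset.exists_mem_eq_sup' huniv r
  have key : ∀ u v (w : G.Walk u v), r u = M → r v = M := by
    intro u v w
    induction w with
    | nil => exact id
    | cons h p ih => intro hu; exact ih (hstep _ _ h hu)
  have hall : ∀ i, r i = M := fun i => key i₀ i ((hconn i₀ i).some) hi₀.symm
  intro i j; rw [hall i, hall j]

/-- Row sums of an intertwiner between adjacency matrices of connected regular graphs
are constant. -/
lemma rowsum_const {m n k : ℕ} (G₁ : SimpleGraph (Fin m)) (G₂ : SimpleGraph (Fin n))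
    [DecidableRel G₁.Adj] [DecidableRel G₂.Adj]
    (hconn₁ : G₁.Connected) (hreg₁ : G₁.IsRegularOfDegree k) (hreg₂ : G₂.IsRegularOfDegree k)
    (B : Matrix (Fin m) (Fin n) ℝ)
    (hcomm : B * G₂.adjMatrix ℝ = G₁.adjMatrix ℝ * B) :
    ∀ i i', ∑ j, B i j = ∑ j, B i' j := by
  have hrB : (fun i => ∑ j, B i j) = B *ᵥ (fun _ => (1:ℝ)) := by
    ext i; simp [mulVec, dotProduct]
  have hones : G₂.adjMatrix ℝ *ᵥ (fun _ => (1:ℝ)) = (k:ℝ) • (fun _ => (1:ℝ)) := by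
    ext v
    simp [hreg₂ v]
  have heig : G₁.adjMatrix ℝ *ᵥ (fun i => ∑ j, B i j) = (k:ℝ) • (fun i => ∑ j, B i j) := by
    rw [hrB, mulVec_mulVec, ← hcomm, ← mulVec_mulVec, hones, mulVec_smul]
  exact perron_const G₁ hconn₁ hreg₁ _ heig

/-- The linear map assembling a block-diagonal matrix from two diagonal blocks. -/
def blockDiagL (n₁ n₂ : ℕ) :
    (Matrix (Fin n₁) (Fin n₁) ℝ × Matrix (Fin n₂) (Fin n₂) ℝ) →ₗ[ℝ]
      Matrix (Fin n₁ ⊕ Fin n₂) (Fin n₁ ⊕ Fin n₂) ℝ where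
  toFun QR := fromBlocks QR.1 0 0 QR.2
  map_add' x y := by
    ext i j
    rcases i with i | i <;> rcases j with j | j <;> simp
  map_smul' s x := by
    ext i j
    rcases i with i | i <;> rcases j with j | j <;> simp

@[simp] lemma blockDiagL_apply (n₁ n₂ : ℕ)
    (QR : Matrix (Fin n₁) (Fin n₁) ℝ × Matrix (Fin n₂) (Fin n₂) ℝ) :
    blockDiagL n₁ n₂ QR = fromBlocks QR.1 0 0 QR.2 := rfl

set_option maxHeartbeats 1000000 in
theorem stmt_16 (k n₁ n₂ : ℕ) (hn : n₁ ≤ n₂)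
    (G₁ : SimpleGraph (Fin n₁)) (G₂ : SimpleGraph (Fin n₂))
    [DecidableRel G₁.Adj] [DecidableRel G₂.Adj]
    (hreg₁ : G₁.IsRegularOfDegree k) (hreg₂ : G₂.IsRegularOfDegree k)
    (hconn₁ : G₁.Connected) (hconn₂ : G₂.Connected)
    (hcomp₁ : IsCompactGraph G₁) (hcomp₂ : IsCompactGraph G₂)
    (hniso : ¬ Nonempty (G₁ ≃g G₂))
    (P : Matrix (Fin n₁ ⊕ Fin n₂) (Fin n₁ ⊕ Fin n₂) ℝ)
    (hP : P ∈ Set.extremePoints ℝ (commPolytope (sumAdjMatrix n₁ n₂ G₁ G₂)))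
    (hPnotint : ¬ ∀ i j, P i j = 0 ∨ P i j = 1) :
    ∀ i : Fin n₁, ∑ j : Fin n₂, P (Sum.inl i) (Sum.inr j) = 1 := by
  intro i
  obtain ⟨⟨hcomm, hcol, hrow, hpos⟩, hext⟩ := hP
  set A₁ := G₁.adjMatrix ℝ with hA₁
  set A₂ := G₂.adjMatrix ℝ with hA₂
  set P₁₁ := P.toBlocks₁₁ with hP11
  set B := P.toBlocks₁₂ with hBdef
  set C := P.toBlocks₂₁ with hCdef
  set P₂₂ := P.toBlocks₂₂ with hP22
  have hPb : P = fromBlocks P₁₁ B C P₂₂ := (fromBlocks_toBlocks P).symm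
  have hblocks : P * fromBlocks A₁ 0 0 A₂ = fromBlocks A₁ 0 0 A₂ * P := hcomm
  rw [hPb, fromBlocks_multiply, fromBlocks_multiply] at hblocks
  simp only [Matrix.mul_zero, Matrix.zero_mul, add_zero, zero_add] at hblocks
  have hc11 : P₁₁ * A₁ = A₁ * P₁₁ := by
    have := congrArg Matrix.toBlocks₁₁ hblocks; simpa [toBlocks_fromBlocks₁₁] using this
  have hc12 : B * A₂ = A₁ * B := by
    have := congrArg Matrix.toBlocks₁₂ hblocks; simpa [toBlocks_fromBlocks₁₂] using this
  have hc21 : C * A₁ = A₂ * C := by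
    have := congrArg Matrix.toBlocks₂₁ hblocks; simpa [toBlocks_fromBlocks₂₁] using this
  have hc22 : P₂₂ * A₂ = A₂ * P₂₂ := by
    have := congrArg Matrix.toBlocks₂₂ hblocks; simpa [toBlocks_fromBlocks₂₂] using this
  -- row/column sum splits
  have hrow1 : ∀ i', (∑ j', P₁₁ i' j') + (∑ j', B i' j') = 1 := by
    intro i'
    have h := hrow (Sum.inl i')
    rw [Fintype.sum_sum_type] at h
    exact h
  have hrow2 : ∀ i', (∑ j', C i' j') + (∑ j', P₂₂ i' j') = 1 := by
    intro i'
    have h := hrow (Sum.inr i')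
    rw [Fintype.sum_sum_type] at h
    exact h
  have hcol1 : ∀ j', (∑ i', P₁₁ i' j') + (∑ i', C i' j') = 1 := by
    intro j'
    have h := hcol (Sum.inl j')
    rw [Fintype.sum_sum_type] at h
    exact h
  have hcol2 : ∀ j', (∑ i', B i' j') + (∑ i', P₂₂ i' j') = 1 := by
    intro j'
    have h := hcol (Sum.inr j')
    rw [Fintype.sum_sum_type] at h
    exact h
  -- constancy of block sums
  have hBrow : ∀ i i', ∑ j', B i j' = ∑ j', B i' j' :=
    rowsum_const G₁ G₂ hconn₁ hreg₁ hreg₂ B hc12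
  have hBT : Bᵀ * A₁ = A₂ * Bᵀ := by
    have h := congrArg Matrix.transpose hc12
    simp only [Matrix.transpose_mul, hA₁, hA₂, SimpleGraph.transpose_adjMatrix] at h
    exact h.symm
  have hBcol : ∀ j j', ∑ i', B i' j = ∑ i', B i' j' := by
    intro j j'
    have h := rowsum_const G₂ G₁ hconn₂ hreg₂ hreg₁ Bᵀ hBT j j'
    simpa using h
  have hCrow : ∀ j j', ∑ i', C j i' = ∑ i', C j' i' :=
    rowsum_const G₂ G₁ hconn₂ hreg₂ hreg₁ C hc21
  have hCT : Cᵀ * A₂ = A₁ * Cᵀ := by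
    have h := congrArg Matrix.transpose hc21
    simp only [Matrix.transpose_mul, hA₁, hA₂, SimpleGraph.transpose_adjMatrix] at h
    exact h.symm
  have hCcol : ∀ i i', ∑ j', C j' i = ∑ j', C j' i' := by
    intro ii ii'
    have h := rowsum_const G₁ G₂ hconn₁ hreg₁ hreg₂ Cᵀ hCT ii ii'
    simpa using h
  -- the constants
  have n₁pos : 0 < n₁ := i.pos
  have n₂pos : 0 < n₂ := lt_of_lt_of_le n₁pos hn
  set j₀ : Fin n₂ := ⟨0, n₂pos⟩ with hj₀
  obtain ⟨c, hc⟩ : ∃ c, ∀ i', ∑ j', B i' j' = c := ⟨∑ j', B i j', fun i' => hBrow i' i⟩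
  obtain ⟨d, hd⟩ : ∃ d, ∀ j', ∑ i', B i' j' = d := ⟨∑ i', B i' j₀, fun j' => hBcol j' j₀⟩
  obtain ⟨e, he⟩ : ∃ e, ∀ i'', ∑ j', C j' i'' = e := ⟨∑ j', C j' i, fun i'' => hCcol i'' i⟩
  obtain ⟨c', hc'⟩ : ∃ c', ∀ j', ∑ i'', C j' i'' = c' := ⟨∑ i'', C j₀ i'', fun j' => hCrow j' j₀⟩
  have hP11row : ∀ i', ∑ j', P₁₁ i' j' = 1 - c := by
    intro i'; have h := hrow1 i'; rw [hc i'] at h; linarith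
  have hP11col : ∀ j', ∑ i', P₁₁ i' j' = 1 - e := by
    intro j'; have h := hcol1 j'; rw [he j'] at h; linarith
  have hP22row : ∀ i', ∑ j', P₂₂ i' j' = 1 - c' := by
    intro i'; have h := hrow2 i'; rw [hc' i'] at h; linarith
  have hP22col : ∀ j', ∑ i', P₂₂ i' j' = 1 - d := by
    intro j'; have h := hcol2 j'; rw [hd j'] at h; linarith
  have hec : e = c := by
    have t1 : ∑ i' : Fin n₁, ∑ j' : Fin n₁, P₁₁ i' j' = n₁ * (1 - c) := by
      simp [hP11row, Finset.sum_const, mul_comm]; ring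
    have t2 : ∑ j' : Fin n₁, ∑ i' : Fin n₁, P₁₁ i' j' = n₁ * (1 - e) := by
      simp [hP11col, Finset.sum_const, mul_comm]; ring
    rw [show (∑ i' : Fin n₁, ∑ j' : Fin n₁, P₁₁ i' j') = ∑ j' : Fin n₁, ∑ i' : Fin n₁, P₁₁ i' j' from Finset.sum_comm] at t1
    have hn1 : (0:ℝ) < n₁ := by exact_mod_cast n₁pos
    have h := mul_left_cancel₀ (ne_of_gt hn1) (t1.symm.trans t2)
    linarith
  have hc'd : c' = d := by
    have t1 : ∑ i' : Fin n₂, ∑ j' : Fin n₂, P₂₂ i' j' = n₂ * (1 - c') := by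
      simp [hP22row, Finset.sum_const, mul_comm]; ring
    have t2 : ∑ j' : Fin n₂, ∑ i' : Fin n₂, P₂₂ i' j' = n₂ * (1 - d) := by
      simp [hP22col, Finset.sum_const, mul_comm]; ring
    rw [show (∑ i' : Fin n₂, ∑ j' : Fin n₂, P₂₂ i' j') = ∑ j' : Fin n₂, ∑ i' : Fin n₂, P₂₂ i' j' from Finset.sum_comm] at t1
    have hn2 : (0:ℝ) < n₂ := by exact_mod_cast n₂pos
    have h := mul_left_cancel₀ (ne_of_gt hn2) (t1.symm.trans t2)
    linarith
  have htot : (n₁:ℝ) * c = n₂ * d := by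
    have t1 : ∑ i' : Fin n₁, ∑ j' : Fin n₂, B i' j' = n₁ * c := by
      simp [hc, Finset.sum_const, mul_comm]
    have t2 : ∑ j' : Fin n₂, ∑ i' : Fin n₁, B i' j' = n₂ * d := by
      simp [hd, Finset.sum_const, mul_comm]
    rw [show (∑ i' : Fin n₁, ∑ j' : Fin n₂, B i' j') = ∑ j' : Fin n₂, ∑ i' : Fin n₁, B i' j' from Finset.sum_comm] at t1
    rw [← t1, ← t2]
  have hBpos : ∀ i' j', 0 ≤ B i' j' := fun i' j' => hpos (Sum.inl i') (Sum.inr j')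
  have hCpos : ∀ j' i', 0 ≤ C j' i' := fun j' i' => hpos (Sum.inr j') (Sum.inl i')
  have hP11pos : ∀ i' j', 0 ≤ P₁₁ i' j' := fun i' j' => hpos (Sum.inl i') (Sum.inl j')
  have hP22pos : ∀ i' j', 0 ≤ P₂₂ i' j' := fun i' j' => hpos (Sum.inr i') (Sum.inr j')
  have hc0 : 0 ≤ c := by
    rw [← hc i]; exact Finset.sum_nonneg fun j' _ => hBpos i j'
  have hc1 : c ≤ 1 := by
    have h := hP11row i
    have h2 : 0 ≤ ∑ j', P₁₁ i j' := Finset.sum_nonneg fun j' _ => hP11pos i j'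
    linarith
  have hd0 : 0 ≤ d := by
    rw [← hd j₀]; exact Finset.sum_nonneg fun i' _ => hBpos i' j₀
  have hd1 : d ≤ 1 := by
    have h := hP22col j₀
    have h2 : 0 ≤ ∑ i', P₂₂ i' j₀ := Finset.sum_nonneg fun i' _ => hP22pos i' j₀
    linarith
  -- membership of scaled block matrices in the polytope
  have hQ : ∀ a b f : ℝ, 0 ≤ a → 0 ≤ b → 0 ≤ f →
      a * (1 - c) + b * c = 1 → b * d + f * (1 - d) = 1 →
      fromBlocks (a • P₁₁) (b • B) (b • C) (f • P₂₂) ∈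
        commPolytope (sumAdjMatrix n₁ n₂ G₁ G₂) := by
    intro a b f ha hb hf hab hbf
    refine ⟨?_, ?_, ?_, ?_⟩
    · show _ * fromBlocks A₁ 0 0 A₂ = fromBlocks A₁ 0 0 A₂ * _
      rw [fromBlocks_multiply, fromBlocks_multiply]
      simp only [Matrix.mul_zero, Matrix.zero_mul, Matrix.smul_mul, Matrix.mul_smul,
        smul_zero, add_zero, zero_add, hc11, hc12, hc21, hc22]
    · intro j''
      rcases j'' with j'' | j''
      · rw [Fintype.sum_sum_type]
        simp only [fromBlocks_apply₁₁, fromBlocks_apply₂₁, Matrix.smul_apply, smul_eq_mul]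
        rw [← Finset.mul_sum, ← Finset.mul_sum, hP11col j'', he j'', hec]
        linarith
      · rw [Fintype.sum_sum_type]
        simp only [fromBlocks_apply₁₂, fromBlocks_apply₂₂, Matrix.smul_apply, smul_eq_mul]
        rw [← Finset.mul_sum, ← Finset.mul_sum, hd j'', hP22col j'']
        linarith
    · intro i''
      rcases i'' with i'' | i''
      · rw [Fintype.sum_sum_type]
        simp only [fromBlocks_apply₁₁, fromBlocks_apply₁₂, Matrix.smul_apply, smul_eq_mul]
        rw [← Finset.mul_sum, ← Finset.mul_sum, hP11row i'', hc i'']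
        linarith
      · rw [Fintype.sum_sum_type]
        simp only [fromBlocks_apply₂₁, fromBlocks_apply₂₂, Matrix.smul_apply, smul_eq_mul]
        rw [← Finset.mul_sum, ← Finset.mul_sum, hc' i'', hP22row i'', hc'd]
        linarith
    · intro i'' j''
      rcases i'' with i'' | i'' <;> rcases j'' with j'' | j'' <;>
        simp only [fromBlocks_apply₁₁, fromBlocks_apply₁₂, fromBlocks_apply₂₁,
          fromBlocks_apply₂₂, Matrix.smul_apply, smul_eq_mul]
      · exact mul_nonneg ha (hP11pos _ _)
      · exact mul_nonneg hb (hBpos _ _)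
      · exact mul_nonneg hb (hCpos _ _)
      · exact mul_nonneg hf (hP22pos _ _)
  -- it suffices to show c = 1
  suffices hfin : c = 1 by
    show (∑ j', B i j') = 1
    rw [hc i, hfin]
  by_contra hcne
  have hclt : c < 1 := lt_of_le_of_ne hc1 hcne
  rcases eq_or_lt_of_le hc0 with hczero | hcpos
  · -- case c = 0 : P is block diagonal, use compactness
    have hczero' : c = 0 := hczero.symm
    have hdzero : d = 0 := by
      have hn2 : (0:ℝ) < n₂ := by exact_mod_cast n₂pos
      have : (n₂:ℝ) * d = 0 := by rw [← htot, hczero']; ring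
      rcases mul_eq_zero.mp this with h | h
      · exact absurd h (ne_of_gt hn2)
      · exact h
    have hB0 : B = 0 := by
      ext i' j'
      simp only [Matrix.zero_apply]
      have hs : ∑ j'', B i' j'' = 0 := by rw [hc i', hczero']
      exact (Finset.sum_eq_zero_iff_of_nonneg (fun j'' _ => hBpos i' j'')).mp hs j'
        (Finset.mem_univ j')
    have hC0 : C = 0 := by
      ext j' i'
      simp only [Matrix.zero_apply]
      have hs : ∑ j'', C j'' i' = 0 := by rw [he i', hec, hczero']
      exact (Finset.sum_eq_zero_iff_of_nonneg (fun j'' _ => hCpos j'' i')).mp hs j'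
        (Finset.mem_univ j')
    have hPbd : P = fromBlocks P₁₁ 0 0 P₂₂ := by rw [hPb, hB0, hC0]
    have hP1mem : P₁₁ ∈ commPolytope (G₁.adjMatrix ℝ) := by
      refine ⟨hc11, fun j' => ?_, fun i' => ?_, hP11pos⟩
      · rw [hP11col j', hec, hczero']; ring
      · rw [hP11row i', hczero']; ring
    have hP2mem : P₂₂ ∈ commPolytope (G₂.adjMatrix ℝ) := by
      refine ⟨hc22, fun j' => ?_, fun i' => ?_, hP22pos⟩
      · rw [hP22col j', hdzero]; ring
      · rw [hP22row i', hc'd, hdzero]; ring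
    have hP1hull : P₁₁ ∈ convexHull ℝ (intPoints (commPolytope (G₁.adjMatrix ℝ))) := by
      rw [← hcomp₁]; exact hP1mem
    have hP2hull : P₂₂ ∈ convexHull ℝ (intPoints (commPolytope (G₂.adjMatrix ℝ))) := by
      rw [← hcomp₂]; exact hP2mem
    set S₁ := intPoints (commPolytope (G₁.adjMatrix ℝ)) with hS₁
    set S₂ := intPoints (commPolytope (G₂.adjMatrix ℝ)) with hS₂
    have hpair : (P₁₁, P₂₂) ∈ convexHull ℝ (S₁ ×ˢ S₂) := by
      rw [convexHull_prod]; exact Set.mk_mem_prod hP1hull hP2hull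
    have himg : P ∈ convexHull ℝ (blockDiagL n₁ n₂ '' (S₁ ×ˢ S₂)) := by
      rw [← (blockDiagL n₁ n₂).image_convexHull]
      exact ⟨(P₁₁, P₂₂), hpair, hPbd.symm⟩
    have hTsub : blockDiagL n₁ n₂ '' (S₁ ×ˢ S₂) ⊆ commPolytope (sumAdjMatrix n₁ n₂ G₁ G₂) := by
      rintro _ ⟨⟨Q, R⟩, ⟨⟨⟨hQc, hQcol, hQrow, hQpos⟩, hQint⟩, ⟨hRc, hRcol, hRrow, hRpos⟩,
        hRint⟩, rfl⟩
      rw [blockDiagL_apply]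
      refine ⟨?_, ?_, ?_, ?_⟩
      · show _ * fromBlocks (G₁.adjMatrix ℝ) 0 0 (G₂.adjMatrix ℝ) =
          fromBlocks (G₁.adjMatrix ℝ) 0 0 (G₂.adjMatrix ℝ) * _
        rw [fromBlocks_multiply, fromBlocks_multiply]
        simp only [Matrix.mul_zero, Matrix.zero_mul, add_zero, zero_add, hQc, hRc]
      · intro j''
        rcases j'' with j'' | j''
        · rw [Fintype.sum_sum_type]
          simp only [fromBlocks_apply₁₁, fromBlocks_apply₂₁, Matrix.zero_apply,
            Finset.sum_const_zero, add_zero]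
          exact hQcol j''
        · rw [Fintype.sum_sum_type]
          simp only [fromBlocks_apply₁₂, fromBlocks_apply₂₂, Matrix.zero_apply,
            Finset.sum_const_zero, zero_add]
          exact hRcol j''
      · intro i''
        rcases i'' with i'' | i''
        · rw [Fintype.sum_sum_type]
          simp only [fromBlocks_apply₁₁, fromBlocks_apply₁₂, Matrix.zero_apply,
            Finset.sum_const_zero, add_zero]
          exact hQrow i''
        · rw [Fintype.sum_sum_type]
          simp only [fromBlocks_apply₂₁, fromBlocks_apply₂₂, Matrix.zero_apply,
            Finset.sum_const_zero, zero_add]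
          exact hRrow i''
      · intro i'' j''
        rcases i'' with i'' | i'' <;> rcases j'' with j'' | j'' <;>
          simp only [fromBlocks_apply₁₁, fromBlocks_apply₁₂, fromBlocks_apply₂₁,
            fromBlocks_apply₂₂, Matrix.zero_apply, le_refl]
        · exact hQpos i'' j''
        · exact hRpos i'' j''
    have hconv : Convex ℝ (commPolytope (sumAdjMatrix n₁ n₂ G₁ G₂)) := by
      rintro x ⟨hx1, hx2, hx3, hx4⟩ y ⟨hy1, hy2, hy3, hy4⟩ a b ha hb hab
      refine ⟨?_, ?_, ?_, ?_⟩
      · rw [Matrix.add_mul, Matrix.mul_add, Matrix.smul_mul, Matrix.mul_smul,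
          Matrix.smul_mul, Matrix.mul_smul, hx1, hy1]
      · intro j''
        simp only [Matrix.add_apply, Matrix.smul_apply, smul_eq_mul]
        rw [Finset.sum_add_distrib, ← Finset.mul_sum, ← Finset.mul_sum, hx2 j'', hy2 j'']
        simpa using hab
      · intro i''
        simp only [Matrix.add_apply, Matrix.smul_apply, smul_eq_mul]
        rw [Finset.sum_add_distrib, ← Finset.mul_sum, ← Finset.mul_sum, hx3 i'', hy3 i'']
        simpa using hab
      · intro i'' j''
        simp only [Matrix.add_apply, Matrix.smul_apply, smul_eq_mul]
        exact add_nonneg (mul_nonneg ha (hx4 i'' j'')) (mul_nonneg hb (hy4 i'' j''))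
    have hsub : convexHull ℝ (blockDiagL n₁ n₂ '' (S₁ ×ˢ S₂)) ⊆
        commPolytope (sumAdjMatrix n₁ n₂ G₁ G₂) :=
      convexHull_min hTsub hconv
    have hPT : P ∈ blockDiagL n₁ n₂ '' (S₁ ×ˢ S₂) :=
      extremePoints_convexHull_subset
        ⟨himg, fun x₁ h₁ x₂ h₂ hsg => hext (hsub h₁) (hsub h₂) hsg⟩
    obtain ⟨⟨Q, R⟩, ⟨⟨-, hQint⟩, -, hRint⟩, hLP⟩ := hPT
    refine hPnotint fun i'' j'' => ?_
    rw [← hLP, blockDiagL_apply]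
    rcases i'' with i'' | i'' <;> rcases j'' with j'' | j''
    · simpa only [fromBlocks_apply₁₁] using hQint i'' j''
    · simp
    · simp
    · simpa only [fromBlocks_apply₂₂] using hRint i'' j''
  · -- case 0 < c : P is a nontrivial convex combination, contradicting extremality
    have hn12 : (n₁:ℝ) ≤ n₂ := by exact_mod_cast hn
    have hn1 : (0:ℝ) < n₁ := by exact_mod_cast n₁pos
    have hn2 : (0:ℝ) < n₂ := by exact_mod_cast n₂pos
    have hdlec : d ≤ c := by nlinarith
    have hdlt1 : d < 1 := lt_of_le_of_lt hdlec hclt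
    have ha1 : (0:ℝ) ≤ 1 + c * (1 - d) / 2 := by nlinarith
    have hb1 : (0:ℝ) ≤ 1 - (1 - c) * (1 - d) / 2 := by nlinarith
    have hf1 : (0:ℝ) ≤ 1 + d * (1 - c) / 2 := by nlinarith
    have ha2 : (0:ℝ) ≤ 1 - c * (1 - d) / 2 := by nlinarith
    have hb2 : (0:ℝ) ≤ 1 + (1 - c) * (1 - d) / 2 := by nlinarith
    have hf2 : (0:ℝ) ≤ 1 - d * (1 - c) / 2 := by nlinarith
    have hQp := hQ (1 + c * (1 - d) / 2) (1 - (1 - c) * (1 - d) / 2) (1 + d * (1 - c) / 2)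
      ha1 hb1 hf1 (by ring) (by ring)
    have hQm := hQ (1 - c * (1 - d) / 2) (1 + (1 - c) * (1 - d) / 2) (1 - d * (1 - c) / 2)
      ha2 hb2 hf2 (by ring) (by ring)
    have hseg : P ∈ openSegment ℝ
        (fromBlocks ((1 + c * (1 - d) / 2) • P₁₁) ((1 - (1 - c) * (1 - d) / 2) • B)
          ((1 - (1 - c) * (1 - d) / 2) • C) ((1 + d * (1 - c) / 2) • P₂₂))
        (fromBlocks ((1 - c * (1 - d) / 2) • P₁₁) ((1 + (1 - c) * (1 - d) / 2) • B)
          ((1 + (1 - c) * (1 - d) / 2) • C) ((1 - d * (1 - c) / 2) • P₂₂)) := by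
      refine ⟨1/2, 1/2, by norm_num, by norm_num, by norm_num, ?_⟩
      ext i'' j''
      rcases i'' with i'' | i'' <;> rcases j'' with j'' | j'' <;>
        simp only [Matrix.add_apply, Matrix.smul_apply, fromBlocks_apply₁₁,
          fromBlocks_apply₁₂, fromBlocks_apply₂₁, fromBlocks_apply₂₂, smul_eq_mul] <;>
        rw [hPb] <;>
        simp only [fromBlocks_apply₁₁, fromBlocks_apply₁₂, fromBlocks_apply₂₁,
          fromBlocks_apply₂₂] <;> ring
    have hQpeq := hext hQp hQm hseg
    obtain ⟨j', hj'⟩ : ∃ j', B i j' ≠ 0 := by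
      by_contra h
      push_neg at h
      have : c = 0 := by rw [← hc i]; exact Finset.sum_eq_zero fun j'' _ => h j''
      exact absurd this (ne_of_gt hcpos)
    have hentry := congrFun (congrFun hQpeq (Sum.inl i)) (Sum.inr j')
    simp only [fromBlocks_apply₁₂, Matrix.smul_apply, smul_eq_mul] at hentry
    have hPeq : P (Sum.inl i) (Sum.inr j') = B i j' := rfl
    rw [hPeq] at hentry
    have hxpos : 0 < B i j' := lt_of_le_of_ne (hBpos i j') (Ne.symm hj')
    have hprod : 0 < (1 - c) * (1 - d) := mul_pos (by linarith) (by linarith)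
    have hzero : (1 - c) * (1 - d) * B i j' = 0 := by
      linear_combination (-2 : ℝ) * hentry
    have hpos' : 0 < (1 - c) * (1 - d) * B i j' := mul_pos hprod hxpos
    linarith
end

section
/- The symmetric group S_n is permutation summable: if P₁,…,P_m are n×n permutation matrices such that the matrix ∑_{i=1}^m P_i − I has all entries nonnegative, then there exist permutation matrices Q₁,…,Q_{m−1} such that ∑_{i=1}^m P_i − I = ∑_{j=1}^{m−1} Q_j (when m = 1 this means P₁ = I). -/
open Finset

/-- Natural-number permutation "matrix" as a function. -/
def natP (n : ℕ) (σ : Equiv.Perm (Fin n)) : Fin n → Fin n → ℕ :=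
  fun i j => if i = σ j then 1 else 0

lemma natP_row (n : ℕ) (σ : Equiv.Perm (Fin n)) (i : Fin n) :
    ∑ j, natP n σ i j = 1 := by
  have : ∀ j, natP n σ i j = if j = σ.symm i then 1 else 0 := by
    intro j
    simp only [natP]
    congr 1
    simp [eq_comm, Equiv.symm_apply_eq, Equiv.eq_symm_apply]
  rw [Finset.sum_congr rfl (fun j _ => this j)]
  simp

lemma natP_col (n : ℕ) (σ : Equiv.Perm (Fin n)) (j : Fin n) :
    ∑ i, natP n σ i j = 1 := by
  simp [natP]

/-- Integer Birkhoff: a nonneg integer matrix with all line sums `k` is a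
sum of `k` permutation matrices. -/
lemma key_s17 (n : ℕ) : ∀ (k : ℕ) (A : Fin n → Fin n → ℕ),
    (∀ i, ∑ j, A i j = k) → (∀ j, ∑ i, A i j = k) →
    ∃ τ : Fin k → Equiv.Perm (Fin n), ∀ i j, A i j = ∑ s, natP n (τ s) i j := by
  intro k
  induction k with
  | zero =>
    intro A hrow _
    refine ⟨fun s => s.elim0, fun i j => ?_⟩
    have h0 : A i j = 0 := by
      have := hrow i
      have hj : j ∈ (univ : Finset (Fin n)) := mem_univ j
      exact (Finset.sum_eq_zero_iff.mp this) j hj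
    simp [h0]
  | succ k ih =>
    intro A hrow hcol
    classical
    -- Hall's condition for the bipartite graph of the support
    set r : Fin n → Finset (Fin n) := fun j => univ.filter (fun i => 0 < A i j) with hr
    have hall : ∀ s : Finset (Fin n), s.card ≤ (s.biUnion r).card := by
      intro s
      have h1 : ∑ j ∈ s, ∑ i, A i j = (k+1) * s.card := by
        rw [Finset.sum_congr rfl (fun j _ => hcol j)]
        simp [mul_comm]
      have h2 : ∑ j ∈ s, ∑ i, A i j = ∑ i, ∑ j ∈ s, A i j := Finset.sum_comm
      have h3 : ∑ i, ∑ j ∈ s, A i j = ∑ i ∈ s.biUnion r, ∑ j ∈ s, A i j := by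
        refine (Finset.sum_subset (subset_univ _) ?_).symm
        intro i _ hi
        refine Finset.sum_eq_zero (fun j hj => ?_)
        by_contra h
        exact hi (Finset.mem_biUnion.mpr ⟨j, hj, by simp [hr, Nat.pos_of_ne_zero h]⟩)
      have h4 : ∑ i ∈ s.biUnion r, ∑ j ∈ s, A i j ≤ (k+1) * (s.biUnion r).card := by
        calc ∑ i ∈ s.biUnion r, ∑ j ∈ s, A i j
            ≤ ∑ i ∈ s.biUnion r, ∑ j, A i j :=
              Finset.sum_le_sum (fun i _ => Finset.sum_le_sum_of_subset (subset_univ s))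
          _ = (k+1) * (s.biUnion r).card := by
              rw [Finset.sum_congr rfl (fun i _ => hrow i)]; simp [mul_comm]
      have : (k+1) * s.card ≤ (k+1) * (s.biUnion r).card := by
        omega
      exact Nat.le_of_mul_le_mul_left this (Nat.succ_pos k)
    obtain ⟨f, hfinj, hfr⟩ := (Finset.all_card_le_biUnion_card_iff_exists_injective r).mp hall
    have hfb : Function.Bijective f := (Finite.injective_iff_bijective).mp hfinj
    set e : Equiv.Perm (Fin n) := Equiv.ofBijective f hfb with he
    have hee : ∀ j, e j = f j := fun j => rfl
    have hle : ∀ i j, natP n e i j ≤ A i j := by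
      intro i j
      simp only [natP]
      split
      · next h =>
        have := hfr j
        rw [hr] at this
        simp only [Finset.mem_filter] at this
        have : 0 < A (f j) j := this.2
        rw [h, hee]
        omega
      · exact Nat.zero_le _
    set A' : Fin n → Fin n → ℕ := fun i j => A i j - natP n e i j with hA'
    have hrow' : ∀ i, ∑ j, A' i j = k := by
      intro i
      rw [hA']
      rw [Finset.sum_tsub_distrib _ (fun j _ => hle i j), hrow i, natP_row]
      omega
    have hcol' : ∀ j, ∑ i, A' i j = k := by
      intro j
      rw [hA']
      rw [Finset.sum_tsub_distrib _ (fun i _ => hle i j), hcol j, natP_col]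
      omega
    obtain ⟨τ', hτ'⟩ := ih A' hrow' hcol'
    refine ⟨Fin.cons e τ', fun i j => ?_⟩
    rw [Fin.sum_univ_succ]
    simp only [Fin.cons_zero, Fin.cons_succ]
    rw [← hτ' i j]
    show A i j = natP n e i j + (A i j - natP n e i j)
    have := hle i j
    omega

/-- The permutation matrix of `σ`, with `(i,j)` entry `1` exactly when `i = σ j`. -/
def permMat (n : ℕ) (σ : Equiv.Perm (Fin n)) : Matrix (Fin n) (Fin n) ℝ :=
  Matrix.of fun i j => if i = σ j then 1 else 0

theorem stmt_17 (n m : ℕ) (hm : 1 ≤ m) (σ : Fin m → Equiv.Perm (Fin n))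
    (hnn : ∀ i j, 0 ≤ ((∑ t, permMat n (σ t)) - 1) i j) :
    ∃ τ : Fin (m - 1) → Equiv.Perm (Fin n),
      (∑ t, permMat n (σ t)) - 1 = ∑ s, permMat n (τ s) := by
  classical
  have hS : ∀ i j, ((∑ t, permMat n (σ t)) - 1) i j
      = ((∑ t, natP n (σ t) i j : ℕ) : ℝ) - ((natP n (Equiv.refl (Fin n)) i j : ℕ) : ℝ) := by
    intro i j
    simp [Matrix.sub_apply, Matrix.sum_apply, Matrix.one_apply, permMat, natP,
      apply_ite (Nat.cast : ℕ → ℝ)]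
    by_cases h : i = j <;> simp_all
  have hle : ∀ i j, natP n (Equiv.refl (Fin n)) i j ≤ ∑ t, natP n (σ t) i j := by
    intro i j
    have h := hnn i j
    rw [hS i j] at h
    exact_mod_cast sub_nonneg.mp h
  set A : Fin n → Fin n → ℕ :=
    fun i j => (∑ t, natP n (σ t) i j) - natP n (Equiv.refl (Fin n)) i j with hA
  have hrow : ∀ i, ∑ j, A i j = m - 1 := by
    intro i
    rw [hA]
    rw [Finset.sum_tsub_distrib _ (fun j _ => hle i j), natP_row, Finset.sum_comm]
    rw [Finset.sum_congr rfl (fun t _ => natP_row n (σ t) i)]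
    simp
  have hcol : ∀ j, ∑ i, A i j = m - 1 := by
    intro j
    rw [hA]
    rw [Finset.sum_tsub_distrib _ (fun i _ => hle i j), natP_col, Finset.sum_comm]
    rw [Finset.sum_congr rfl (fun t _ => natP_col n (σ t) j)]
    simp
  obtain ⟨τ, hτ⟩ := key_s17 n (m - 1) A hrow hcol
  refine ⟨τ, ?_⟩
  ext i j
  rw [hS i j, ← Nat.cast_sub (hle i j)]
  have : (∑ t, natP n (σ t) i j) - natP n (Equiv.refl (Fin n)) i j
      = ∑ s, natP n (τ s) i j := hτ i j
  rw [this]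
  simp [Matrix.sum_apply, permMat, natP, apply_ite (Nat.cast : ℕ → ℝ)]
end

section
/- Let A be a subgroup of the symmetric group S_n that is strongly fixed-point free: every non-identity element σ ∈ A satisfies σ(i) ≠ i for all i ∈ {1,…,n}. Then A is permutation summable: if σ₁,…,σ_m ∈ A (not necessarily distinct) are such that ∑_{i=1}^m P_{σ_i} − I has all entries nonnegative (where P_σ denotes the permutation matrix of σ), then there exist τ₁,…,τ_{m−1} ∈ A with ∑_{i=1}^m P_{σ_i} − I = ∑_{j=1}^{m−1} P_{τ_j}. -/
lemma permMat_one (n : ℕ) : permMat n 1 = 1 := by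
  ext i j
  simp [permMat, Matrix.one_apply]
  congr

theorem stmt_18 (n : ℕ) (A : Subgroup (Equiv.Perm (Fin n)))
    (hfpf : ∀ σ ∈ A, σ ≠ 1 → ∀ i, σ i ≠ i)
    (m : ℕ) (hm : 1 ≤ m) (σ : Fin m → Equiv.Perm (Fin n)) (hσ : ∀ t, σ t ∈ A)
    (hnn : ∀ i j, 0 ≤ ((∑ t, permMat n (σ t)) - 1) i j) :
    ∃ τ : Fin (m - 1) → Equiv.Perm (Fin n), (∀ s, τ s ∈ A) ∧
      (∑ t, permMat n (σ t)) - 1 = ∑ s, permMat n (τ s) := by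
  rcases n with _ | n
  · refine ⟨fun _ => 1, fun _ => Subgroup.one_mem A, ?_⟩
    ext i j
    exact i.elim0
  rcases m with _ | m
  · omega
  -- find t₀ with σ t₀ = 1
  have hj : ∃ t, σ t 0 = 0 := by
    by_contra h
    push_neg at h
    have := hnn 0 0
    have hsum : (∑ t, permMat (n + 1) (σ t)) 0 0 = 0 := by
      rw [Matrix.sum_apply]
      refine Finset.sum_eq_zero fun t _ => ?_
      simp [permMat, (h t).symm, Ne.symm (h t)]
    simp [Matrix.sub_apply, hsum, Matrix.one_apply] at this
    linarith
  obtain ⟨t₀, ht₀⟩ := hj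
  have hone : σ t₀ = 1 := by
    by_contra h
    exact hfpf (σ t₀) (hσ t₀) h 0 ht₀
  refine ⟨fun s => σ (t₀.succAbove s), fun s => hσ _, ?_⟩
  have := Fin.sum_univ_succAbove (fun t => permMat (n + 1) (σ t)) t₀
  rw [this, hone, permMat_one]
  abel
end
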